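/- arXiv:1105.5598 — 7 statements merged into one kernel-verified Lean document; each statement's English description precedes it below -/
import Mathlib

section
/- Let f be a complex polynomial of degree d ≥ 2. Then: (a) for every z in the basin of infinity X_o(f), the limit g(z) = lim_{n→∞} (f^n)'(z)/(2·d^n·f^n(z)) exists; (b) the resulting function g is holomorphic on X_o(f); and (c) for z ∈ X_o(f), g(z) = 0 if and only if z ∈ Precrit(f). -/
open Filter Topology MeasureTheory Set

/-- The Schwarzian derivative of a holomorphic function. -/
noncomputable def schwarzian (F : ℂ → ℂ) (z : ℂ) : ℂ :=
  iteratedDeriv 3 F z / deriv F z - (3/2) * (iteratedDeriv 2 F z / deriv F z)^2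

/-- The union of all backward orbits of the critical points:
`Precrit(f) = {c : (f^n)'(c) = 0 for some n ≥ 1}`. -/
def precrit (f : ℂ → ℂ) : Set ℂ :=
  {c : ℂ | ∃ n : ℕ, 1 ≤ n ∧ deriv (f^[n]) c = 0}

/-- The basin of infinity of `f`. -/
def basinInf (f : ℂ → ℂ) : Set ℂ :=
  {z : ℂ | Tendsto (fun n : ℕ => ‖f^[n] z‖) atTop atTop}

/-- `f` is affinely conjugate to `z ↦ z ^ d`. -/
def conjToPow (f : ℂ → ℂ) (d : ℕ) : Prop :=
  ∃ a b : ℂ, a ≠ 0 ∧ ∀ z : ℂ, f (a * z + b) = a * z ^ d + b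

section Aux
open Polynomial Finset

lemma coeffBound (q : Polynomial ℂ) (m : ℕ) (hq : q.natDegree ≤ m) :
    ∃ A : ℝ, 0 ≤ A ∧ ∀ w : ℂ, 1 ≤ ‖w‖ → ‖q.eval w‖ ≤ A * ‖w‖ ^ m := by
  refine ⟨∑ i ∈ range (m+1), ‖q.coeff i‖, Finset.sum_nonneg (fun i _ => norm_nonneg _), ?_⟩
  intro w hw
  rw [Polynomial.eval_eq_sum_range' (Nat.lt_succ_of_le hq), Finset.sum_mul]
  refine (norm_sum_le _ _).trans (Finset.sum_le_sum ?_)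
  intro i hi
  rw [norm_mul, norm_pow]
  exact mul_le_mul_of_nonneg_left
    (pow_le_pow_right₀ hw (Nat.lt_succ_iff.mp (Finset.mem_range.mp hi)))
    (norm_nonneg _)

lemma frame {d : ℕ} (hd : 2 ≤ d) {p : Polynomial ℂ} (hdeg : p.natDegree = d) :
    ∃ R : ℝ, 1 ≤ R ∧ ∀ w : ℂ, R ≤ ‖w‖ →
      p.eval w ≠ 0 ∧ 2 * ‖w‖ ≤ ‖p.eval w‖ ∧
      ‖(derivative p).eval w * w / ((d : ℂ) * p.eval w) - 1‖ ≤ R / (4 * ‖w‖) := by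
  have hd0 : 0 < d := lt_of_lt_of_le two_pos hd
  have hp0 : p ≠ 0 := fun h => by rw [h, Polynomial.natDegree_zero] at hdeg; omega
  set c : ℂ := p.leadingCoeff with hc
  have hc0 : c ≠ 0 := Polynomial.leadingCoeff_ne_zero.mpr hp0
  have hcpos : (0:ℝ) < ‖c‖ := norm_pos_iff.mpr hc0
  obtain ⟨A₁, hA₁0, hA₁⟩ := coeffBound p.eraseLead (d-1)
    (le_trans (Polynomial.eraseLead_natDegree_le p) (by rw [hdeg]))
  set s : Polynomial ℂ := X * derivative p - C (d:ℂ) * p with hs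
  have hsdeg : s.natDegree ≤ d - 1 := by
    rw [Polynomial.natDegree_le_iff_coeff_eq_zero]
    intro N hN
    have hN' : d ≤ N := by omega
    obtain ⟨k, rfl⟩ : ∃ k, N = k + 1 := ⟨N - 1, by omega⟩
    rw [hs]
    simp only [Polynomial.coeff_sub, Polynomial.coeff_X_mul, Polynomial.coeff_C_mul,
      Polynomial.coeff_derivative]
    rcases eq_or_lt_of_le hN' with h | h
    · have hcast : ((d:ℕ):ℂ) = (k:ℂ) + 1 := by rw [h]; push_cast; ring
      rw [hcast]; ring
    · rw [Polynomial.coeff_eq_zero_of_natDegree_lt (by rw [hdeg]; omega)]; ring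
  obtain ⟨A₂, hA₂0, hA₂⟩ := coeffBound s (d-1) hsdeg
  obtain ⟨R, hRdef⟩ : ∃ R:ℝ, R = 1 + 4/‖c‖ + 2*A₁/‖c‖ + 4*A₂/‖c‖ := ⟨_, rfl⟩
  have e1 : (0:ℝ) ≤ 4/‖c‖ := by positivity
  have e2 : (0:ℝ) ≤ 2*A₁/‖c‖ := by positivity
  have e3 : (0:ℝ) ≤ 4*A₂/‖c‖ := by positivity
  have hR1 : (1:ℝ) ≤ R := by rw [hRdef]; linarith
  have hR0 : (0:ℝ) < R := lt_of_lt_of_le one_pos hR1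
  refine ⟨R, hR1, ?_⟩
  intro w hw
  have hw1 : (1:ℝ) ≤ ‖w‖ := le_trans hR1 hw
  have hwpos : (0:ℝ) < ‖w‖ := lt_of_lt_of_le one_pos hw1
  have hsplit : p.eval w = p.eraseLead.eval w + c * w ^ d := by
    conv_lhs => rw [← Polynomial.eraseLead_add_C_mul_X_pow p]
    simp [hdeg]
    exact Or.inl rfl
  have hpow : ‖w‖^(d-1) * ‖w‖ = ‖w‖ ^ d := by
    rw [← pow_succ]; congr 1; omega
  have hlow : ‖c‖/2 * ‖w‖^d ≤ ‖p.eval w‖ := by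
    have h2 : ‖c‖ * ‖w‖^d - ‖p.eraseLead.eval w‖ ≤ ‖p.eval w‖ := by
      have hx : c * w^d = (p.eraseLead.eval w + c * w^d) + (-(p.eraseLead.eval w)) := by ring
      have h5 := norm_add_le (p.eraseLead.eval w + c * w^d) (-(p.eraseLead.eval w))
      rw [← hx, norm_neg, norm_mul, norm_pow] at h5
      rw [hsplit]; linarith
    have h3 := hA₁ w hw1
    have hwc : 2*A₁/‖c‖ ≤ ‖w‖ := le_trans (by rw [hRdef]; linarith) hw
    rw [div_le_iff₀ hcpos] at hwc
    have h5 : A₁ * ‖w‖^(d-1) ≤ ‖c‖/2 * ‖w‖^d := by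
      calc A₁ * ‖w‖^(d-1) ≤ (‖c‖/2 * ‖w‖) * ‖w‖^(d-1) := by
            apply mul_le_mul_of_nonneg_right (by nlinarith) (by positivity)
        _ = ‖c‖/2 * (‖w‖^(d-1) * ‖w‖) := by ring
        _ = ‖c‖/2 * ‖w‖^d := by rw [hpow]
    linarith
  have hppos : (0:ℝ) < ‖p.eval w‖ := lt_of_lt_of_le (by positivity) hlow
  have hpne : p.eval w ≠ 0 := norm_pos_iff.mp hppos
  refine ⟨hpne, ?_, ?_⟩
  · have hwc : 4/‖c‖ ≤ ‖w‖ := le_trans (by rw [hRdef]; linarith) hw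
    rw [div_le_iff₀ hcpos] at hwc
    have hww : ‖w‖ ≤ ‖w‖^(d-1) := by
      calc ‖w‖ = ‖w‖^1 := (pow_one _).symm
        _ ≤ ‖w‖^(d-1) := pow_le_pow_right₀ hw1 (by omega)
    have : 2 * ‖w‖ ≤ ‖c‖/2 * ‖w‖^d := by
      rw [← hpow]
      calc 2 * ‖w‖ ≤ (‖c‖/2 * ‖w‖) * ‖w‖ := by nlinarith
        _ ≤ (‖c‖/2 * ‖w‖^(d-1)) * ‖w‖ := by
            apply mul_le_mul_of_nonneg_right _ hwpos.le
            apply mul_le_mul_of_nonneg_left hww (by positivity)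
        _ = ‖c‖/2 * (‖w‖^(d-1) * ‖w‖) := by ring
    linarith
  · have hdc : ((d:ℂ)) ≠ 0 := Nat.cast_ne_zero.mpr (by omega)
    have hkey : (derivative p).eval w * w / ((d:ℂ) * p.eval w) - 1
        = s.eval w / ((d:ℂ) * p.eval w) := by
      rw [hs]; field_simp; simp only [eval_sub, eval_mul, eval_X, eval_C]; ring
    rw [hkey]
    have hnum := hA₂ w hw1
    have hden : ‖(d:ℂ) * p.eval w‖ = (d:ℝ) * ‖p.eval w‖ := by
      rw [norm_mul, Complex.norm_natCast]
    rw [norm_div, hden]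
    have hdpos : (0:ℝ) < (d:ℝ) := Nat.cast_pos.mpr hd0
    rw [div_le_div_iff₀ (by positivity) (by positivity)]
    have h1 : ‖s.eval w‖ * (4*‖w‖) ≤ A₂ * ‖w‖^(d-1) * (4*‖w‖) := by nlinarith
    have h2 : A₂ * ‖w‖^(d-1) * (4*‖w‖) = 4*A₂ * ‖w‖^d := by
      rw [← hpow]; ring
    have hRc : 4*A₂ ≤ R * ‖c‖ := by
      rw [← div_le_iff₀ hcpos]; rw [hRdef]; linarith
    have hwd : (0:ℝ) < ‖w‖^d := by positivity
    have hd2 : (2:ℝ) ≤ (d:ℝ) := by exact_mod_cast hd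
    have ee1 : 4*A₂*‖w‖^d ≤ (R*‖c‖)*‖w‖^d := mul_le_mul_of_nonneg_right hRc hwd.le
    have ee2 : (R*‖c‖)*‖w‖^d ≤ (R*‖c‖)*((d:ℝ)/2)*‖w‖^d := by
      nlinarith [mul_nonneg (mul_nonneg hR0.le hcpos.le) hwd.le]
    have ee3 : R * ((d:ℝ) * (‖c‖/2 * ‖w‖^d)) = (R*‖c‖)*((d:ℝ)/2)*‖w‖^d := by ring
    have ee4 : R * ((d:ℝ) * (‖c‖/2 * ‖w‖^d)) ≤ R * ((d:ℝ) * ‖p.eval w‖) := by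
      apply mul_le_mul_of_nonneg_left _ hR0.le
      exact mul_le_mul_of_nonneg_left hlow hdpos.le
    linarith


section iter

lemma f_diff {p : Polynomial ℂ} {f : ℂ → ℂ} (hf : ∀ z, f z = p.eval z) :
    Differentiable ℂ f := by
  have h : f = fun z => p.eval z := funext hf
  rw [h]; exact p.differentiable

lemma f_deriv {p : Polynomial ℂ} {f : ℂ → ℂ} (hf : ∀ z, f z = p.eval z) (w : ℂ) :
    deriv f w = (derivative p).eval w := by
  have h : f = fun z => p.eval z := funext hf
  rw [h, Polynomial.deriv]

lemma iter_diff {p : Polynomial ℂ} {f : ℂ → ℂ} (hf : ∀ z, f z = p.eval z) (n : ℕ) :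
    Differentiable ℂ (f^[n]) := by
  induction n with
  | zero => simpa using differentiable_id
  | succ n ih =>
    rw [Function.iterate_succ']
    exact (f_diff hf).comp ih

lemma iter_deriv_prod {p : Polynomial ℂ} {f : ℂ → ℂ} (hf : ∀ z, f z = p.eval z) (n : ℕ) (z : ℂ) :
    deriv (f^[n]) z = ∏ k ∈ range n, (derivative p).eval (f^[k] z) := by
  induction n with
  | zero => simp
  | succ n ih =>
    rw [Function.iterate_succ', Finset.prod_range_succ, ← ih,
      deriv_comp z ((f_diff hf).differentiableAt) ((iter_diff hf n).differentiableAt),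
      f_deriv hf]
    ring

lemma escape {f : ℂ → ℂ} {R : ℝ} (hR : 1 ≤ R) (hfR : ∀ w : ℂ, R ≤ ‖w‖ → 2*‖w‖ ≤ ‖f w‖)
    {z : ℂ} {N : ℕ} (hz : R ≤ ‖f^[N] z‖) :
    ∀ k, 2^k * R ≤ ‖f^[N+k] z‖ := by
  intro k
  induction k with
  | zero => simpa using hz
  | succ k ih =>
    have hRk : R ≤ ‖f^[N+k] z‖ :=
      le_trans (le_mul_of_one_le_left (by linarith) (one_le_pow₀ (by norm_num))) ih
    have h1 := hfR _ hRk
    rw [← Function.iterate_succ_apply' f (N+k) z] at h1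
    have h2 : (2:ℝ)^(k+1) * R = 2 * (2^k * R) := by ring
    rw [show N + (k+1) = (N+k)+1 by ring, h2]
    nlinarith

end iter


lemma seqLimit (a : ℕ → ℂ) (m : ℕ → ℂ)
    (hrec : ∀ k, a (k+1) = a k * m k)
    (hm : ∀ k, ‖m k - 1‖ ≤ (1/4) * (1/2:ℝ)^k) :
    ∃ L : ℂ, Tendsto a atTop (𝓝 L) ∧ ‖a 0‖/2 ≤ ‖L‖ ∧
      ∀ k, ‖L - a k‖ ≤ ‖a 0‖ * (1/2:ℝ)^k := by
  have ht0 : ∀ k : ℕ, (0:ℝ) < (1/2:ℝ)^k := fun k => by positivity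
  have ht1 : ∀ k : ℕ, (1/2:ℝ)^k ≤ 1 := fun k => pow_le_one₀ (by norm_num) (by norm_num)
  have ha0 : (0:ℝ) ≤ ‖a 0‖ := norm_nonneg _
  -- upper and lower bounds
  have hb : ∀ k, ‖a k‖ ≤ ‖a 0‖ * (2 - (1/2:ℝ)^k) ∧ ‖a 0‖ * (1/2 + (1/2:ℝ)^k/2) ≤ ‖a k‖ := by
    intro k
    induction k with
    | zero => norm_num
    | succ k ih =>
      obtain ⟨ihu, ihl⟩ := ih
      have hmk := hm k
      have t0 := ht0 k; have t1 := ht1 k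
      have hup : ‖m k‖ ≤ 1 + (1/4) * (1/2:ℝ)^k := by
        have h2 := norm_sub_norm_le (m k) (1:ℂ)
        rw [norm_one] at h2; linarith
      have hlo : 1 - (1/4) * (1/2:ℝ)^k ≤ ‖m k‖ := by
        have h2 := norm_sub_norm_le (1:ℂ) (m k)
        rw [norm_one, norm_sub_rev] at h2; linarith
      have hmnn : (0:ℝ) ≤ ‖m k‖ := norm_nonneg _
      have hann : (0:ℝ) ≤ ‖a k‖ := norm_nonneg _
      have hb0 : (0:ℝ) ≤ ‖a 0‖ * (2 - (1/2:ℝ)^k) := by nlinarith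
      have hnm : ‖a (k+1)‖ = ‖a k‖ * ‖m k‖ := by rw [hrec k, norm_mul]
      have hU := mul_le_mul ihu hup hmnn hb0
      have hL2 := mul_le_mul ihl hlo (by nlinarith) hann
      have hint1 : (0:ℝ) ≤ ‖a 0‖ * ((1/2:ℝ)^k * (1/2:ℝ)^k) :=
        mul_nonneg ha0 (mul_nonneg t0.le t0.le)
      have hint2 : (0:ℝ) ≤ ‖a 0‖ * ((1/2:ℝ)^k * (1 - (1/2:ℝ)^k)) :=
        mul_nonneg ha0 (mul_nonneg t0.le (by linarith))
      constructor
      · rw [hnm, pow_succ]; nlinarith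
      · rw [hnm, pow_succ]; nlinarith
  -- successive differences
  have hdiff : ∀ k, ‖a (k+1) - a k‖ ≤ ‖a 0‖ * (1/2:ℝ)^(k+1) := by
    intro k
    have h1 : a (k+1) - a k = a k * (m k - 1) := by rw [hrec k]; ring
    rw [h1, norm_mul]
    have t0 := ht0 k; have t1 := ht1 k
    have hu := (hb k).1
    have hmk := hm k
    have hb0 : (0:ℝ) ≤ ‖a 0‖ * (2 - (1/2:ℝ)^k) := by nlinarith
    have hU := mul_le_mul hu hmk (norm_nonneg _) hb0
    have hint1 : (0:ℝ) ≤ ‖a 0‖ * ((1/2:ℝ)^k * (1/2:ℝ)^k) :=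
      mul_nonneg (norm_nonneg _) (mul_nonneg t0.le t0.le)
    rw [pow_succ]; nlinarith
  -- telescoping bound
  have hsum : ∀ k j, ‖a (k+j) - a k‖ ≤ ‖a 0‖ * ((1/2:ℝ)^k - (1/2:ℝ)^(k+j)) := by
    intro k j
    induction j with
    | zero => simp
    | succ j ih =>
      have h1 : a (k+(j+1)) - a k = (a ((k+j)+1) - a (k+j)) + (a (k+j) - a k) := by
        rw [show k+(j+1) = (k+j)+1 by ring]; ring
      rw [h1]
      calc ‖(a ((k+j)+1) - a (k+j)) + (a (k+j) - a k)‖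
          ≤ ‖a ((k+j)+1) - a (k+j)‖ + ‖a (k+j) - a k‖ := norm_add_le _ _
        _ ≤ ‖a 0‖ * (1/2:ℝ)^((k+j)+1) + ‖a 0‖ * ((1/2:ℝ)^k - (1/2:ℝ)^(k+j)) := by
            linarith [hdiff (k+j)]
        _ ≤ ‖a 0‖ * ((1/2:ℝ)^k - (1/2:ℝ)^(k+(j+1))) := by
            rw [show k+(j+1) = (k+j)+1 by ring, pow_succ]
            nlinarith [ht0 (k+j)]
  -- Cauchy
  have hcauchy : CauchySeq a := by
    apply cauchySeq_of_le_geometric (1/2) ‖a 0‖ (by norm_num)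
    intro k
    rw [dist_eq_norm, norm_sub_rev]
    calc ‖a (k+1) - a k‖ ≤ ‖a 0‖ * (1/2:ℝ)^(k+1) := hdiff k
      _ ≤ ‖a 0‖ * (1/2:ℝ)^k := by
          apply mul_le_mul_of_nonneg_left _ ha0
          rw [pow_succ]; nlinarith [ht0 k]
  obtain ⟨L, hL⟩ := cauchySeq_tendsto_of_complete hcauchy
  refine ⟨L, hL, ?_, ?_⟩
  · apply ge_of_tendsto hL.norm
    filter_upwards with k
    have := (hb k).2
    have t0 := ht0 k
    nlinarith
  · intro k
    have hshift : Tendsto (fun j => a (k + j)) atTop (𝓝 L) :=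
      hL.comp (tendsto_atTop_mono (fun j => Nat.le_add_left j k) tendsto_id)
    have h2 : Tendsto (fun j => ‖a (k+j) - a k‖) atTop (𝓝 ‖L - a k‖) :=
      ((hshift.sub_const (a k)).norm)
    apply le_of_tendsto h2
    filter_upwards with j
    calc ‖a (k+j) - a k‖ ≤ ‖a 0‖ * ((1/2:ℝ)^k - (1/2:ℝ)^(k+j)) := hsum k j
      _ ≤ ‖a 0‖ * (1/2:ℝ)^k := by nlinarith [ht0 (k+j)]

lemma core {d : ℕ} (hd : 2 ≤ d) {p : Polynomial ℂ} {f : ℂ → ℂ} (hf : ∀ z, f z = p.eval z)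
    {R : ℝ} (hR1 : 1 ≤ R)
    (hfr : ∀ w : ℂ, R ≤ ‖w‖ → p.eval w ≠ 0 ∧ 2*‖w‖ ≤ ‖p.eval w‖ ∧
        ‖(derivative p).eval w * w / ((d:ℂ) * p.eval w) - 1‖ ≤ R/(4*‖w‖))
    {z : ℂ} {N : ℕ} (hz : R ≤ ‖f^[N] z‖) :
    ∃ L : ℂ, Tendsto (fun n : ℕ => deriv (f^[n]) z / (2 * (d:ℂ)^n * f^[n] z)) atTop (𝓝 L) ∧
      ‖deriv (f^[N]) z / (2 * (d:ℂ)^N * f^[N] z)‖ / 2 ≤ ‖L‖ ∧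
      ∀ n, N ≤ n → ‖L - deriv (f^[n]) z / (2 * (d:ℂ)^n * f^[n] z)‖ ≤
        ‖deriv (f^[N]) z / (2 * (d:ℂ)^N * f^[N] z)‖ * (1/2:ℝ)^(n-N) := by
  have hR0 : (0:ℝ) < R := lt_of_lt_of_le one_pos hR1
  have hd0 : (d:ℂ) ≠ 0 := Nat.cast_ne_zero.mpr (by omega)
  set a : ℕ → ℂ := fun n => deriv (f^[n]) z / (2 * (d:ℂ)^n * f^[n] z) with ha
  set msq : ℕ → ℂ :=
    fun k => (derivative p).eval (f^[N+k] z) * (f^[N+k] z) / ((d:ℂ) * p.eval (f^[N+k] z))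
    with hmsq
  have hesc : ∀ k, 2^k * R ≤ ‖f^[N+k] z‖ :=
    escape hR1 (fun w hw => by rw [hf w]; exact (hfr w hw).2.1) hz
  have hRw : ∀ k, R ≤ ‖f^[N+k] z‖ := fun k =>
    le_trans (le_mul_of_one_le_left hR0.le (one_le_pow₀ (by norm_num))) (hesc k)
  have hwne : ∀ k, f^[N+k] z ≠ 0 := fun k =>
    norm_pos_iff.mp (lt_of_lt_of_le hR0 (hRw k))
  have hpne : ∀ k, p.eval (f^[N+k] z) ≠ 0 := fun k => (hfr _ (hRw k)).1
  have hrec : ∀ k, a (N+(k+1)) = a (N+k) * msq k := by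
    intro k
    have hiter : f^[N+(k+1)] z = p.eval (f^[N+k] z) := by
      rw [show N+(k+1) = (N+k)+1 by ring, Function.iterate_succ_apply', hf]
    have h1 : deriv (f^[N+(k+1)]) z
        = deriv (f^[N+k]) z * (derivative p).eval (f^[N+k] z) := by
      rw [iter_deriv_prod hf, iter_deriv_prod hf,
        show N+(k+1) = (N+k)+1 by ring, Finset.prod_range_succ]
    show deriv (f^[N+(k+1)]) z / (2 * (d:ℂ)^(N+(k+1)) * f^[N+(k+1)] z) = _
    rw [h1, hiter, hmsq]
    have h2 : ((d:ℂ))^(N+(k+1)) = (d:ℂ)^(N+k) * d := by rw [← pow_succ]; ring_nf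
    rw [h2]
    have hdp : ((d:ℂ))^(N+k) ≠ 0 := pow_ne_zero _ hd0
    have hw := hwne k
    have hp' := hpne k
    rw [div_mul_div_comm, div_eq_div_iff
      (mul_ne_zero (mul_ne_zero two_ne_zero (mul_ne_zero hdp hd0)) hp')
      (mul_ne_zero (mul_ne_zero (mul_ne_zero two_ne_zero hdp) hw) (mul_ne_zero hd0 hp'))]
    ring
  have hm : ∀ k, ‖msq k - 1‖ ≤ (1/4) * (1/2:ℝ)^k := by
    intro k
    have h := (hfr _ (hRw k)).2.2
    have hwge := hesc k
    have h2k : (0:ℝ) < 2^k := by positivity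
    have hstep : R/(4*‖f^[N+k] z‖) ≤ R/(4*(2^k*R)) := by gcongr
    have heq : R/(4*((2:ℝ)^k*R)) = (1/4) * (1/2:ℝ)^k := by
      rw [div_pow, one_pow]
      field_simp
    calc ‖msq k - 1‖ ≤ R/(4*‖f^[N+k] z‖) := h
      _ ≤ R/(4*(2^k*R)) := hstep
      _ = (1/4) * (1/2:ℝ)^k := heq
  obtain ⟨L, hL, hLlow, hLk⟩ := seqLimit (fun k => a (N+k)) msq hrec hm
  have hN0 : a (N+0) = a N := by rw [Nat.add_zero]
  refine ⟨L, ?_, by have h := hLlow; rw [hN0] at h; exact h, ?_⟩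
  · have hcomm : (fun k => a (k+N)) = fun k => a (N+k) := by
      ext k; rw [add_comm]
    rw [← tendsto_add_atTop_iff_nat N, hcomm]
    exact hL
  · intro n hn
    obtain ⟨k, rfl⟩ : ∃ k, n = N + k := ⟨n - N, by omega⟩
    have h3 := hLk k
    rw [hN0] at h3
    rw [show N + k - N = k by omega]
    exact h3

end Aux

open Polynomial Finset in
/-- For a polynomial `f` of degree `d ≥ 2`, the limit
`g(z) = lim (f^n)'(z)/(2 d^n f^n(z))` exists at every point of the basin of infinity,
the resulting function is holomorphic there, and it vanishes exactly at the
precritical points of the basin. -/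
theorem stmt3 (d : ℕ) (hd : 2 ≤ d) (p : Polynomial ℂ) (hdeg : p.natDegree = d)
    (f : ℂ → ℂ) (hf : ∀ z, f z = p.eval z) :
    ∃ g : ℂ → ℂ,
      (∀ z ∈ basinInf f,
        Tendsto (fun n : ℕ => deriv (f^[n]) z / (2 * (d : ℂ) ^ n * f^[n] z)) atTop (𝓝 (g z))) ∧
      DifferentiableOn ℂ g (basinInf f) ∧
      (∀ z ∈ basinInf f, (g z = 0 ↔ z ∈ precrit f)) := by
  obtain ⟨R, hR1, hfr⟩ := frame hd hdeg
  have hR0 : (0:ℝ) < R := lt_of_lt_of_le one_pos hR1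
  set g : ℂ → ℂ :=
    fun z => limUnder atTop (fun n : ℕ => deriv (f^[n]) z / (2 * (d : ℂ) ^ n * f^[n] z)) with hg
  set basin : Set ℂ := basinInf f with hbasin
  have hd0 : (d:ℂ) ≠ 0 := Nat.cast_ne_zero.mpr (by omega)
  have hfR : ∀ w : ℂ, R ≤ ‖w‖ → 2*‖w‖ ≤ ‖f w‖ := fun w hw => by
    rw [hf w]; exact (hfr w hw).2.1
  -- existence of escape time
  have hbas : ∀ z ∈ basin, ∃ N : ℕ, R + 1 ≤ ‖f^[N] z‖ := by
    intro z hz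
    have hz2 : Tendsto (fun n : ℕ => ‖f^[n] z‖) atTop atTop := hz
    have hz' : Tendsto (fun n : ℕ => ‖f^[n] z‖) atTop atTop := by
      have he : (fun n : ℕ => ‖f^[n] z‖) = fun n : ℕ => ‖f^[n] z‖ := by
        funext n; rfl
      rw [he]; exact hz2
    exact (hz'.eventually_ge_atTop (R+1)).exists
  -- part 1: convergence
  have htend : ∀ z ∈ basin,
      Tendsto (fun n : ℕ => deriv (f^[n]) z / (2 * (d : ℂ) ^ n * f^[n] z)) atTop (𝓝 (g z)) := by
    intro z hz
    obtain ⟨N, hN⟩ := hbas z hz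
    obtain ⟨L, hL, -, -⟩ := core hd hf hR1 hfr (z := z) (N := N) (by linarith)
    have hgz : g z = L := hL.limUnder_eq
    rw [hgz]; exact hL
  -- numerator as a finite product: differentiability
  have hnum : ∀ n : ℕ, Differentiable ℂ
      (fun z => ∏ k ∈ Finset.range n, (derivative p).eval (f^[k] z)) := by
    intro n
    induction n with
    | zero => simpa using differentiable_const (1:ℂ)
    | succ n ih =>
      have he : (fun z => ∏ k ∈ Finset.range (n+1), (derivative p).eval (f^[k] z))
          = fun z => (∏ k ∈ Finset.range n, (derivative p).eval (f^[k] z))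
              * (derivative p).eval (f^[n] z) := by
        funext z; rw [Finset.prod_range_succ]
      rw [he]
      exact ih.mul (((derivative p).differentiable).comp (iter_diff hf n))
  have hFeq : ∀ n : ℕ, (fun z => deriv (f^[n]) z / (2 * (d : ℂ) ^ n * f^[n] z))
      = fun z => (∏ k ∈ Finset.range n, (derivative p).eval (f^[k] z))
          / (2 * (d : ℂ) ^ n * f^[n] z) := by
    intro n; funext z; rw [iter_deriv_prod hf]
  refine ⟨g, htend, ?_, ?_⟩
  · -- part 2: holomorphy
    intro z0 hz0
    obtain ⟨N, hN⟩ := hbas z0 hz0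
    have hwne0 : f^[N] z0 ≠ 0 := by
      intro h; rw [h] at hN; simp at hN; linarith
    set U0 : Set ℂ := {z | R < ‖f^[N] z‖} with hU0
    have hU0open : IsOpen U0 :=
      isOpen_lt continuous_const ((iter_diff hf N).continuous.norm)
    have hz0U0 : z0 ∈ U0 := by simp only [hU0, mem_setOf_eq]; linarith
    set M : ℝ := ‖deriv (f^[N]) z0 / (2 * (d : ℂ) ^ N * f^[N] z0)‖ + 1 with hM
    have hM0 : 0 < M := by positivity
    have hcont : ContinuousAt (fun z => deriv (f^[N]) z / (2 * (d : ℂ) ^ N * f^[N] z)) z0 := by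
      rw [hFeq N]
      apply ContinuousAt.div
      · exact (hnum N).continuous.continuousAt
      · exact (continuous_const.mul (iter_diff hf N).continuous).continuousAt
      · exact mul_ne_zero (mul_ne_zero two_ne_zero (pow_ne_zero _ hd0)) hwne0
    have hev : ∀ᶠ z in 𝓝 z0, ‖deriv (f^[N]) z / (2 * (d : ℂ) ^ N * f^[N] z)‖ < M :=
      hcont.norm.eventually (gt_mem_nhds (by rw [hM]; linarith))
    obtain ⟨W, hWsub, hWopen, hz0W⟩ := mem_nhds_iff.mp hev
    set U : Set ℂ := U0 ∩ W with hU
    have hUopen : IsOpen U := hU0open.inter hWopen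
    have hz0U : z0 ∈ U := ⟨hz0U0, hz0W⟩
    have hUR : ∀ z ∈ U, R ≤ ‖f^[N] z‖ := fun z hz => le_of_lt hz.1
    have hUne : ∀ z ∈ U, ∀ n, N ≤ n → f^[n] z ≠ 0 := by
      intro z hz n hn
      have hesc := escape hR1 hfR (hUR z hz) (n - N)
      rw [show N + (n - N) = n by omega] at hesc
      intro h; rw [h] at hesc; simp at hesc
      nlinarith [pow_pos (show (0:ℝ) < 2 by norm_num) (n - N)]
    -- uniform convergence on U
    have htu : TendstoUniformlyOn
        (fun n z => deriv (f^[n]) z / (2 * (d : ℂ) ^ n * f^[n] z)) g atTop U := by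
      rw [Metric.tendstoUniformlyOn_iff]
      intro ε hε
      obtain ⟨K, hK⟩ : ∃ K : ℕ, (1/2:ℝ)^K < ε / M := by
        apply exists_pow_lt_of_lt_one (by positivity) (by norm_num)
      have hK' : M * (1/2:ℝ)^K < ε := by
        rw [show ε = M * (ε/M) by field_simp]
        exact (mul_lt_mul_iff_right₀ hM0).mpr hK
      filter_upwards [eventually_ge_atTop (N+K)] with n hn z hzU
      obtain ⟨L, hL, -, htail⟩ := core hd hf hR1 hfr (z := z) (N := N) (hUR z hzU)
      have hgz : g z = L := by rw [hg]; exact hL.limUnder_eq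
      rw [dist_eq_norm, hgz]
      have h1 := htail n (by omega)
      have h2 : ‖deriv (f^[N]) z / (2 * (d : ℂ) ^ N * f^[N] z)‖ < M := hWsub hzU.2
      have h3 : ((1:ℝ)/2)^(n-N) ≤ (1/2:ℝ)^K :=
        pow_le_pow_of_le_one (by norm_num) (by norm_num) (by omega)
      have h4 : (0:ℝ) < (1/2:ℝ)^(n-N) := by positivity
      calc ‖L - deriv (f^[n]) z / (2 * (d : ℂ) ^ n * f^[n] z)‖
          ≤ ‖deriv (f^[N]) z / (2 * (d : ℂ) ^ N * f^[N] z)‖ * (1/2:ℝ)^(n-N) := h1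
        _ ≤ M * (1/2:ℝ)^K := by nlinarith [norm_nonneg (deriv (f^[N]) z / (2 * (d : ℂ) ^ N * f^[N] z))]
        _ < ε := hK'
    have hdiffF : ∀ᶠ n in atTop, DifferentiableOn ℂ
        (fun z => deriv (f^[n]) z / (2 * (d : ℂ) ^ n * f^[n] z)) U := by
      filter_upwards [eventually_ge_atTop N] with n hn
      rw [hFeq n]
      apply DifferentiableOn.div (hnum n).differentiableOn
        ((differentiable_const _).mul (iter_diff hf n)).differentiableOn
      intro z hz
      exact mul_ne_zero (mul_ne_zero two_ne_zero (pow_ne_zero _ hd0)) (hUne z hz n hn)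
    have hgdiff : DifferentiableOn ℂ g U :=
      (htu.tendstoLocallyUniformlyOn).differentiableOn hdiffF hUopen
    exact (hgdiff.differentiableAt (hUopen.mem_nhds hz0U)).differentiableWithinAt
  · -- part 3: zeros
    intro z hz
    simp only [precrit, Set.mem_setOf_eq]
    constructor
    · intro hgz
      by_contra hpre
      push_neg at hpre
      obtain ⟨N, hN⟩ := hbas z hz
      obtain ⟨L, hL, hlow, -⟩ := core hd hf hR1 hfr (z := z) (N := N) (by linarith)
      have hgz' : g z = L := by rw [hg]; exact hL.limUnder_eq
      have hwne0 : f^[N] z ≠ 0 := by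
        intro h; rw [h] at hN; simp at hN; linarith
      have hDne : deriv (f^[N]) z ≠ 0 := by
        intro h
        rw [iter_deriv_prod hf] at h
        obtain ⟨k, hk, hk0⟩ := Finset.prod_eq_zero_iff.mp h
        have hk' : deriv (f^[k+1]) z = 0 := by
          rw [iter_deriv_prod hf, Finset.prod_range_succ, hk0, mul_zero]
        exact (hpre (k+1) (by omega)) hk'
      have haNne : deriv (f^[N]) z / (2 * (d : ℂ) ^ N * f^[N] z) ≠ 0 :=
        div_ne_zero hDne (mul_ne_zero (mul_ne_zero two_ne_zero (pow_ne_zero _ hd0)) hwne0)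
      have h5 : (0:ℝ) < ‖deriv (f^[N]) z / (2 * (d : ℂ) ^ N * f^[N] z)‖ :=
        norm_pos_iff.mpr haNne
      have h6 : (0:ℝ) < ‖L‖ := lt_of_lt_of_le (by linarith) hlow
      have hL0 : L = 0 := by rw [← hgz']; exact hgz
      rw [hL0] at h6; simp at h6
    · rintro ⟨n₀, hn₀, hder⟩
      have hzero : ∀ᶠ n in atTop, deriv (f^[n]) z / (2 * (d : ℂ) ^ n * f^[n] z) = 0 := by
        filter_upwards [eventually_ge_atTop n₀] with n hn
        have : deriv (f^[n]) z = 0 := by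
          rw [iter_deriv_prod hf]
          rw [iter_deriv_prod hf] at hder
          obtain ⟨k, hk, hk0⟩ := Finset.prod_eq_zero_iff.mp hder
          exact Finset.prod_eq_zero (Finset.mem_range.mpr (by
            have := Finset.mem_range.mp hk; omega)) hk0
        rw [this, zero_div]
      have h0 : Tendsto (fun n : ℕ => deriv (f^[n]) z / (2 * (d : ℂ) ^ n * f^[n] z))
          atTop (𝓝 0) := by
        apply Tendsto.congr' (hzero.mono fun n h => h.symm) tendsto_const_nhds
      exact tendsto_nhds_unique (htend z hz) h0
end

section
/- Let f and g be complex polynomials of the same degree d ≥ 2. The following are equivalent: (i) there exist a, b ∈ ℂ with a ≠ 0 such that S_f(z) = a²·S_g(az + b) for every z ∈ ℂ with f'(z) ≠ 0 and g'(az + b) ≠ 0; (ii) there exist affine maps A(z) = az + b and B(z) = cz + e with a ≠ 0, c ≠ 0 such that f = B ∘ g ∘ A; (iii) there exist a, b, c ∈ ℂ with a ≠ 0, c ≠ 0 such that f'(z) = c·g'(az + b) for all z ∈ ℂ (i.e., f and g have the same critical set, counted with multiplicities, up to the affine change of variable A(z) = az + b). -/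
open Filter Topology MeasureTheory Set

open Polynomial

private lemma deriv_coeff_top' {P : ℂ[X]} {n : ℕ} (hn : 1 ≤ n) (hP : P.natDegree = n) :
    (derivative P).coeff (n-1) = n * P.leadingCoeff := by
  have h := coeff_derivative P (n-1)
  rw [Nat.sub_add_cancel hn] at h
  rw [h, leadingCoeff, hP, mul_comm]
  congr 1
  push_cast [Nat.cast_sub hn]
  ring

private lemma natDeg_deriv' {P : ℂ[X]} {n : ℕ} (hn : 1 ≤ n) (hP : P.natDegree = n) :
    (derivative P).natDegree = n - 1 := by
  have hP0 : P ≠ 0 := fun h => by simp [h] at hP; omega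
  have hlc : P.leadingCoeff ≠ 0 := leadingCoeff_ne_zero.2 hP0
  have hne : (derivative P).coeff (n-1) ≠ 0 := by
    rw [deriv_coeff_top' hn hP]
    exact mul_ne_zero (Nat.cast_ne_zero.2 (by omega)) hlc
  refine le_antisymm ?_ (le_natDegree_of_ne_zero hne)
  have := natDegree_derivative_le P
  omega

private lemma lc_deriv' {P : ℂ[X]} {n : ℕ} (hn : 1 ≤ n) (hP : P.natDegree = n) :
    (derivative P).leadingCoeff = n * P.leadingCoeff := by
  rw [leadingCoeff, natDeg_deriv' hn hP, deriv_coeff_top' hn hP]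

private lemma wronskian_eq_zero {P Q : ℂ[X]} {n : ℕ} (hn : 1 ≤ n)
    (hP : P.natDegree = n) (hQ : Q.natDegree = n)
    (hstar : 2 * derivative (derivative P) * P * Q^2 - 3 * (derivative P)^2 * Q^2
           = 2 * derivative (derivative Q) * Q * P^2 - 3 * (derivative Q)^2 * P^2) :
    derivative P * Q = P * derivative Q := by
  have hP0 : P ≠ 0 := fun h => by simp [h] at hP; omega
  have hQ0 : Q ≠ 0 := fun h => by simp [h] at hQ; omega
  have hlcP : P.leadingCoeff ≠ 0 := leadingCoeff_ne_zero.2 hP0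
  have hlcQ : Q.leadingCoeff ≠ 0 := leadingCoeff_ne_zero.2 hQ0
  set R := derivative P * Q - P * derivative Q with hRdef
  have hdR : derivative R = derivative (derivative P) * Q - P * derivative (derivative Q) := by
    rw [hRdef]
    simp only [derivative_sub, derivative_mul]
    ring
  have key : C (2:ℂ) * (derivative R * (P * Q)) =
      C (3:ℂ) * (R * (derivative P * Q + P * derivative Q)) := by
    have h2 : (C (2:ℂ)) = (2 : ℂ[X]) := map_ofNat C 2
    have h3 : (C (3:ℂ)) = (3 : ℂ[X]) := map_ofNat C 3
    rw [h2, h3, hdR, hRdef]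
    linear_combination hstar
  have edP : (derivative P).natDegree = n - 1 := natDeg_deriv' hn hP
  have edQ : (derivative Q).natDegree = n - 1 := natDeg_deriv' hn hQ
  have hRcoeff : ∀ N, 2*n - 2 < N → R.coeff N = 0 := by
    intro N hN
    have hb1 : (derivative P * Q).natDegree ≤ 2*n - 1 := by
      refine (natDegree_mul_le).trans ?_; rw [edP, hQ]; omega
    have hb2 : (P * derivative Q).natDegree ≤ 2*n - 1 := by
      refine (natDegree_mul_le).trans ?_; rw [edQ, hP]; omega
    rcases eq_or_lt_of_le (show 2*n - 1 ≤ N by omega) with hEq | hlt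
    · have c1 : (derivative P * Q).coeff N = (n : ℂ) * P.leadingCoeff * Q.leadingCoeff := by
        have h := coeff_mul_degree_add_degree (derivative P) Q
        rw [edP, hQ, lc_deriv' hn hP] at h
        rw [← hEq, show 2*n-1 = n - 1 + n by omega, h]
      have c2 : (P * derivative Q).coeff N = P.leadingCoeff * ((n:ℂ) * Q.leadingCoeff) := by
        have h := coeff_mul_degree_add_degree P (derivative Q)
        rw [edQ, hP, lc_deriv' hn hQ] at h
        rw [← hEq, show 2*n-1 = n + (n - 1) by omega, h]
      rw [hRdef, coeff_sub, c1, c2]; ring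
    · rw [hRdef, coeff_sub,
        coeff_eq_zero_of_natDegree_lt (lt_of_le_of_lt hb1 hlt),
        coeff_eq_zero_of_natDegree_lt (lt_of_le_of_lt hb2 hlt), sub_zero]
  have hRle : R.natDegree ≤ 2*n - 2 := natDegree_le_iff_coeff_eq_zero.2 hRcoeff
  have hScoeff : (derivative P * Q + P * derivative Q).coeff (2*n-1)
      = 2 * (n:ℂ) * P.leadingCoeff * Q.leadingCoeff := by
    have h1 := coeff_mul_degree_add_degree (derivative P) Q
    rw [edP, hQ, lc_deriv' hn hP] at h1
    have h2 := coeff_mul_degree_add_degree P (derivative Q)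
    rw [edQ, hP, lc_deriv' hn hQ] at h2
    rw [coeff_add, show 2*n-1 = n - 1 + n by omega, h1,
      show n - 1 + n = n + (n-1) by omega, h2]
    ring
  have hSne : (derivative P * Q + P * derivative Q).coeff (2*n-1) ≠ 0 := by
    rw [hScoeff]
    exact mul_ne_zero (mul_ne_zero (mul_ne_zero two_ne_zero
      (Nat.cast_ne_zero.2 (by omega))) hlcP) hlcQ
  have hS0 : derivative P * Q + P * derivative Q ≠ 0 := fun h => hSne (by rw [h]; simp)
  have hR : R = 0 := by
    by_contra hR
    by_cases hdR0 : derivative R = 0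
    · rw [hdR0] at key
      simp only [mul_zero, zero_mul] at key
      have hz : R * (derivative P * Q + P * derivative Q) = 0 := by
        rcases mul_eq_zero.1 key.symm with h | h
        · exact absurd h (by simp)
        · exact h
      exact mul_ne_zero hR hS0 hz
    · set m := R.natDegree with hm
      have hm1 : 1 ≤ m := by
        by_contra h
        have : R.natDegree = 0 := by omega
        obtain ⟨e, he⟩ := natDegree_eq_zero.1 this
        exact hdR0 (by rw [← he]; simp)
      have hlcR : R.leadingCoeff ≠ 0 := leadingCoeff_ne_zero.2 hR
      have edR : (derivative R).natDegree = m - 1 := natDeg_deriv' hm1 rfl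
      have hSle : (derivative P * Q + P * derivative Q).natDegree ≤ 2*n-1 := by
        refine natDegree_add_le_of_degree_le ?_ ?_ <;>
          refine natDegree_mul_le.trans ?_
        · rw [edP, hQ]; omega
        · rw [edQ, hP]; omega
      have hSdeg : (derivative P * Q + P * derivative Q).natDegree = 2*n-1 :=
        le_antisymm hSle (le_natDegree_of_ne_zero hSne)
      have hSlc : (derivative P * Q + P * derivative Q).leadingCoeff
          = 2 * (n:ℂ) * P.leadingCoeff * Q.leadingCoeff := by
        rw [leadingCoeff, hSdeg, hScoeff]
      have hc := congrArg (fun s : ℂ[X] => s.coeff (m - 1 + 2*n)) key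
      simp only [coeff_C_mul] at hc
      have hPQdeg : (P*Q).natDegree = 2*n := by rw [natDegree_mul hP0 hQ0, hP, hQ]; omega
      have e1 : (derivative R * (P * Q)).coeff (m - 1 + 2*n)
          = (m : ℂ) * R.leadingCoeff * (P.leadingCoeff * Q.leadingCoeff) := by
        have h := coeff_mul_degree_add_degree (derivative R) (P*Q)
        rw [edR, hPQdeg, lc_deriv' hm1 rfl, leadingCoeff_mul] at h
        rw [h]
        try ring
      have e2 : (R * (derivative P * Q + P * derivative Q)).coeff (m - 1 + 2*n)
          = R.leadingCoeff * (2 * (n:ℂ) * P.leadingCoeff * Q.leadingCoeff) := by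
        have h := coeff_mul_degree_add_degree R (derivative P * Q + P * derivative Q)
        rw [hSdeg, hSlc, ← hm] at h
        rw [show m - 1 + 2*n = m + (2*n-1) by omega, h]
      rw [e1, e2] at hc
      have hmn : (2 * (m:ℂ)) * (R.leadingCoeff * (P.leadingCoeff * Q.leadingCoeff))
          = (6 * (n:ℂ)) * (R.leadingCoeff * (P.leadingCoeff * Q.leadingCoeff)) := by
        linear_combination hc
      have hmn2 : (2 * (m:ℂ)) = 6 * (n:ℂ) :=
        mul_right_cancel₀ (mul_ne_zero hlcR (mul_ne_zero hlcP hlcQ)) hmn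
      have : (2 * m : ℕ) = (6 * n : ℕ) := by
        have : ((2 * m : ℕ) : ℂ) = ((6 * n : ℕ) : ℂ) := by push_cast; linear_combination hmn2
        exact_mod_cast this
      omega
  exact sub_eq_zero.1 hR

private lemma prop_of_wronskian {P Q : ℂ[X]} {n : ℕ} (hn : 1 ≤ n)
    (hP : P.natDegree = n) (hQ : Q.natDegree = n)
    (hw : derivative P * Q = P * derivative Q) :
    ∃ c : ℂ, c ≠ 0 ∧ P = C c * Q := by
  have hP0 : P ≠ 0 := fun h => by simp [h] at hP; omega
  have hQ0 : Q ≠ 0 := fun h => by simp [h] at hQ; omega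
  have hlcP : P.leadingCoeff ≠ 0 := leadingCoeff_ne_zero.2 hP0
  have hlcQ : Q.leadingCoeff ≠ 0 := leadingCoeff_ne_zero.2 hQ0
  set c := P.leadingCoeff / Q.leadingCoeff with hc
  have hc0 : c ≠ 0 := div_ne_zero hlcP hlcQ
  refine ⟨c, hc0, ?_⟩
  set D := P - C c * Q with hDdef
  have hw' : derivative D * Q = D * derivative Q := by
    have hdD : derivative D = derivative P - C c * derivative Q := by
      rw [hDdef]; simp [derivative_mul]
    rw [hdD, hDdef]
    linear_combination hw
  have hDQ0 : derivative Q ≠ 0 := by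
    intro h
    have := natDegree_eq_zero_of_derivative_eq_zero h
    omega
  have hD : D = 0 := by
    by_contra hD0
    have hDlc : D.leadingCoeff ≠ 0 := leadingCoeff_ne_zero.2 hD0
    have hDle : D.natDegree ≤ n - 1 := by
      refine natDegree_le_iff_coeff_eq_zero.2 fun N hN => ?_
      have hb : (C c * Q).natDegree ≤ n := by
        refine natDegree_mul_le.trans ?_; simp [hQ]
      rcases eq_or_lt_of_le (show n ≤ N by omega) with hEq | hlt
      · rw [hDdef, coeff_sub, coeff_C_mul, ← hEq, ← hP, ← leadingCoeff, hP, ← hQ,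
          ← leadingCoeff, hc]
        field_simp
        ring
      · rw [hDdef, coeff_sub, coeff_eq_zero_of_natDegree_lt (by omega),
          coeff_eq_zero_of_natDegree_lt (lt_of_le_of_lt hb hlt), sub_zero]
    by_cases hdD0 : derivative D = 0
    · have hDn : D.natDegree = 0 := natDegree_eq_zero_of_derivative_eq_zero hdD0
      rw [hdD0, zero_mul] at hw'
      exact mul_ne_zero hD0 hDQ0 hw'.symm
    · set m := D.natDegree with hm
      have hm1 : 1 ≤ m := by
        by_contra h
        have h0 : D.natDegree = 0 := by omega
        obtain ⟨e, he⟩ := natDegree_eq_zero.1 h0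
        exact hdD0 (by rw [← he]; simp)
      have edD : (derivative D).natDegree = m - 1 := natDeg_deriv' hm1 rfl
      have edQ : (derivative Q).natDegree = n - 1 := natDeg_deriv' hn hQ
      have hc2 := congrArg (fun s : ℂ[X] => s.coeff (m - 1 + n)) hw'
      have e1 : (derivative D * Q).coeff (m - 1 + n)
          = (m : ℂ) * D.leadingCoeff * Q.leadingCoeff := by
        have h := coeff_mul_degree_add_degree (derivative D) Q
        rw [edD, hQ, lc_deriv' hm1 rfl] at h
        rw [h]
      have e2 : (D * derivative Q).coeff (m - 1 + n)
          = D.leadingCoeff * ((n:ℂ) * Q.leadingCoeff) := by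
        have h := coeff_mul_degree_add_degree D (derivative Q)
        rw [edQ, lc_deriv' hn hQ, ← hm] at h
        rw [show m - 1 + n = m + (n-1) by omega, h]
      rw [e1, e2] at hc2
      have : (m : ℂ) * (D.leadingCoeff * Q.leadingCoeff)
          = (n : ℂ) * (D.leadingCoeff * Q.leadingCoeff) := by linear_combination hc2
      have hmc : (m : ℂ) = (n : ℂ) :=
        mul_right_cancel₀ (mul_ne_zero hDlc hlcQ) this
      have : m = n := by exact_mod_cast hmc
      omega
  exact sub_eq_zero.1 hD

private lemma iter_eval (k : ℕ) : ∀ (p : ℂ[X]),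
    iteratedDeriv k (fun z => p.eval z) = fun z => (derivative^[k] p).eval z := by
  induction k with
  | zero => intro p; simp
  | succ k ih =>
    intro p
    rw [iteratedDeriv_succ']
    have h : deriv (fun z => p.eval z) = fun z => (derivative p).eval z := by
      funext z; exact Polynomial.deriv p
    rw [h, ih, Function.iterate_succ_apply]

private lemma iter_deriv_comp (a b : ℂ) (k : ℕ) : ∀ (r : ℂ[X]),
    derivative^[k] (r.comp (C a * X + C b))
      = C (a^k) * ((derivative^[k] r).comp (C a * X + C b)) := by
  induction k with
  | zero => intro r; simp
  | succ k ih =>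
    intro r
    rw [Function.iterate_succ_apply, derivative_comp]
    have hL : derivative (C a * X + C b) = C a := by simp
    rw [hL, iterate_derivative_C_mul, ih (derivative r), ← mul_assoc, ← C_mul,
      Function.iterate_succ_apply]
    ring_nf

private lemma eval_linear_comp (a b z : ℂ) (r : ℂ[X]) :
    (r.comp (C a * X + C b)).eval z = r.eval (a * z + b) := by
  simp [eval_comp]

private lemma natDegree_linear_comp {a : ℂ} (ha : a ≠ 0) (b : ℂ) (r : ℂ[X]) :
    (r.comp (C a * X + C b)).natDegree = r.natDegree := by
  rw [natDegree_comp, natDegree_linear ha, mul_one]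

private lemma field1 (A1 A2 A3 B1 B2 B3 a : ℂ) (ha : a ≠ 0) (h1 : A1 ≠ 0) (hb : B1 ≠ 0)
    (h : A3/A1 - 3/2*(A2/A1)^2 = a^2 * (B3/B1 - 3/2*(B2/B1)^2)) :
    2*A3*A1*(a*B1)^2 - 3*A2^2*(a*B1)^2
      = 2*(a^3*B3)*(a*B1)*A1^2 - 3*(a^2*B2)^2*A1^2 := by
  field_simp at h
  have key : (2*A1*B1) * (2*A3*A1*(a*B1)^2 - 3*A2^2*(a*B1)^2)
      = (2*A1*B1) * (2*(a^3*B3)*(a*B1)*A1^2 - 3*(a^2*B2)^2*A1^2) := by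
    linear_combination (2*A1*B1*a^2) * h
  exact mul_left_cancel₀ (by exact mul_ne_zero (mul_ne_zero two_ne_zero h1) hb) key

private lemma field2 (B1 B2 B3 a c : ℂ) (hc : c ≠ 0) (hb : B1 ≠ 0) :
    (c*a^2*B3)/(c*B1) - 3/2*((c*a*B2)/(c*B1))^2
      = a^2 * (B3/B1 - 3/2*(B2/B1)^2) := by
  field_simp

private lemma schwarzian_poly (r : ℂ[X]) (w : ℂ) :
    schwarzian (fun z => r.eval z) w
      = (derivative (derivative (derivative r))).eval w / (derivative r).eval w
        - 3/2 * ((derivative (derivative r)).eval w / (derivative r).eval w)^2 := by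
  have h3 : derivative^[3] r = derivative (derivative (derivative r)) := rfl
  have h2 : derivative^[2] r = derivative (derivative r) := rfl
  simp only [schwarzian, iter_eval, Polynomial.deriv, h3, h2]

/-- For polynomials `f`, `g` of the same degree `d ≥ 2`, the following
are equivalent: (i) `S_f = A^*(S_g)` for some affine `A(z) = az+b`;
(ii) `f = B ∘ g ∘ A` for affine bijections `A`, `B`;
(iii) `f' (z) = c · g'(az+b)` for all `z` (same critical sets with multiplicities up to
an affine change of variable). -/
theorem stmt7 (d : ℕ) (hd : 2 ≤ d) (p q : Polynomial ℂ)
    (hp : p.natDegree = d) (hq : q.natDegree = d)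
    (f g : ℂ → ℂ) (hf : ∀ z, f z = p.eval z) (hg : ∀ z, g z = q.eval z) :
    ((∃ a b : ℂ, a ≠ 0 ∧ ∀ z : ℂ, deriv f z ≠ 0 → deriv g (a * z + b) ≠ 0 →
        schwarzian f z = a ^ 2 * schwarzian g (a * z + b)) ↔
      (∃ a b c e : ℂ, a ≠ 0 ∧ c ≠ 0 ∧ ∀ z : ℂ, f z = c * g (a * z + b) + e)) ∧
    ((∃ a b c e : ℂ, a ≠ 0 ∧ c ≠ 0 ∧ ∀ z : ℂ, f z = c * g (a * z + b) + e) ↔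
      (∃ a b c : ℂ, a ≠ 0 ∧ c ≠ 0 ∧ ∀ z : ℂ, deriv f z = c * deriv g (a * z + b))) := by
  have hf' : f = fun z => p.eval z := funext hf
  have hg' : g = fun z => q.eval z := funext hg
  subst hf' hg'
  have hd1 : 1 ≤ d := by omega
  have hn : 1 ≤ d - 1 := by omega
  have hder : ∀ (r : ℂ[X]) (z : ℂ), deriv (fun z => r.eval z) z = (derivative r).eval z :=
    fun r z => Polynomial.deriv r
  -- (iii) → (ii)
  have h32 : (∃ a b c : ℂ, a ≠ 0 ∧ c ≠ 0 ∧ ∀ z : ℂ,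
        deriv (fun z => p.eval z) z = c * deriv (fun z => q.eval z) (a * z + b)) →
      (∃ a b c e : ℂ, a ≠ 0 ∧ c ≠ 0 ∧ ∀ z : ℂ,
        (fun z => p.eval z) z = c * (fun z => q.eval z) (a * z + b) + e) := by
    rintro ⟨a, b, c, ha, hc, h⟩
    have hpoly : derivative p = C c * ((derivative q).comp (C a * X + C b)) := by
      apply Polynomial.funext
      intro z
      have hz := h z
      rw [hder, hder] at hz
      rw [hz, eval_mul, eval_C, eval_linear_comp]
    set r := p - C (c/a) * (q.comp (C a * X + C b)) with hr
    have hdr : derivative r = 0 := by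
      rw [hr, derivative_sub, derivative_C_mul, derivative_comp]
      have hL : derivative (C a * X + C b) = C a := by simp
      rw [hL, hpoly, ← mul_assoc, ← C_mul, div_mul_cancel₀ c ha]
      ring
    obtain ⟨e, he⟩ := natDegree_eq_zero.1 (natDegree_eq_zero_of_derivative_eq_zero hdr)
    refine ⟨a, b, c/a, e, ha, div_ne_zero hc ha, fun z => ?_⟩
    simp only
    have hpe : p = C (c/a) * (q.comp (C a * X + C b)) + C e := by
      rw [he, hr]; ring
    rw [hpe]
    simp [eval_linear_comp]
  -- (ii) → (iii)
  have h23 : (∃ a b c e : ℂ, a ≠ 0 ∧ c ≠ 0 ∧ ∀ z : ℂ,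
        (fun z => p.eval z) z = c * (fun z => q.eval z) (a * z + b) + e) →
      (∃ a b c : ℂ, a ≠ 0 ∧ c ≠ 0 ∧ ∀ z : ℂ,
        deriv (fun z => p.eval z) z = c * deriv (fun z => q.eval z) (a * z + b)) := by
    rintro ⟨a, b, c, e, ha, hc, h⟩
    have hpoly : p = C c * (q.comp (C a * X + C b)) + C e := by
      apply Polynomial.funext
      intro z
      have hz := h z
      simp only at hz
      rw [hz, eval_add, eval_mul, eval_C, eval_C, eval_linear_comp]
    refine ⟨a, b, c*a, ha, mul_ne_zero hc ha, fun z => ?_⟩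
    rw [hder, hder, hpoly]
    rw [derivative_add, derivative_C, derivative_C_mul, derivative_comp]
    have hL : derivative (C a * X + C b) = C a := by simp
    rw [hL]
    simp [eval_linear_comp]
    ring
  -- (i) → (iii)
  have h31 : (∃ a b : ℂ, a ≠ 0 ∧ ∀ z : ℂ,
        deriv (fun z => p.eval z) z ≠ 0 → deriv (fun z => q.eval z) (a * z + b) ≠ 0 →
        schwarzian (fun z => p.eval z) z
          = a ^ 2 * schwarzian (fun z => q.eval z) (a * z + b)) →
      (∃ a b c : ℂ, a ≠ 0 ∧ c ≠ 0 ∧ ∀ z : ℂ,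
        deriv (fun z => p.eval z) z = c * deriv (fun z => q.eval z) (a * z + b)) := by
    rintro ⟨a, b, ha, h⟩
    set P := derivative p with hPdef
    set Qq := derivative (q.comp (C a * X + C b)) with hQdef
    have hPdeg : P.natDegree = d - 1 := natDeg_deriv' hd1 hp
    have hcompdeg : (q.comp (C a * X + C b)).natDegree = d := by
      rw [natDegree_linear_comp ha, hq]
    have hQdeg : Qq.natDegree = d - 1 := natDeg_deriv' hd1 hcompdeg
    have hP0 : P ≠ 0 := fun h0 => by rw [h0] at hPdeg; simp at hPdeg; omega
    have hQ0 : Qq ≠ 0 := fun h0 => by rw [h0] at hQdeg; simp at hQdeg; omega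
    -- eval identities for Qq and its derivatives
    have hQe : ∀ z : ℂ, Qq.eval z = a * (derivative q).eval (a*z+b) := by
      intro z
      have hk := iter_deriv_comp a b 1 q
      simp only [Function.iterate_one] at hk
      rw [hQdef, hk, eval_mul, eval_C, eval_linear_comp, pow_one]
    have hQ1e : ∀ z : ℂ, (derivative Qq).eval z
        = a^2 * (derivative (derivative q)).eval (a*z+b) := by
      intro z
      have hk := iter_deriv_comp a b 2 q
      show (derivative^[2] (q.comp (C a * X + C b))).eval z = _
      rw [hk, eval_mul, eval_C, eval_linear_comp]
      rfl
    have hQ2e : ∀ z : ℂ, (derivative (derivative Qq)).eval z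
        = a^3 * (derivative (derivative (derivative q))).eval (a*z+b) := by
      intro z
      have hk := iter_deriv_comp a b 3 q
      show (derivative^[3] (q.comp (C a * X + C b))).eval z = _
      rw [hk, eval_mul, eval_C, eval_linear_comp]
      rfl
    -- pointwise cleared equation
    have hpt : ∀ z : ℂ, P.eval z ≠ 0 → Qq.eval z ≠ 0 →
        (2 * derivative (derivative P) * P * Qq^2 - 3 * (derivative P)^2 * Qq^2).eval z
        = (2 * derivative (derivative Qq) * Qq * P^2 - 3 * (derivative Qq)^2 * P^2).eval z := by
      intro z hz1 hz2
      have hB1 : (derivative q).eval (a*z+b) ≠ 0 := by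
        intro h0
        exact hz2 (by rw [hQe z, h0, mul_zero])
      have hfz : deriv (fun z => p.eval z) z ≠ 0 := by rw [hder]; exact hz1
      have hgz : deriv (fun z => q.eval z) (a*z+b) ≠ 0 := by rw [hder]; exact hB1
      have hz := h z hfz hgz
      rw [schwarzian_poly, schwarzian_poly] at hz
      have hfield := field1 (P.eval z) ((derivative P).eval z)
        ((derivative (derivative P)).eval z)
        ((derivative q).eval (a*z+b)) ((derivative (derivative q)).eval (a*z+b))
        ((derivative (derivative (derivative q))).eval (a*z+b)) a ha hz1 hB1 hz
      simp only [eval_sub, eval_mul, eval_pow, eval_ofNat]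
      rw [hQe z, hQ1e z, hQ2e z]
      linear_combination hfield
    -- upgrade to polynomial identity
    have hPQ0 : P * Qq ≠ 0 := mul_ne_zero hP0 hQ0
    have hinf : {z : ℂ |
        (2 * derivative (derivative P) * P * Qq^2 - 3 * (derivative P)^2 * Qq^2).eval z
        = (2 * derivative (derivative Qq) * Qq * P^2
            - 3 * (derivative Qq)^2 * P^2).eval z}.Infinite := by
      refine Set.Infinite.mono ?_ ((finite_setOf_isRoot hPQ0).infinite_compl)
      intro z hz
      have hz' : P.eval z * Qq.eval z ≠ 0 := by
        simpa [IsRoot, eval_mul] using hz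
      exact hpt z (fun h0 => hz' (by rw [h0, zero_mul]))
        (fun h0 => hz' (by rw [h0, mul_zero]))
    have hEF := eq_of_infinite_eval_eq _ _ hinf
    obtain ⟨c, hc0, hPc⟩ := prop_of_wronskian hn hPdeg hQdeg
      (wronskian_eq_zero hn hPdeg hQdeg hEF)
    refine ⟨a, b, c * a, ha, mul_ne_zero hc0 ha, fun z => ?_⟩
    rw [hder, hder, show derivative p = P from rfl, hPc, eval_mul, eval_C, hQe z]
    ring
  -- (iii) → (i)
  have h13 : (∃ a b c : ℂ, a ≠ 0 ∧ c ≠ 0 ∧ ∀ z : ℂ,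
        deriv (fun z => p.eval z) z = c * deriv (fun z => q.eval z) (a * z + b)) →
      (∃ a b : ℂ, a ≠ 0 ∧ ∀ z : ℂ,
        deriv (fun z => p.eval z) z ≠ 0 → deriv (fun z => q.eval z) (a * z + b) ≠ 0 →
        schwarzian (fun z => p.eval z) z
          = a ^ 2 * schwarzian (fun z => q.eval z) (a * z + b)) := by
    rintro ⟨a, b, c, ha, hc, h⟩
    refine ⟨a, b, ha, fun z hfz hgz => ?_⟩
    have hpoly : derivative p = C c * ((derivative q).comp (C a * X + C b)) := by
      apply Polynomial.funext
      intro z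
      have hz := h z
      rw [hder, hder] at hz
      rw [hz, eval_mul, eval_C, eval_linear_comp]
    have hL : derivative (C a * X + C b) = C a := by simp
    have h2p : derivative (derivative p)
        = C (c*a) * ((derivative (derivative q)).comp (C a * X + C b)) := by
      rw [hpoly, derivative_C_mul, derivative_comp, hL, ← mul_assoc, ← C_mul]
    have h3p : derivative (derivative (derivative p))
        = C (c*a^2) * ((derivative (derivative (derivative q))).comp (C a * X + C b)) := by
      rw [h2p, derivative_C_mul, derivative_comp, hL, ← mul_assoc, ← C_mul]
      ring_nf
    have hB1 : (derivative q).eval (a*z+b) ≠ 0 := by rw [hder] at hgz; exact hgz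
    rw [schwarzian_poly, schwarzian_poly, h3p, h2p, hpoly]
    rw [eval_mul, eval_mul, eval_mul, eval_C, eval_C, eval_C,
      eval_linear_comp, eval_linear_comp, eval_linear_comp]
    exact field2 _ _ _ a c hc hB1
  exact ⟨⟨fun h => h32 (h31 h), fun h => h13 (h23 h)⟩, ⟨h23, h32⟩⟩
end

section
/- Let f be a complex polynomial of degree d ≥ 2. Then there exist finitely many polynomials g₁, …, g_m of degree d such that every polynomial g of degree d that is strongly equivalent to f (i.e., f^n ∼ g^n for all n ≥ 1) is affinely conjugate to some g_i, i.e., there is an affine bijection A(z) = az + b, a ≠ 0, with A ∘ g = g_i ∘ A. In other words, each strong equivalence class consists of finitely many affine conjugacy classes. -/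
open Filter Topology MeasureTheory Set

/-- Two maps are `sim`-related if one is obtained from the other by pre- and
post-composition with affine bijections. -/
def simAffine (F G : ℂ → ℂ) : Prop :=
  ∃ a b c e : ℂ, a ≠ 0 ∧ c ≠ 0 ∧ ∀ z : ℂ, F z = c * G (a * z + b) + e

open Polynomial


noncomputable def aff (a b : ℂ) : Polynomial ℂ := C a * X + C b

lemma aff_eval (a b z : ℂ) : (aff a b).eval z = a * z + b := by simp [aff]

lemma aff_comp (a b : ℂ) (p : ℂ[X]) : (aff a b).comp p = C a * p + C b := by simp [aff]

lemma aff_aff (a b a' b' : ℂ) : (aff a b).comp (aff a' b') = aff (a*a') (a*b'+b) := by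
  rw [aff_comp]; simp only [aff, C_mul, C_add]; ring

lemma aff_one_zero : aff 1 0 = X := by simp [aff]

lemma aff_inv_right (a b : ℂ) (ha : a ≠ 0) : (aff a b).comp (aff a⁻¹ (-(a⁻¹*b))) = X := by
  rw [aff_aff, mul_inv_cancel₀ ha, show a * -(a⁻¹*b) + b = 0 by field_simp; ring, aff_one_zero]

lemma aff_inv_left (a b : ℂ) (ha : a ≠ 0) : (aff a⁻¹ (-(a⁻¹*b))).comp (aff a b) = X := by
  rw [aff_aff, inv_mul_cancel₀ ha, show a⁻¹ * b + -(a⁻¹*b) = 0 by ring, aff_one_zero]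

lemma natDegree_aff (a b : ℂ) (ha : a ≠ 0) : (aff a b).natDegree = 1 :=
  natDegree_linear ha

lemma leadingCoeff_aff (a b : ℂ) (ha : a ≠ 0) : (aff a b).leadingCoeff = a :=
  leadingCoeff_linear ha

lemma aff_ne_zero (a b : ℂ) (ha : a ≠ 0) : aff a b ≠ 0 := by
  intro h
  have := natDegree_aff a b ha
  rw [h] at this; simp at this

lemma coeff_aff_pow (v w : ℂ) (hv : v ≠ 0) {k j : ℕ} (hjk : j ≤ k) :
    ((aff v w) ^ k).coeff j = (k.choose j : ℂ) * v ^ j * w ^ (k - j) := by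
  have h1 : aff v w = C v * (X + C (w/v)) := by
    rw [mul_add, ← C_mul, mul_div_cancel₀ _ hv]; rfl
  rw [h1, mul_pow, ← C_pow, coeff_C_mul, coeff_X_add_C_pow]
  have h2 : v ^ k = v ^ j * v ^ (k - j) := by rw [← pow_add]; congr 1; omega
  rw [div_pow, h2]
  field_simp

lemma natDegree_aff_pow (v w : ℂ) (hv : v ≠ 0) (k : ℕ) :
    ((aff v w) ^ k).natDegree = k := by
  rw [natDegree_pow, natDegree_aff _ _ hv, mul_one]

lemma coeff_comp_aff (P : ℂ[X]) (v w : ℂ) (j : ℕ) :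
    (P.comp (aff v w)).coeff j
      = ∑ k ∈ Finset.range (P.natDegree + 1), P.coeff k * ((aff v w) ^ k).coeff j := by
  rw [comp_eq_sum_left, Polynomial.sum_over_range P (fun n => by simp), finset_sum_coeff]
  exact Finset.sum_congr rfl fun k _ => by rw [coeff_C_mul]

lemma coeff_comp_aff_natDegree (P : ℂ[X]) (v w : ℂ) (hv : v ≠ 0) :
    (P.comp (aff v w)).coeff P.natDegree = P.leadingCoeff * v ^ P.natDegree := by
  rw [coeff_comp_aff, Finset.sum_eq_single P.natDegree]
  · rw [coeff_aff_pow v w hv (le_refl _), Nat.choose_self, Nat.sub_self, pow_zero,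
      Nat.cast_one, one_mul, mul_one, leadingCoeff]
  · intro k hk hne
    have hk' : k < P.natDegree := by
      simp only [Finset.mem_range] at hk; omega
    rw [show ((aff v w) ^ k).coeff P.natDegree = 0 from
      coeff_eq_zero_of_natDegree_lt (by rw [natDegree_aff_pow v w hv]; exact hk'), mul_zero]
  · intro h; exact absurd (Finset.self_mem_range_succ _) h

lemma natDegree_comp_aff (P : ℂ[X]) (v w : ℂ) (hv : v ≠ 0) :
    (P.comp (aff v w)).natDegree = P.natDegree := by
  rw [natDegree_comp, natDegree_aff _ _ hv, mul_one]

lemma coeff_comp_aff_subone (P : ℂ[X]) (v w : ℂ) (hv : v ≠ 0) (hd : 1 ≤ P.natDegree) :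
    (P.comp (aff v w)).coeff (P.natDegree - 1)
      = P.coeff (P.natDegree - 1) * v ^ (P.natDegree - 1)
        + P.leadingCoeff * (P.natDegree : ℂ) * v ^ (P.natDegree - 1) * w := by
  obtain ⟨e, he⟩ : ∃ e, P.natDegree = e + 1 := ⟨P.natDegree - 1, by omega⟩
  rw [coeff_comp_aff]
  rw [he]
  have h1 : e + 1 + 1 = (e + 1) + 1 := rfl
  rw [Finset.sum_range_succ, Finset.sum_range_succ]
  have hz : ∀ k ∈ Finset.range e, P.coeff k * ((aff v w) ^ k).coeff (e + 1 - 1) = 0 := by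
    intro k hk
    simp only [Finset.mem_range] at hk
    rw [show ((aff v w) ^ k).coeff (e + 1 - 1) = 0 from
      coeff_eq_zero_of_natDegree_lt (by rw [natDegree_aff_pow v w hv]; omega), mul_zero]
  rw [Finset.sum_eq_zero hz, zero_add]
  have h2 : e + 1 - 1 = e := rfl
  rw [h2, coeff_aff_pow v w hv (le_refl e), coeff_aff_pow v w hv (by omega : e ≤ e + 1)]
  have h3 : e + 1 - e = 1 := by omega
  have h4 : e - e = 0 := by omega
  have h5 : (e+1).choose e = e+1 := Nat.choose_succ_self_right e
  rw [Nat.choose_self, h3, h4, h5, pow_zero, pow_one, leadingCoeff, he]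
  push_cast
  ring

lemma coeff_comp_scale (P : ℂ[X]) (v : ℂ) (hv : v ≠ 0) (j : ℕ) :
    (P.comp (aff v 0)).coeff j = P.coeff j * v ^ j := by
  rcases le_or_gt j P.natDegree with hj | hj
  · rw [coeff_comp_aff, Finset.sum_eq_single j]
    · rw [coeff_aff_pow v 0 hv (le_refl _), Nat.choose_self, Nat.sub_self, pow_zero,
        Nat.cast_one, one_mul, mul_one]
    · intro k hk hne
      rcases lt_or_gt_of_ne hne with h | h
      · rw [show ((aff v 0) ^ k).coeff j = 0 from
          coeff_eq_zero_of_natDegree_lt (by rw [natDegree_aff_pow v 0 hv]; exact h), mul_zero]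
      · rw [coeff_aff_pow v 0 hv (le_of_lt h), zero_pow (by omega), mul_zero, mul_zero]
    · intro h; exact absurd (Finset.mem_range_succ_iff.mpr hj) h
  · rw [coeff_eq_zero_of_natDegree_lt (by rw [natDegree_comp_aff P v 0 hv]; exact hj),
      coeff_eq_zero_of_natDegree_lt hj, zero_mul]

lemma coeff_comp_aff_zero (P : ℂ[X]) (v w : ℂ) :
    (P.comp (aff v w)).coeff 0 = P.eval w := by
  rw [Polynomial.coeff_zero_eq_eval_zero, eval_comp, aff_eval, mul_zero, zero_add]

lemma geom_aux (b d' : ℂ[X]) (hbM : b.Monic) (hdM : d'.Monic) {E : ℕ}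
    (hbE : b.natDegree = E) (hdE : d'.natDegree = E) (D : ℕ) (hD : 1 ≤ D) :
    (∑ i ∈ Finset.range D, b ^ i * d' ^ (D - 1 - i)).natDegree = (D - 1) * E ∧
    (∑ i ∈ Finset.range D, b ^ i * d' ^ (D - 1 - i)).coeff ((D - 1) * E) = (D : ℂ) := by
  have hterm : ∀ i ∈ Finset.range D, (b ^ i * d' ^ (D - 1 - i)).Monic := by
    intro i _; exact (hbM.pow i).mul (hdM.pow _)
  have hdeg : ∀ i ∈ Finset.range D, (b ^ i * d' ^ (D - 1 - i)).natDegree = (D - 1) * E := by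
    intro i hi
    simp only [Finset.mem_range] at hi
    rw [natDegree_mul (hbM.pow i).ne_zero (hdM.pow _).ne_zero, natDegree_pow, natDegree_pow,
      hbE, hdE]
    have : i + (D - 1 - i) = D - 1 := by omega
    rw [← add_mul, this]
  have hco : (∑ i ∈ Finset.range D, b ^ i * d' ^ (D - 1 - i)).coeff ((D - 1) * E) = (D : ℂ) := by
    rw [finset_sum_coeff]
    have : ∀ i ∈ Finset.range D, (b ^ i * d' ^ (D - 1 - i)).coeff ((D - 1) * E) = 1 := by
      intro i hi
      have h1 := hdeg i hi
      have h2 := hterm i hi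
      rw [← h1]; exact h2.coeff_natDegree
    rw [Finset.sum_congr rfl this, Finset.sum_const, Finset.card_range, nsmul_eq_mul, mul_one]
  refine ⟨le_antisymm ?_ ?_, hco⟩
  · apply natDegree_sum_le_of_forall_le
    intro i hi; exact le_of_eq (hdeg i hi)
  · apply le_natDegree_of_ne_zero
    rw [hco]
    exact_mod_cast Nat.cast_ne_zero.mpr (by omega)

lemma comp_cancel {a b c d' : ℂ[X]} {D E : ℕ} (hD : 1 ≤ D) (hE : 1 ≤ E)
    (haD : a.natDegree = D) (hcD : c.natDegree = D)
    (hlead : a.leadingCoeff = c.leadingCoeff)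
    (hbM : b.Monic) (hdM : d'.Monic) (hbE : b.natDegree = E) (hdE : d'.natDegree = E)
    (hb0 : b.coeff 0 = 0) (hd0 : d'.coeff 0 = 0)
    (h : a.comp b = c.comp d') : b = d' ∧ a = c := by
  have ha0 : a ≠ 0 := fun h0 => by rw [h0] at haD; simp at haD; omega
  have hl : a.leadingCoeff ≠ 0 := leadingCoeff_ne_zero.mpr ha0
  -- expansions
  have expand : ∀ (P Q : ℂ[X]), P.natDegree = D → Q.Monic → Q.natDegree = E →
      P.comp Q = C P.leadingCoeff * Q ^ D +
        ∑ i ∈ Finset.range D, C (P.coeff i) * Q ^ i := by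
    intro P Q hPD hQM hQE
    rw [comp_eq_sum_left, Polynomial.sum_over_range P (fun n => by simp), hPD,
      Finset.sum_range_succ, leadingCoeff, hPD, add_comm]
  have hsubdeg : ∀ (P Q : ℂ[X]), P.natDegree = D → Q.Monic → Q.natDegree = E →
      (∑ i ∈ Finset.range D, C (P.coeff i) * Q ^ i).natDegree ≤ (D - 1) * E := by
    intro P Q hPD hQM hQE
    apply natDegree_sum_le_of_forall_le
    intro i hi
    simp only [Finset.mem_range] at hi
    calc (C (P.coeff i) * Q ^ i).natDegree ≤ (Q ^ i).natDegree := natDegree_C_mul_le _ _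
      _ = i * E := by rw [natDegree_pow, hQE]
      _ ≤ (D - 1) * E := Nat.mul_le_mul_right E (by omega)
  have hkey : C a.leadingCoeff * (b ^ D - d' ^ D) =
      (∑ i ∈ Finset.range D, C (c.coeff i) * d' ^ i) -
      (∑ i ∈ Finset.range D, C (a.coeff i) * b ^ i) := by
    have e1 := expand a b haD hbM hbE
    have e2 := expand c d' hcD hdM hdE
    rw [e1, e2, hlead] at h
    rw [mul_sub, hlead]
    linear_combination h
  have hdegkey : (C a.leadingCoeff * (b ^ D - d' ^ D)).natDegree ≤ (D - 1) * E := by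
    rw [hkey]
    apply le_trans (natDegree_sub_le _ _)
    exact max_le (hsubdeg c d' hcD hdM hdE) (hsubdeg a b haD hbM hbE)
  have hbd : b = d' := by
    by_contra hne
    have hsub : b - d' ≠ 0 := sub_ne_zero.mpr hne
    obtain ⟨hSdeg, hSco⟩ := geom_aux b d' hbM hdM hbE hdE D hD
    set S := ∑ i ∈ Finset.range D, b ^ i * d' ^ (D - 1 - i) with hS
    have hSne : S ≠ 0 := by
      intro h0
      rw [h0, coeff_zero] at hSco
      exact Nat.cast_ne_zero.mpr (show D ≠ 0 by omega) hSco.symm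
    have hgeom : S * (b - d') = b ^ D - d' ^ D := geom_sum₂_mul b d' D
    have : (C a.leadingCoeff * (b ^ D - d' ^ D)).natDegree
        = (D - 1) * E + (b - d').natDegree := by
      rw [← hgeom, ← mul_assoc]
      rw [natDegree_mul (mul_ne_zero (by simpa using hl) hSne) hsub]
      rw [natDegree_mul (by simpa using hl) hSne, natDegree_C, zero_add, hSdeg]
    have hdeg0 : (b - d').natDegree = 0 := by
      rw [this] at hdegkey
      have h0 : (D - 1) * E + (b - d').natDegree ≤ (D - 1) * E + 0 := by simpa using hdegkey
      exact Nat.le_zero.mp (Nat.add_le_add_iff_left.mp h0)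
    obtain ⟨k, hk⟩ := natDegree_eq_zero.mp hdeg0
    have : k = 0 := by
      have := congrArg (fun P => Polynomial.coeff P 0) hk
      simp only [coeff_C_zero, coeff_sub, hb0, hd0, sub_zero] at this
      simpa using this
    rw [this, map_zero] at hk
    exact hsub hk.symm
  refine ⟨hbd, ?_⟩
  have : (a - c).comp b = 0 := by
    rw [sub_comp, h, hbd, sub_self]
  rcases comp_eq_zero_iff.mp this with h1 | ⟨_, h2⟩
  · exact sub_eq_zero.mp h1
  · exfalso
    have := congrArg Polynomial.natDegree h2
    rw [hbE, natDegree_C] at this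
    omega

lemma norm_decomp (b : ℂ[X]) {E : ℕ} (hE : 1 ≤ E) (hbE : b.natDegree = E) :
    ∃ b₀ : ℂ[X], b₀.Monic ∧ b₀.natDegree = E ∧ b₀.coeff 0 = 0 ∧
      b = (aff b.leadingCoeff (b.coeff 0)).comp b₀ := by
  have hbne : b ≠ 0 := fun h0 => by rw [h0] at hbE; simp at hbE; omega
  have hl : b.leadingCoeff ≠ 0 := leadingCoeff_ne_zero.mpr hbne
  refine ⟨C b.leadingCoeff⁻¹ * (b - C (b.coeff 0)), ?_, ?_, ?_, ?_⟩
  · unfold Monic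
    rw [leadingCoeff_mul, leadingCoeff_C]
    rw [show (b - C (b.coeff 0)).leadingCoeff = b.leadingCoeff by
      rw [leadingCoeff, leadingCoeff, natDegree_sub_C, coeff_sub, coeff_C,
        if_neg (by omega : ¬ b.natDegree = 0), sub_zero]]
    exact inv_mul_cancel₀ hl
  · rw [natDegree_C_mul (inv_ne_zero hl), natDegree_sub_C, hbE]
  · rw [coeff_C_mul, coeff_sub, coeff_C, if_pos rfl, sub_self, mul_zero]
  · rw [aff_comp, ← mul_assoc, ← C_mul, mul_inv_cancel₀ hl, C_1, one_mul, sub_add_cancel]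

lemma comp_decomp {a b c d' : ℂ[X]} {D E : ℕ} (hD : 1 ≤ D) (hE : 1 ≤ E)
    (haD : a.natDegree = D) (hcD : c.natDegree = D)
    (hbE : b.natDegree = E) (hdE : d'.natDegree = E)
    (h : a.comp b = c.comp d') :
    ∃ l m : ℂ, l ≠ 0 ∧ c = a.comp (aff l m) ∧ b = (aff l m).comp d' := by
  obtain ⟨b₀, hb₀M, hb₀E, hb₀0, hbdec⟩ := norm_decomp b hE hbE
  obtain ⟨d₀, hd₀M, hd₀E, hd₀0, hddec⟩ := norm_decomp d' hE hdE
  set lb := b.leadingCoeff with hlb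
  set mb := b.coeff 0 with hmb
  set ld := d'.leadingCoeff with hld
  set md := d'.coeff 0 with hmd
  have hlbne : lb ≠ 0 := leadingCoeff_ne_zero.mpr
    (fun h0 => by rw [h0] at hbE; simp at hbE; omega)
  have hldne : ld ≠ 0 := leadingCoeff_ne_zero.mpr
    (fun h0 => by rw [h0] at hdE; simp at hdE; omega)
  set a' := a.comp (aff lb mb) with ha'
  set c' := c.comp (aff ld md) with hc'
  have h' : a'.comp b₀ = c'.comp d₀ := by
    rw [ha', hc', comp_assoc, comp_assoc, ← hbdec, ← hddec, h]
  have ha'D : a'.natDegree = D := by rw [ha', natDegree_comp_aff _ _ _ hlbne, haD]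
  have hc'D : c'.natDegree = D := by rw [hc', natDegree_comp_aff _ _ _ hldne, hcD]
  have hlead : a'.leadingCoeff = c'.leadingCoeff := by
    have e1 : (a'.comp b₀).leadingCoeff = a'.leadingCoeff := by
      rw [leadingCoeff_comp (by rw [hb₀E]; omega), hb₀M.leadingCoeff, one_pow, mul_one]
    have e2 : (c'.comp d₀).leadingCoeff = c'.leadingCoeff := by
      rw [leadingCoeff_comp (by rw [hd₀E]; omega), hd₀M.leadingCoeff, one_pow, mul_one]
    rw [← e1, ← e2, h']
  obtain ⟨hb₀d₀, ha'c'⟩ := comp_cancel hD hE ha'D hc'D hlead hb₀M hd₀M hb₀E hd₀E hb₀0 hd₀0 h'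
  -- L := (aff lb mb) ∘ (aff ld md)⁻¹
  refine ⟨lb * ld⁻¹, lb * -(ld⁻¹ * md) + mb, mul_ne_zero hlbne (inv_ne_zero hldne), ?_, ?_⟩
  · -- c = a.comp L
    have : a'.comp (aff ld⁻¹ (-(ld⁻¹ * md))) = c'.comp (aff ld⁻¹ (-(ld⁻¹ * md))) := by
      rw [ha'c']
    rw [ha', hc', comp_assoc, comp_assoc, aff_inv_right _ _ hldne, comp_X, aff_aff] at this
    exact this.symm
  · -- b = L.comp d'
    have hd₀ : d₀ = (aff ld⁻¹ (-(ld⁻¹ * md))).comp d' := by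
      rw [hddec, ← comp_assoc, aff_inv_left _ _ hldne, X_comp]
    rw [hbdec, hb₀d₀, hd₀, ← comp_assoc, aff_aff]

lemma sym_structure {P : ℂ[X]} {d : ℕ} (hd : 2 ≤ d) (hPd : P.natDegree = d)
    (hPM : P.Monic) (hPc : P.coeff (d - 1) = 0)
    {u u₀ v v₀ : ℂ} (hu : u ≠ 0) (hv : v ≠ 0)
    (h : (aff u u₀).comp (P.comp (aff v v₀)) = P) :
    v₀ = 0 ∧ u * v ^ d = 1 ∧ (∀ k, 1 ≤ k → k ≤ d - 1 → P.coeff k * (u * v ^ k - 1) = 0) ∧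
      u * P.coeff 0 + u₀ = P.coeff 0 := by
  rw [aff_comp] at h
  have hco : ∀ j, 1 ≤ j → u * (P.comp (aff v v₀)).coeff j = P.coeff j := by
    intro j hj
    have hj0 : ¬ j = 0 := by omega
    have := congrArg (fun Q => Polynomial.coeff Q j) h
    simpa [coeff_C, if_neg hj0] using this
  have hlead : P.leadingCoeff = 1 := hPM.leadingCoeff
  have hcoeffd : P.coeff d = 1 := by rw [← hPd]; exact hPM.coeff_natDegree
  have hdC : (d : ℂ) ≠ 0 := Nat.cast_ne_zero.mpr (by omega)
  have hvp : v ^ (d - 1) ≠ 0 := pow_ne_zero _ hv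
  have hv₀ : v₀ = 0 := by
    have h1 := hco (d - 1) (by omega)
    have h2 : (P.comp (aff v v₀)).coeff (d - 1)
        = P.coeff (d - 1) * v ^ (d - 1) + P.leadingCoeff * (d : ℂ) * v ^ (d - 1) * v₀ := by
      have := coeff_comp_aff_subone P v v₀ hv (by omega)
      rw [hPd] at this
      exact this
    rw [h2, hPc, hlead, zero_mul, zero_add, one_mul] at h1
    have h3 : u * ((d : ℂ) * v ^ (d - 1)) ≠ 0 := mul_ne_zero hu (mul_ne_zero hdC hvp)
    have h4 : u * ((d : ℂ) * v ^ (d - 1)) * v₀ = 0 := by linear_combination h1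
    exact (mul_eq_zero.mp h4).resolve_left h3
  subst hv₀
  have hscale : ∀ j, (P.comp (aff v 0)).coeff j = P.coeff j * v ^ j :=
    coeff_comp_scale P v hv
  refine ⟨rfl, ?_, ?_, ?_⟩
  · have h1 := hco d (by omega)
    rw [hscale d, hcoeffd, one_mul] at h1
    rw [h1]
  · intro k hk1 hk2
    have h1 := hco k hk1
    rw [hscale k] at h1
    linear_combination h1
  · have := congrArg (fun Q => Polynomial.coeff Q 0) h
    simp only [coeff_add, coeff_C_mul, coeff_C, if_pos rfl] at this
    rw [hscale 0, pow_zero, mul_one] at this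
    exact this

noncomputable def Sh (d : ℕ) (a w b : ℂ) : ℂ[X] := C a * (X + C w) ^ d + C b

lemma Sh_coeff_d {d : ℕ} (hd : 2 ≤ d) (a w b : ℂ) : (Sh d a w b).coeff d = a := by
  have hd0 : ¬ d = 0 := by omega
  simp [Sh, coeff_C_mul, coeff_X_add_C_pow, coeff_C, if_neg hd0]

lemma Sh_coeff_dsub {d : ℕ} (hd : 2 ≤ d) (a w b : ℂ) :
    (Sh d a w b).coeff (d - 1) = a * ((d : ℂ) * w) := by
  have h1 : ¬ d - 1 = 0 := by omega
  have h2 : d - (d - 1) = 1 := by omega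
  have h3 : d.choose (d - 1) = d := by
    obtain ⟨e, he⟩ : ∃ e, d = e + 1 := ⟨d - 1, by omega⟩
    subst he
    simp [Nat.choose_succ_self_right]
  simp only [Sh, coeff_add, coeff_C_mul, coeff_X_add_C_pow, coeff_C, if_neg h1, h2, h3,
    pow_one, add_zero]
  ring

lemma Sh_coeff_zero {d : ℕ} (hd : 2 ≤ d) (a w b : ℂ) :
    (Sh d a w b).coeff 0 = a * w ^ d + b := by
  simp [Sh, coeff_C_mul, coeff_X_add_C_pow]

lemma Sh_inj {d : ℕ} (hd : 2 ≤ d) {a w b a' w' b' : ℂ} (ha : a ≠ 0)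
    (h : Sh d a w b = Sh d a' w' b') : a = a' ∧ w = w' ∧ b = b' := by
  have hdC : (d : ℂ) ≠ 0 := Nat.cast_ne_zero.mpr (by omega)
  have e1 : a = a' := by
    have := congrArg (fun Q => Polynomial.coeff Q d) h
    simpa [Sh_coeff_d hd] using this
  have e2 : w = w' := by
    have := congrArg (fun Q => Polynomial.coeff Q (d - 1)) h
    simp only [Sh_coeff_dsub hd] at this
    rw [← e1] at this
    exact mul_left_cancel₀ hdC (mul_left_cancel₀ ha this)
  have e3 : b = b' := by
    have := congrArg (fun Q => Polynomial.coeff Q 0) h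
    simp only [Sh_coeff_zero hd] at this
    rw [← e1, ← e2] at this
    exact add_left_cancel this
  exact ⟨e1, e2, e3⟩

lemma pow_comp_aff {d : ℕ} (hd : 2 ≤ d) (c s t : ℂ) (hs : s ≠ 0) :
    ((X : ℂ[X]) ^ d + C c).comp (aff s t) = Sh d (s ^ d) (t / s) c := by
  have h1 : aff s t = C s * (X + C (t/s)) := by
    rw [mul_add, ← C_mul, mul_div_cancel₀ _ hs]; rfl
  rw [add_comp, pow_comp, X_comp, C_comp, h1, mul_pow, ← C_pow]; rfl

lemma aff_comp_Sh {d : ℕ} (γ δ a w b : ℂ) :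
    (aff γ δ).comp (Sh d a w b) = Sh d (γ * a) w (γ * b + δ) := by
  rw [aff_comp, Sh, Sh, C_mul, C_add, C_mul]; ring

lemma Sh_one_zero {d : ℕ} (c : ℂ) : (X : ℂ[X]) ^ d + C c = Sh d 1 0 c := by
  simp [Sh]

lemma caseB {d : ℕ} (hd : 2 ≤ d) {c u u₀ γ δ a₃ b₃ : ℂ} (hc : c ≠ 0) (hu : u ≠ 0)
    (hγ : γ ≠ 0) (ha₃ : a₃ ≠ 0) (hu₀ : u * c + u₀ = c)
    (h3 : (((X : ℂ[X]) ^ d + C c).comp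
        ((((X : ℂ[X]) ^ d + C c)).comp ((X : ℂ[X]) ^ d + C c)))
      = (aff γ δ).comp
          ((((X : ℂ[X]) ^ d + C c).comp (aff u u₀)).comp
            ((((X : ℂ[X]) ^ d + C c).comp (aff u u₀)).comp
              (((X : ℂ[X]) ^ d + C c).comp (aff a₃ b₃))))) :
    u = 1 ∧ u₀ = 0 := by
  set P : ℂ[X] := X ^ d + C c with hP
  have hPd : P.natDegree = d := natDegree_X_pow_add_C
  have hPM : P.Monic := monic_X_pow_add_C c (by omega)
  have hPc : P.coeff (d - 1) = 0 := by
    rw [hP, coeff_add, coeff_X_pow, if_neg (by omega : ¬ d - 1 = d), coeff_C,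
      if_neg (by omega : ¬ d - 1 = 0), add_zero]
  have hP0 : P.coeff 0 = c := by
    rw [hP, coeff_add, coeff_X_pow, if_neg (by omega : ¬ (0 : ℕ) = d), coeff_C, if_pos rfl,
      zero_add]
  have hdd : 1 ≤ d := by omega
  have hPU : (P.comp (aff u u₀)).natDegree = d := by
    rw [natDegree_comp_aff _ _ _ hu, hPd]
  have hPA : (P.comp (aff a₃ b₃)).natDegree = d := by
    rw [natDegree_comp_aff _ _ _ ha₃, hPd]
  have hPP : (P.comp P).natDegree = d * d := by rw [natDegree_comp, hPd]
  have h3' : P.comp (P.comp P) = ((aff γ δ).comp (P.comp (aff u u₀))).comp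
      ((P.comp (aff u u₀)).comp (P.comp (aff a₃ b₃))) := by
    rw [comp_assoc]; exact h3
  obtain ⟨l₁, m₁, hl₁, hc₁, hb₁⟩ := comp_decomp (D := d) (E := d * d) hdd
    (by nlinarith) hPd
    (by rw [natDegree_comp, natDegree_aff _ _ hγ, one_mul, hPU])
    hPP
    (by rw [natDegree_comp, hPU, hPA])
    h3'
  have h2' : P.comp P = ((aff l₁ m₁).comp (P.comp (aff u u₀))).comp
      (P.comp (aff a₃ b₃)) := by
    rw [comp_assoc]; exact hb₁
  obtain ⟨l₂, m₂, hl₂, hc₂, hb₂⟩ := comp_decomp (D := d) (E := d) hdd hdd hPd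
    (by rw [natDegree_comp, natDegree_aff _ _ hl₁, one_mul, hPU])
    hPd hPA h2'
  obtain ⟨hb₃0, hl₂a₃, _, hconst₂⟩ :=
    sym_structure hd hPd hPM hPc hl₂ ha₃ hb₂.symm
  rw [hP0] at hconst₂
  -- convert hc₂ to Sh form
  rw [hP, pow_comp_aff hd c u u₀ hu, pow_comp_aff hd c l₂ m₂ hl₂, aff_comp_Sh] at hc₂
  have hud : u ^ d ≠ 0 := pow_ne_zero _ hu
  obtain ⟨e_a, e_w, e_b⟩ := Sh_inj hd (mul_ne_zero hl₁ hud) hc₂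
  have hl₂u : l₂ = u := by
    have h1 : u₀ * l₂ = m₂ * u := by
      field_simp at e_w
      linear_combination e_w
    -- u₀ = c - u*c, m₂ = c - l₂*c
    have h2 : (c - u * c) * l₂ = (c - l₂ * c) * u := by
      rw [show c - u * c = u₀ by linear_combination hu₀.symm,
        show c - l₂ * c = m₂ by linear_combination hconst₂.symm]
      exact h1
    have h3 : c * (l₂ - u) = 0 := by ring_nf; linear_combination h2
    rcases mul_eq_zero.mp h3 with h | h
    · exact absurd h hc
    · exact sub_eq_zero.mp h
  have hl₁1 : l₁ = 1 := by
    rw [hl₂u] at e_a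
    field_simp at e_a
    exact e_a
  have hm₁0 : m₁ = 0 := by
    rw [hl₁1, one_mul] at e_b
    linear_combination e_b
  rw [hl₁1, hm₁0, aff_one_zero, comp_X, hP, pow_comp_aff hd c u u₀ hu, aff_comp_Sh,
    Sh_one_zero] at hc₁
  obtain ⟨f_a, f_w, f_b⟩ := Sh_inj hd (mul_ne_zero hγ hud) hc₁
  have hu₀0 : u₀ = 0 := by
    rcases div_eq_zero_iff.mp f_w with h | h
    · exact h
    · exact absurd h hu
  refine ⟨?_, hu₀0⟩
  rw [hu₀0, add_zero] at hu₀
  exact mul_right_cancel₀ hc (by rw [hu₀, one_mul])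

lemma key_step {P Q : ℂ[X]} {d : ℕ} (hd : 2 ≤ d) (hPd : P.natDegree = d) (hPM : P.Monic)
    (hPc : P.coeff (d - 1) = 0) (hQd : Q.natDegree = d)
    {a b c e : ℂ} (ha : a ≠ 0) (hcne : c ≠ 0)
    (h2 : P.comp P = (aff c e).comp ((Q.comp Q).comp (aff a b))) :
    ∃ (v u u₀ l m : ℂ), v ≠ 0 ∧ u ≠ 0 ∧ l ≠ 0 ∧
      u * v ^ d = 1 ∧
      (∀ k, 1 ≤ k → k ≤ d - 1 → P.coeff k * (u * v ^ k - 1) = 0) ∧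
      u * P.coeff 0 + u₀ = P.coeff 0 ∧
      (aff l m).comp Q = ((aff u u₀).comp P).comp (aff l m) := by
  have hdd : 1 ≤ d := by omega
  have h2' : P.comp P = ((aff c e).comp Q).comp (Q.comp (aff a b)) := by
    have h2'' := h2
    simp only [comp_assoc] at h2'' ⊢
    exact h2''
  obtain ⟨l, m, hl, hcc, hbb⟩ := comp_decomp (D := d) (E := d) hdd hdd hPd
    (by rw [natDegree_comp, natDegree_aff _ _ hcne, one_mul, hQd]) hPd
    (by rw [natDegree_comp, natDegree_aff _ _ ha, hQd, mul_one]) h2'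
  have hQeq : Q = (aff c⁻¹ (-(c⁻¹*e))).comp (P.comp (aff l m)) := by
    rw [← hcc, ← comp_assoc, aff_inv_left _ _ hcne, X_comp]
  set u := l * c⁻¹ with hu_def
  set u₀ := l * -(c⁻¹*e) + m with hu₀_def
  set v := l * a with hv_def
  set v₀ := l * b + m with hv₀_def
  have hu : u ≠ 0 := mul_ne_zero hl (inv_ne_zero hcne)
  have hv : v ≠ 0 := mul_ne_zero hl ha
  have hsym : (aff u u₀).comp (P.comp (aff v v₀)) = P := by
    rw [hu_def, hu₀_def, hv_def, hv₀_def, ← aff_aff l m c⁻¹ (-(c⁻¹*e)), ← aff_aff l m a b]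
    calc ((aff l m).comp (aff c⁻¹ (-(c⁻¹*e)))).comp (P.comp ((aff l m).comp (aff a b)))
        = (aff l m).comp (((aff c⁻¹ (-(c⁻¹*e))).comp (P.comp (aff l m))).comp (aff a b)) := by
          simp only [comp_assoc]
      _ = (aff l m).comp (Q.comp (aff a b)) := by rw [← hQeq]
      _ = P := hbb.symm
  obtain ⟨hv₀0, huv, hmid, hconst⟩ := sym_structure hd hPd hPM hPc hu hv hsym
  refine ⟨v, u, u₀, l, m, hv, hu, hl, huv, hmid, hconst, ?_⟩
  rw [hQeq, hu_def, hu₀_def, ← aff_aff l m c⁻¹ (-(c⁻¹*e))]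
  simp only [comp_assoc]

lemma normalize_poly {P : ℂ[X]} {d : ℕ} (hd : 2 ≤ d) (hPd : P.natDegree = d) :
    ∃ (t s : ℂ) (Ph : ℂ[X]), t ≠ 0 ∧
      Ph = (aff t⁻¹ (-(t⁻¹*s))).comp (P.comp (aff t s)) ∧
      Ph.natDegree = d ∧ Ph.Monic ∧ Ph.coeff (d - 1) = 0 := by
  have hPne : P ≠ 0 := fun h0 => by rw [h0] at hPd; simp at hPd; omega
  have hα : P.leadingCoeff ≠ 0 := leadingCoeff_ne_zero.mpr hPne
  have hdC : (d : ℂ) ≠ 0 := Nat.cast_ne_zero.mpr (by omega)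
  obtain ⟨t, ht⟩ := IsAlgClosed.exists_pow_nat_eq (k := ℂ) P.leadingCoeff⁻¹
    (n := d - 1) (by omega)
  have htne : t ≠ 0 := by
    intro h0
    rw [h0, zero_pow (by omega : d - 1 ≠ 0)] at ht
    exact inv_ne_zero hα ht.symm
  set s := -(P.coeff (d-1) / ((d : ℂ) * P.leadingCoeff)) with hs_def
  set W := P.comp (aff t s) with hW
  set Ph := (aff t⁻¹ (-(t⁻¹*s))).comp W with hPh
  have hWd : W.natDegree = d := by rw [hW, natDegree_comp_aff _ _ _ htne, hPd]
  have hPhd : Ph.natDegree = d := by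
    rw [hPh, natDegree_comp, natDegree_aff _ _ (inv_ne_zero htne), one_mul, hWd]
  have hPhco : ∀ j, Ph.coeff j = t⁻¹ * W.coeff j + (if j = 0 then -(t⁻¹*s) else 0) := by
    intro j
    rw [hPh, aff_comp, coeff_add, coeff_C_mul, coeff_C]
  have hcoeffd : Ph.coeff d = 1 := by
    rw [hPhco d, if_neg (by omega : ¬ d = 0), add_zero, hW]
    have : W.coeff d = P.leadingCoeff * t ^ d := by
      rw [hW, ← hPd]
      exact coeff_comp_aff_natDegree P t s htne
    rw [hW] at this
    rw [this]
    have htd : t ^ d = t ^ (d - 1) * t := by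
      rw [← pow_succ]; congr 1; omega
    rw [htd, ht]
    field_simp
  have hPhM : Ph.Monic := by
    unfold Monic leadingCoeff
    rw [hPhd, hcoeffd]
  have hPhc : Ph.coeff (d - 1) = 0 := by
    rw [hPhco (d-1), if_neg (by omega : ¬ d - 1 = 0), add_zero, hW]
    have h1 : (P.comp (aff t s)).coeff (P.natDegree - 1)
        = P.coeff (P.natDegree - 1) * t ^ (P.natDegree - 1)
          + P.leadingCoeff * (P.natDegree : ℂ) * t ^ (P.natDegree - 1) * s :=
      coeff_comp_aff_subone P t s htne (by omega)
    rw [hPd] at h1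
    rw [h1, hs_def]
    field_simp
    ring
  exact ⟨t, s, Ph, htne, rfl, hPhd, hPhM, hPhc⟩

lemma eq_pow_add_C {P : ℂ[X]} {d : ℕ} (hd : 2 ≤ d) (hPd : P.natDegree = d) (hPM : P.Monic)
    (hPc : P.coeff (d - 1) = 0) (hmid : ∀ k, 1 ≤ k → k ≤ d - 2 → P.coeff k = 0) :
    P = X ^ d + C (P.coeff 0) := by
  apply Polynomial.ext
  intro j
  rw [coeff_add, coeff_X_pow, coeff_C]
  by_cases hj0 : j = 0
  · subst hj0
    rw [if_neg (by omega : ¬ (0:ℕ) = d), if_pos rfl, zero_add]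
  · rw [if_neg hj0, add_zero]
    by_cases hjd : j = d
    · subst hjd
      rw [if_pos rfl, ← hPd]
      exact hPM.coeff_natDegree
    · rw [if_neg hjd]
      rcases lt_or_gt_of_ne hjd with h | h
      · rcases eq_or_ne j (d - 1) with h' | h'
        · rw [h']; exact hPc
        · exact hmid j (by omega) (by omega)
      · exact coeff_eq_zero_of_natDegree_lt (by omega)

lemma master {Ph Q : ℂ[X]} {d : ℕ} (hd : 2 ≤ d) (hPhd : Ph.natDegree = d) (hPhM : Ph.Monic)
    (hPhc : Ph.coeff (d - 1) = 0) (hQd : Q.natDegree = d)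
    {a₂ b₂ c₂ e₂ a₃ b₃ c₃ e₃ : ℂ} (ha₂ : a₂ ≠ 0) (hc₂ : c₂ ≠ 0) (ha₃ : a₃ ≠ 0) (hc₃ : c₃ ≠ 0)
    (h2 : Ph.comp Ph = (aff c₂ e₂).comp ((Q.comp Q).comp (aff a₂ b₂)))
    (h3 : Ph.comp (Ph.comp Ph) = (aff c₃ e₃).comp ((Q.comp (Q.comp Q)).comp (aff a₃ b₃))) :
    ∃ v g₁ g₂ : ℂ, v ≠ 0 ∧ g₁ ≠ 0 ∧
      (aff g₁ g₂).comp Q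
        = ((aff ((v^d)⁻¹) (Ph.coeff 0 * (1 - (v^d)⁻¹))).comp Ph).comp (aff g₁ g₂) ∧
      (∀ k, 1 ≤ k → k ≤ d - 1 → Ph.coeff k * ((v^d)⁻¹ * v^k - 1) = 0) ∧
      ((∀ k, 1 ≤ k → k ≤ d - 2 → Ph.coeff k = 0) → Ph.coeff 0 ≠ 0 → v ^ d = 1) := by
  obtain ⟨v, u, u₀, l, m, hv, hu, hl, huv, hmid, hconst, hconj⟩ :=
    key_step hd hPhd hPhM hPhc hQd ha₂ hc₂ h2
  have hvd : v ^ d ≠ 0 := pow_ne_zero _ hv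
  have hu_eq : u = (v ^ d)⁻¹ := eq_inv_of_mul_eq_one_left huv
  have hu₀_eq : u₀ = Ph.coeff 0 * (1 - (v ^ d)⁻¹) := by
    rw [← hu_eq]; linear_combination hconst
  refine ⟨v, l, m, hv, hl, ?_, ?_, ?_⟩
  · rw [← hu₀_eq, ← hu_eq]; exact hconj
  · intro k h1 h2'
    rw [← hu_eq]; exact hmid k h1 h2'
  · -- pure power case via caseB
    intro hmm hc0
    set c : ℂ := Ph.coeff 0 with hc
    have hPow : Ph = X ^ d + C c := eq_pow_add_C hd hPhd hPhM hPhc hmm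
    -- iterate conjugation
    have step : ∀ S : ℂ[X], (aff l m).comp (Q.comp S)
        = ((aff u u₀).comp Ph).comp ((aff l m).comp S) := by
      intro S
      calc (aff l m).comp (Q.comp S) = ((aff l m).comp Q).comp S := (comp_assoc _ _ _).symm
        _ = (((aff u u₀).comp Ph).comp (aff l m)).comp S := by rw [hconj]
        _ = ((aff u u₀).comp Ph).comp ((aff l m).comp S) := comp_assoc _ _ _
    have e1 : (aff l m).comp (Q.comp (Q.comp Q))
        = ((aff u u₀).comp Ph).comp (((aff u u₀).comp Ph).comp
            (((aff u u₀).comp Ph).comp (aff l m))) := by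
      rw [step, step, hconj]
    have e2 : Q.comp (Q.comp Q)
        = (aff l⁻¹ (-(l⁻¹*m))).comp (((aff u u₀).comp Ph).comp (((aff u u₀).comp Ph).comp
            (((aff u u₀).comp Ph).comp (aff l m)))) := by
      rw [← e1,
        show (aff l⁻¹ (-(l⁻¹ * m))).comp ((aff l m).comp (Q.comp (Q.comp Q)))
            = ((aff l⁻¹ (-(l⁻¹ * m))).comp (aff l m)).comp (Q.comp (Q.comp Q)) from
          (comp_assoc _ _ _).symm, aff_inv_left _ _ hl, X_comp]
    have e3 : Ph.comp (Ph.comp Ph)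
        = (aff (c₃*(l⁻¹*u)) (c₃*(l⁻¹*u₀ + -(l⁻¹*m)) + e₃)).comp
            ((Ph.comp (aff u u₀)).comp ((Ph.comp (aff u u₀)).comp
              (Ph.comp (aff (l*a₃) (l*b₃+m))))) := by
      rw [show aff (c₃*(l⁻¹*u)) (c₃*(l⁻¹*u₀ + -(l⁻¹*m)) + e₃)
            = (aff c₃ e₃).comp ((aff l⁻¹ (-(l⁻¹*m))).comp (aff u u₀)) by
          rw [aff_aff, aff_aff],
        show aff (l*a₃) (l*b₃+m) = (aff l m).comp (aff a₃ b₃) from (aff_aff _ _ _ _).symm]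
      have h3' := h3
      rw [e2] at h3'
      rw [h3']
      simp only [comp_assoc]
    rw [hPow] at e3
    have hΓ : c₃*(l⁻¹*u) ≠ 0 := mul_ne_zero hc₃ (mul_ne_zero (inv_ne_zero hl) hu)
    have hA : l*a₃ ≠ 0 := mul_ne_zero hl ha₃
    have hconst' : u * c + u₀ = c := hconst
    obtain ⟨hu1, hu₀0⟩ := caseB hd hc0 hu hΓ hA hconst' e3
    rw [hu1, one_mul] at huv
    exact huv

lemma sim2_poly {P Q : ℂ[X]}
    (h : simAffine ((fun z => P.eval z)^[2]) ((fun z => Q.eval z)^[2])) :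
    ∃ a b c e : ℂ, a ≠ 0 ∧ c ≠ 0 ∧
      P.comp P = (aff c e).comp ((Q.comp Q).comp (aff a b)) := by
  obtain ⟨a, b, c, e, ha, hc, hz⟩ := h
  refine ⟨a, b, c, e, ha, hc, Polynomial.funext fun z => ?_⟩
  have hz' := hz z
  simp only [Function.iterate_succ_apply', Function.iterate_zero_apply] at hz'
  simp only [eval_comp, aff_eval]
  exact hz'

lemma sim3_poly {P Q : ℂ[X]}
    (h : simAffine ((fun z => P.eval z)^[3]) ((fun z => Q.eval z)^[3])) :
    ∃ a b c e : ℂ, a ≠ 0 ∧ c ≠ 0 ∧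
      P.comp (P.comp P) = (aff c e).comp ((Q.comp (Q.comp Q)).comp (aff a b)) := by
  obtain ⟨a, b, c, e, ha, hc, hz⟩ := h
  refine ⟨a, b, c, e, ha, hc, Polynomial.funext fun z => ?_⟩
  have hz' := hz z
  simp only [Function.iterate_succ_apply', Function.iterate_zero_apply] at hz'
  simp only [eval_comp, aff_eval]
  exact hz'

lemma conj_comp (p q : ℂ[X]) (t s : ℂ) (ht : t ≠ 0) :
    ((aff t⁻¹ (-(t⁻¹*s))).comp (p.comp (aff t s))).comp
        ((aff t⁻¹ (-(t⁻¹*s))).comp (q.comp (aff t s)))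
      = (aff t⁻¹ (-(t⁻¹*s))).comp ((p.comp q).comp (aff t s)) := by
  calc ((aff t⁻¹ (-(t⁻¹*s))).comp (p.comp (aff t s))).comp
        ((aff t⁻¹ (-(t⁻¹*s))).comp (q.comp (aff t s)))
      = (aff t⁻¹ (-(t⁻¹*s))).comp (p.comp ((((aff t s)).comp (aff t⁻¹ (-(t⁻¹*s)))).comp
          (q.comp (aff t s)))) := by simp only [comp_assoc]
    _ = (aff t⁻¹ (-(t⁻¹*s))).comp ((p.comp q).comp (aff t s)) := by
        rw [aff_inv_right _ _ ht, X_comp]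
        simp only [comp_assoc]

lemma pow_twist {d : ℕ} {Ph : ℂ[X]} {r u : ℂ} (hPh : Ph = X ^ d) (hru : r * u = r ^ d) :
    (aff r 0).comp ((aff u 0).comp Ph) = Ph.comp (aff r 0) := by
  subst hPh
  rw [aff_comp, aff_comp, pow_comp, X_comp]
  simp only [C_0, add_zero, aff, mul_pow, ← C_pow, ← mul_assoc, ← C_mul, hru]

lemma conj_eval {Q R : ℂ[X]} {g₁ g₂ : ℂ}
    (h : (aff g₁ g₂).comp Q = R.comp (aff g₁ g₂)) (z : ℂ) :
    g₁ * Q.eval z + g₂ = R.eval (g₁ * z + g₂) := by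
  have := congrArg (fun P : ℂ[X] => P.eval z) h
  simpa only [eval_comp, aff_eval] using this

/-- Each strong equivalence class (i.e. `f^n ∼ g^n` for all `n ≥ 1`)
consists of finitely many affine conjugacy classes: there are finitely many degree `d`
polynomials `g₁,…,g_m` such that every degree `d` polynomial strongly equivalent to `f`
is affinely conjugate to some `gᵢ`. -/
theorem stmt9 (d : ℕ) (hd : 2 ≤ d) (p : Polynomial ℂ) (hp : p.natDegree = d) :
    ∃ (m : ℕ) (gs : Fin m → Polynomial ℂ),
      (∀ i, (gs i).natDegree = d) ∧
      ∀ q : Polynomial ℂ, q.natDegree = d →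
        (∀ n : ℕ, 1 ≤ n →
          simAffine ((fun z => p.eval z)^[n]) ((fun z => q.eval z)^[n])) →
        ∃ (i : Fin m) (a b : ℂ), a ≠ 0 ∧
          ∀ z : ℂ, a * q.eval z + b = (gs i).eval (a * z + b) := by
  classical
  obtain ⟨t, s, Ph, ht, hPh, hPhd, hPhM, hPhc⟩ := normalize_poly hd hp
  have hPh2 : Ph.comp Ph = (aff t⁻¹ (-(t⁻¹*s))).comp ((p.comp p).comp (aff t s)) := by
    rw [hPh]; exact conj_comp p p t s ht
  have hPh3 : Ph.comp (Ph.comp Ph)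
      = (aff t⁻¹ (-(t⁻¹*s))).comp ((p.comp (p.comp p)).comp (aff t s)) := by
    rw [hPh2, hPh]; exact conj_comp p (p.comp p) t s ht
  by_cases hA : ∃ k, 1 ≤ k ∧ k ≤ d - 2 ∧ Ph.coeff k ≠ 0
  · -- Case A : some middle coefficient nonzero
    obtain ⟨k₀, hk₁, hk₂, hk₃⟩ := hA
    set D := d - k₀ with hD_def
    have hD : 0 < D := by omega
    set vs := Polynomial.nthRootsFinset D (1 : ℂ) with hvs
    refine ⟨vs.card, fun i => (aff (((vs.equivFin.symm i : ℂ))^d)⁻¹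
        (Ph.coeff 0 * (1 - ((vs.equivFin.symm i : ℂ)^d)⁻¹))).comp Ph, ?_, ?_⟩
    · intro i
      have hw : ((vs.equivFin.symm i : ℂ))^D = 1 :=
        (Polynomial.mem_nthRootsFinset hD (1 : ℂ)).mp (vs.equivFin.symm i).2
      have hwne : ((vs.equivFin.symm i : ℂ)) ≠ 0 := by
        intro h0; rw [h0, zero_pow (by omega : D ≠ 0)] at hw; exact one_ne_zero hw.symm
      rw [natDegree_comp, natDegree_aff _ _ (inv_ne_zero (pow_ne_zero _ hwne)), one_mul, hPhd]
    · intro q hq hsim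
      obtain ⟨a₂, b₂, c₂, e₂, ha₂, hc₂, h2p⟩ := sim2_poly (hsim 2 (by norm_num))
      obtain ⟨a₃, b₃, c₃, e₃, ha₃, hc₃, h3p⟩ := sim3_poly (hsim 3 (by norm_num))
      have h2hat : Ph.comp Ph = (aff (t⁻¹*c₂) (t⁻¹*e₂ + -(t⁻¹*s))).comp
          ((q.comp q).comp (aff (a₂*t) (a₂*s+b₂))) := by
        rw [show aff (t⁻¹*c₂) (t⁻¹*e₂ + -(t⁻¹*s)) = (aff t⁻¹ (-(t⁻¹*s))).comp (aff c₂ e₂)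
              from by rw [aff_aff],
          show aff (a₂*t) (a₂*s+b₂) = (aff a₂ b₂).comp (aff t s) from by rw [aff_aff],
          hPh2, h2p]
        simp only [comp_assoc]
      have h3hat : Ph.comp (Ph.comp Ph) = (aff (t⁻¹*c₃) (t⁻¹*e₃ + -(t⁻¹*s))).comp
          ((q.comp (q.comp q)).comp (aff (a₃*t) (a₃*s+b₃))) := by
        rw [show aff (t⁻¹*c₃) (t⁻¹*e₃ + -(t⁻¹*s)) = (aff t⁻¹ (-(t⁻¹*s))).comp (aff c₃ e₃)
              from by rw [aff_aff],
          show aff (a₃*t) (a₃*s+b₃) = (aff a₃ b₃).comp (aff t s) from by rw [aff_aff],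
          hPh3, h3p]
        simp only [comp_assoc]
      obtain ⟨v, g₁, g₂, hv, hg₁, hconj, hmid, _⟩ := master hd hPhd hPhM hPhc hq
        (mul_ne_zero ha₂ ht) (mul_ne_zero (inv_ne_zero ht) hc₂)
        (mul_ne_zero ha₃ ht) (mul_ne_zero (inv_ne_zero ht) hc₃) h2hat h3hat
      have hvd : v ^ d ≠ 0 := pow_ne_zero _ hv
      have hvD : v ^ D = 1 := by
        have h1 := hmid k₀ (by omega) (by omega)
        have h2 : (v ^ d)⁻¹ * v ^ k₀ - 1 = 0 := by
          rcases mul_eq_zero.mp h1 with h | h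
          · exact absurd h hk₃
          · exact h
        have h3 : v ^ k₀ = v ^ d := by
          field_simp at h2
          linear_combination h2
        have h4 : v ^ d = v ^ k₀ * v ^ D := by
          rw [← pow_add]; congr 1; omega
        rw [h3] at h4
        exact (mul_left_cancel₀ hvd (by rw [← h4, mul_one])).symm
      have hvmem : v ∈ vs := (Polynomial.mem_nthRootsFinset hD (1 : ℂ)).mpr hvD
      have hwi : ((vs.equivFin.symm (vs.equivFin ⟨v, hvmem⟩) : ℂ)) = v := by
        rw [Equiv.symm_apply_apply]
      rw [← hwi] at hconj
      exact ⟨vs.equivFin ⟨v, hvmem⟩, g₁, g₂, hg₁, fun z => conj_eval hconj z⟩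
  · -- Case B : pure power like
    push_neg at hA
    have hmm : ∀ k, 1 ≤ k → k ≤ d - 2 → Ph.coeff k = 0 := hA
    have hD : 0 < d := by omega
    set vs := Polynomial.nthRootsFinset d (1 : ℂ) with hvs
    refine ⟨vs.card, fun i => (aff (((vs.equivFin.symm i : ℂ))^d)⁻¹
        (Ph.coeff 0 * (1 - ((vs.equivFin.symm i : ℂ)^d)⁻¹))).comp Ph, ?_, ?_⟩
    · intro i
      have hw : ((vs.equivFin.symm i : ℂ))^d = 1 :=
        (Polynomial.mem_nthRootsFinset hD (1 : ℂ)).mp (vs.equivFin.symm i).2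
      have hwne : ((vs.equivFin.symm i : ℂ)) ≠ 0 := by
        intro h0; rw [h0, zero_pow (by omega : d ≠ 0)] at hw; exact one_ne_zero hw.symm
      rw [natDegree_comp, natDegree_aff _ _ (inv_ne_zero (pow_ne_zero _ hwne)), one_mul, hPhd]
    · intro q hq hsim
      obtain ⟨a₂, b₂, c₂, e₂, ha₂, hc₂, h2p⟩ := sim2_poly (hsim 2 (by norm_num))
      obtain ⟨a₃, b₃, c₃, e₃, ha₃, hc₃, h3p⟩ := sim3_poly (hsim 3 (by norm_num))
      have h2hat : Ph.comp Ph = (aff (t⁻¹*c₂) (t⁻¹*e₂ + -(t⁻¹*s))).comp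
          ((q.comp q).comp (aff (a₂*t) (a₂*s+b₂))) := by
        rw [show aff (t⁻¹*c₂) (t⁻¹*e₂ + -(t⁻¹*s)) = (aff t⁻¹ (-(t⁻¹*s))).comp (aff c₂ e₂)
              from by rw [aff_aff],
          show aff (a₂*t) (a₂*s+b₂) = (aff a₂ b₂).comp (aff t s) from by rw [aff_aff],
          hPh2, h2p]
        simp only [comp_assoc]
      have h3hat : Ph.comp (Ph.comp Ph) = (aff (t⁻¹*c₃) (t⁻¹*e₃ + -(t⁻¹*s))).comp
          ((q.comp (q.comp q)).comp (aff (a₃*t) (a₃*s+b₃))) := by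
        rw [show aff (t⁻¹*c₃) (t⁻¹*e₃ + -(t⁻¹*s)) = (aff t⁻¹ (-(t⁻¹*s))).comp (aff c₃ e₃)
              from by rw [aff_aff],
          show aff (a₃*t) (a₃*s+b₃) = (aff a₃ b₃).comp (aff t s) from by rw [aff_aff],
          hPh3, h3p]
        simp only [comp_assoc]
      obtain ⟨v, g₁, g₂, hv, hg₁, hconj, hmid, hextra⟩ := master hd hPhd hPhM hPhc hq
        (mul_ne_zero ha₂ ht) (mul_ne_zero (inv_ne_zero ht) hc₂)
        (mul_ne_zero ha₃ ht) (mul_ne_zero (inv_ne_zero ht) hc₃) h2hat h3hat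
      have hvd : v ^ d ≠ 0 := pow_ne_zero _ hv
      rcases ne_or_eq (Ph.coeff 0) 0 with hc0 | hc0
      · -- coeff 0 ≠ 0 : rigid case, v^d = 1
        have hvD : v ^ d = 1 := hextra hmm hc0
        have hvmem : v ∈ vs := (Polynomial.mem_nthRootsFinset hD (1 : ℂ)).mpr hvD
        have hwi : ((vs.equivFin.symm (vs.equivFin ⟨v, hvmem⟩) : ℂ)) = v := by
          rw [Equiv.symm_apply_apply]
        rw [← hwi] at hconj
        exact ⟨vs.equivFin ⟨v, hvmem⟩, g₁, g₂, hg₁, fun z => conj_eval hconj z⟩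
      · -- Ph = X^d : everything is conjugate to Ph itself
        have hPow : Ph = X ^ d := by
          have h0 := eq_pow_add_C hd hPhd hPhM hPhc hmm
          rw [hc0, map_zero, add_zero] at h0; exact h0
        rw [show Ph.coeff 0 * (1 - (v^d)⁻¹) = 0 from by rw [hc0, zero_mul]] at hconj
        obtain ⟨r, hr⟩ := IsAlgClosed.exists_pow_nat_eq (k := ℂ) ((v^d)⁻¹)
          (n := d - 1) (by omega)
        have hrne : r ≠ 0 := by
          intro h0
          rw [h0, zero_pow (by omega : d - 1 ≠ 0)] at hr
          exact (inv_ne_zero hvd) hr.symm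
        have hru : r * (v^d)⁻¹ = r ^ d := by
          rw [← hr, ← pow_succ']
          congr 1
          omega
        have hkey : (aff (r*g₁) (r*g₂)).comp q = Ph.comp (aff (r*g₁) (r*g₂)) := by
          rw [show aff (r*g₁) (r*g₂) = (aff r 0).comp (aff g₁ g₂) from by
            rw [aff_aff, add_zero]]
          calc ((aff r 0).comp (aff g₁ g₂)).comp q
              = (aff r 0).comp ((aff g₁ g₂).comp q) := comp_assoc _ _ _
            _ = (aff r 0).comp (((aff ((v^d)⁻¹) 0).comp Ph).comp (aff g₁ g₂)) := by
                rw [hconj]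
            _ = ((aff r 0).comp ((aff ((v^d)⁻¹) 0).comp Ph)).comp (aff g₁ g₂) :=
                (comp_assoc _ _ _).symm
            _ = (Ph.comp (aff r 0)).comp (aff g₁ g₂) := by rw [pow_twist hPow hru]
            _ = Ph.comp ((aff r 0).comp (aff g₁ g₂)) := comp_assoc _ _ _
        have h1mem : (1 : ℂ) ∈ vs := (Polynomial.mem_nthRootsFinset hD (1 : ℂ)).mpr (one_pow d)
        have hwi : ((vs.equivFin.symm (vs.equivFin ⟨1, h1mem⟩) : ℂ)) = 1 := by
          rw [Equiv.symm_apply_apply]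
        refine ⟨vs.equivFin ⟨1, h1mem⟩, r*g₁, r*g₂, mul_ne_zero hrne hg₁, fun z => ?_⟩
        have hgs : (aff (((vs.equivFin.symm (vs.equivFin ⟨1, h1mem⟩) : ℂ))^d)⁻¹
            (Ph.coeff 0 * (1 - ((vs.equivFin.symm (vs.equivFin ⟨1, h1mem⟩) : ℂ)^d)⁻¹))).comp Ph
            = Ph := by
          rw [hwi, one_pow, inv_one, sub_self, mul_zero, aff_one_zero, X_comp]
        have hkey' : (aff (r*g₁) (r*g₂)).comp q
            = ((aff (((vs.equivFin.symm (vs.equivFin ⟨1, h1mem⟩) : ℂ))^d)⁻¹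
                (Ph.coeff 0 * (1 - ((vs.equivFin.symm (vs.equivFin ⟨1, h1mem⟩) : ℂ)^d)⁻¹))).comp
                Ph).comp (aff (r*g₁) (r*g₂)) := by
          rw [hgs]; exact hkey
        exact conj_eval hkey' z
end

section
/- Let f : ℂ → ℂ be an entire function, p ∈ ℂ, and k ≥ 2 an integer such that the derivative f' has a zero of order exactly k − 1 at p (i.e., the j-th derivative f^{(j)}(p) = 0 for 1 ≤ j ≤ k − 1 and f^{(k)}(p) ≠ 0; equivalently, f has a critical point of local degree k at p). Then (z − p)²·S_f(z) → (1 − k²)/2 as z → p (through points z near p with f'(z) ≠ 0). In particular, the Schwarzian derivative S_f dz² has a pole of order exactly two at p with leading coefficient (1 − k²)/2. -/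
open Filter Topology MeasureTheory Set

private lemma aux_pow (w : ℂ) (hw : w ≠ 0) (n : ℕ) : (n : ℂ) * w ^ (n - 1) = n * w ^ n / w := by
  cases n with
  | zero => simp
  | succ m =>
    rw [Nat.add_sub_cancel, pow_succ, mul_div_assoc, mul_div_assoc, div_self hw, mul_one]

/-- Factorization of the derivative at a critical point of local degree `n + 2`. -/
private lemma factor_deriv (f : ℂ → ℂ) (hf : Differentiable ℂ f) (p : ℂ) (n : ℕ)
    (hvanish : ∀ j : ℕ, 1 ≤ j → j ≤ n + 1 → iteratedDeriv j f p = 0)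
    (hknz : iteratedDeriv (n + 2) f p ≠ 0) :
    ∃ g : ℂ → ℂ, AnalyticAt ℂ g p ∧ g p ≠ 0 ∧
      ∀ᶠ z in 𝓝 p, deriv f z = (z - p) ^ (n + 1) * g z := by
  have hfa : AnalyticOnNhd ℂ f Set.univ := fun z _ => hf.analyticAt z
  have hFan : AnalyticAt ℂ (deriv f) p := hfa.deriv p (Set.mem_univ p)
  obtain ⟨q, hq⟩ := hFan
  obtain ⟨r, hr⟩ := hq
  have hcoeff : ∀ j : ℕ, ((j.factorial : ℕ) : ℂ) * q.coeff j = iteratedDeriv (j + 1) f p := by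
    intro j
    have h1 := hr.factorial_smul (y := (1 : ℂ)) j
    rw [← iteratedDeriv_eq_iteratedFDeriv] at h1
    rw [iteratedDeriv_succ', ← h1, nsmul_eq_mul]
    rfl
  have hqm : q (n + 1) ≠ 0 := by
    intro h
    exact hknz (by rw [← hcoeff (n + 1), FormalMultilinearSeries.coeff_eq_zero.mpr h, mul_zero])
  have hq0 : q ≠ 0 := fun h => hqm (by simp [h])
  have hqlow : ∀ j ≤ n, q j = 0 := by
    intro j hj
    rw [← FormalMultilinearSeries.coeff_eq_zero]
    have h2 := hcoeff j
    rw [hvanish (j + 1) (by omega) (by omega)] at h2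
    exact (mul_eq_zero.mp h2).resolve_left (by exact_mod_cast j.factorial_ne_zero)
  have horder : q.order = n + 1 := by
    refine le_antisymm (Nat.sInf_le hqm) ?_
    by_contra h
    exact q.apply_order_ne_zero hq0 (hqlow q.order (by omega))
  have hq' : HasFPowerSeriesAt (deriv f) q p := ⟨r, hr⟩
  have h5 := hq'.eq_pow_order_mul_iterate_dslope
  have h6 := hq'.iterate_dslope_fslope_ne_zero hq0
  rw [horder] at h5 h6
  refine ⟨_, ⟨_, hq'.has_fpower_series_iterate_dslope_fslope (n + 1)⟩, h6, ?_⟩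
  exact Filter.Eventually.of_forall (by simpa [smul_eq_mul] using h5)

set_option maxHeartbeats 2000000 in
private lemma stmt11_core (f : ℂ → ℂ) (p : ℂ) (n : ℕ) (g : ℂ → ℂ)
    (hgan : AnalyticAt ℂ g p) (hgp : g p ≠ 0)
    (hFg : ∀ᶠ z in 𝓝 p, deriv f z = (z - p) ^ (n + 1) * g z) :
    Tendsto (fun z : ℂ => (z - p) ^ 2 * schwarzian f z)
      (𝓝[{z : ℂ | z ≠ p ∧ deriv f z ≠ 0}] p)
      (𝓝 ((1 - ((n : ℂ) + 2) ^ 2) / 2)) := by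
  obtain ⟨U, hUmem, hU⟩ := hgan.exists_mem_nhds_analyticOnNhd
  have hUopen : ∀ᶠ z in 𝓝 p, z ∈ U := hUmem
  have hU1 : AnalyticOnNhd ℂ (deriv g) U := hU.deriv
  have hU2 : AnalyticOnNhd ℂ (deriv (deriv g)) U := hU1.deriv
  set F2 : ℂ → ℂ := fun z => (n + 1 : ℂ) * (z - p) ^ n * g z + (z - p) ^ (n + 1) * deriv g z
    with hF2def
  have e2 : deriv (deriv f) =ᶠ[𝓝 p] F2 := by
    refine (Filter.EventuallyEq.deriv hFg).trans ?_
    filter_upwards [hUopen] with z hz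
    have hpow : HasDerivAt (fun w : ℂ => (w - p) ^ (n + 1)) ((n + 1 : ℂ) * (z - p) ^ n) z := by
      simpa using ((hasDerivAt_id z).sub_const p).fun_pow (n + 1)
    have hgz : HasDerivAt g (deriv g z) z := ((hU z hz).differentiableAt).hasDerivAt
    simpa [hF2def] using (hpow.fun_mul hgz).deriv
  set F3 : ℂ → ℂ := fun z => (n + 1 : ℂ) * ((n : ℂ) * (z - p) ^ (n - 1) * g z
      + (z - p) ^ n * deriv g z)
      + ((n + 1 : ℂ) * (z - p) ^ n * deriv g z + (z - p) ^ (n + 1) * deriv (deriv g) z)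
    with hF3def
  have e3 : deriv (deriv (deriv f)) =ᶠ[𝓝 p] F3 := by
    refine (Filter.EventuallyEq.deriv e2).trans ?_
    filter_upwards [hUopen] with z hz
    have hpow : HasDerivAt (fun w : ℂ => (w - p) ^ n) ((n : ℂ) * (z - p) ^ (n - 1)) z := by
      simpa using ((hasDerivAt_id z).sub_const p).fun_pow n
    have hpow1 : HasDerivAt (fun w : ℂ => (w - p) ^ (n + 1)) ((n + 1 : ℂ) * (z - p) ^ n) z := by
      simpa using ((hasDerivAt_id z).sub_const p).fun_pow (n + 1)
    have hgz : HasDerivAt g (deriv g z) z := ((hU z hz).differentiableAt).hasDerivAt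
    have hgz1 : HasDerivAt (deriv g) (deriv (deriv g) z) z :=
      ((hU1 z hz).differentiableAt).hasDerivAt
    have : HasDerivAt F2 (F3 z) z := by
      have h1 : HasDerivAt (fun w : ℂ => (n + 1 : ℂ) * (w - p) ^ n * g w)
          ((n + 1 : ℂ) * ((n : ℂ) * (z - p) ^ (n - 1)) * g z
            + (n + 1 : ℂ) * (z - p) ^ n * deriv g z) z :=
        ((hpow.const_mul ((n : ℂ) + 1)).mul hgz)
      have h2 : HasDerivAt (fun w : ℂ => (w - p) ^ (n + 1) * deriv g w)
          ((n + 1 : ℂ) * (z - p) ^ n * deriv g z + (z - p) ^ (n + 1) * deriv (deriv g) z) z :=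
        hpow1.mul hgz1
      have := h1.fun_add h2
      refine this.congr_deriv ?_
      simp only [hF3def]
      ring
    exact this.deriv
  set E : ℂ → ℂ := fun z =>
      ((n + 1 : ℂ) * (n : ℂ) + 2 * (n + 1) * ((z - p) * (deriv g z / g z))
        + (z - p) ^ 2 * (deriv (deriv g) z / g z))
      - (3 / 2) * ((n + 1 : ℂ) + (z - p) * (deriv g z / g z)) ^ 2 with hEdef
  have hgc : ContinuousAt g p := hgan.continuousAt
  have hg1c : ContinuousAt (deriv g) p := (hU1 p (mem_of_mem_nhds hUmem)).continuousAt
  have hg2c : ContinuousAt (deriv (deriv g)) p := (hU2 p (mem_of_mem_nhds hUmem)).continuousAt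
  have hdiv1 : ContinuousAt (fun z => deriv g z / g z) p := hg1c.div hgc hgp
  have hdiv2 : ContinuousAt (fun z => deriv (deriv g) z / g z) p := hg2c.div hgc hgp
  have hEc : ContinuousAt E p := by
    apply ContinuousAt.sub
    · exact (continuousAt_const.add (continuousAt_const.mul
        ((continuousAt_id.sub continuousAt_const).mul hdiv1))).add
        (((continuousAt_id.sub continuousAt_const).pow 2).mul hdiv2)
    · exact continuousAt_const.mul ((continuousAt_const.add
        ((continuousAt_id.sub continuousAt_const).mul hdiv1)).pow 2)
  have hEp : E p = (1 - ((n : ℂ) + 2) ^ 2) / 2 := by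
    simp only [hEdef, sub_self, zero_mul, mul_zero, add_zero, zero_pow, pow_two]
    ring
  have hlim : Tendsto E (𝓝[{z : ℂ | z ≠ p ∧ deriv f z ≠ 0}] p)
      (𝓝 ((1 - ((n : ℂ) + 2) ^ 2) / 2)) := by
    rw [← hEp]
    exact hEc.continuousWithinAt.tendsto
  refine Tendsto.congr' ?_ hlim
  have hgne : ∀ᶠ z in 𝓝 p, g z ≠ 0 := hgc.eventually_ne hgp
  have hall := (hFg.and (e2.and (e3.and hgne))).filter_mono
    (nhdsWithin_le_nhds (s := {z : ℂ | z ≠ p ∧ deriv f z ≠ 0}))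
  filter_upwards [hall, self_mem_nhdsWithin] with z hz hzS
  obtain ⟨h1, h2, h3, h4⟩ := hz
  obtain ⟨hzp, -⟩ := hzS
  have hw : z - p ≠ 0 := sub_ne_zero.mpr hzp
  have i3 : iteratedDeriv 3 f = deriv (deriv (deriv f)) := by
    rw [show (3:ℕ) = 2 + 1 from rfl, iteratedDeriv_succ, show (2:ℕ) = 1 + 1 from rfl,
      iteratedDeriv_succ, iteratedDeriv_one]
  have i2 : iteratedDeriv 2 f = deriv (deriv f) := by
    rw [show (2:ℕ) = 1 + 1 from rfl, iteratedDeriv_succ, iteratedDeriv_one]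
  rw [hEdef]
  simp only [schwarzian, i3, i2, h1, h2, h3, hF2def, hF3def]
  rw [aux_pow (z - p) hw n]
  have hwn : (z - p) ^ n ≠ 0 := pow_ne_zero n hw
  simp only [pow_succ (z - p) n]
  generalize (z - p) ^ n = W at hwn ⊢
  generalize g z = G at h4 ⊢
  generalize deriv g z = G1
  generalize deriv (deriv g) z = G2
  generalize z - p = w at hw ⊢
  field_simp
  have hD : w * (W * w * G) * (2 * (W * w * G) ^ 2) ≠ 0 := by
    apply mul_ne_zero (mul_ne_zero hw (mul_ne_zero (mul_ne_zero hwn hw) h4))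
    exact mul_ne_zero two_ne_zero (pow_ne_zero _ (mul_ne_zero (mul_ne_zero hwn hw) h4))
  ring

/-- At a critical point `p` of local degree `k` of an entire function
`f`, the Schwarzian derivative has a double pole with leading coefficient `(1 - k²)/2`:
`(z - p)² S_f(z) → (1 - k²)/2` as `z → p` through points with `f'(z) ≠ 0`. -/
theorem stmt11 (f : ℂ → ℂ) (hf : Differentiable ℂ f) (p : ℂ) (k : ℕ) (hk : 2 ≤ k)
    (hvanish : ∀ j : ℕ, 1 ≤ j → j ≤ k - 1 → iteratedDeriv j f p = 0)
    (hknz : iteratedDeriv k f p ≠ 0) :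
    Tendsto (fun z : ℂ => (z - p) ^ 2 * schwarzian f z)
      (𝓝[{z : ℂ | z ≠ p ∧ deriv f z ≠ 0}] p)
      (𝓝 ((1 - (k : ℂ) ^ 2) / 2)) := by
  obtain ⟨n, rfl⟩ : ∃ n : ℕ, k = n + 2 := ⟨k - 2, by omega⟩
  obtain ⟨g, hgan, hgp, hFg⟩ := factor_deriv f hf p n
    (fun j hj1 hj2 => hvanish j hj1 (by omega)) hknz
  have := stmt11_core f p n g hgan hgp hFg
  convert this using 2
  push_cast
  ring
end

section
/- Let f be a complex polynomial of degree d ≥ 2 and let z₁ ∈ ℂ be a fixed point of f (f(z₁) = z₁) with f'(z₁) ≠ 0 and |f'(z₁)| ≤ 1 (an attracting or parabolic non-critical fixed point). Let z ∈ ℂ with z ∉ Precrit(f) and f^n(z) → z₁ as n → ∞. Then lim_{n→∞} S_{f^n}(z)/d^{2n} = 0. -/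
open Filter Topology MeasureTheory Set

section Aux
open Polynomial

lemma iteratedDeriv_polyeval (n : ℕ) (q : ℂ[X]) :
    iteratedDeriv n (fun z => q.eval z) = fun z => (derivative^[n] q).eval z := by
  induction n with
  | zero => simp
  | succ n ih =>
      rw [iteratedDeriv_succ, ih]
      funext x
      rw [Function.iterate_succ_apply']
      exact Polynomial.deriv _

/-- Schwarzian expression for polynomials. -/
noncomputable def pS (q : ℂ[X]) (w : ℂ) : ℂ :=
  (derivative (derivative (derivative q))).eval w / (derivative q).eval w
    - (3/2) * ((derivative (derivative q)).eval w / (derivative q).eval w)^2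

lemma schwarzian_polyeval (q : ℂ[X]) (w : ℂ) :
    schwarzian (fun z => q.eval z) w = pS q w := by
  have h1 := iteratedDeriv_polyeval 2 q
  have h2 := iteratedDeriv_polyeval 3 q
  simp only [schwarzian, h1, h2, Polynomial.deriv, pS]
  norm_num [Function.iterate_succ_apply', Function.iterate_succ_apply]

private lemma key_frac : ∀ a b x : ℂ, x ≠ 0 → a / x - 3/2*(b/x)^2 = (2*a*x - 3*b^2)/(2*x^2) := by
  intro a b x hx
  field_simp

lemma pS_comp (q r : ℂ[X]) (w : ℂ) (hr : (derivative r).eval w ≠ 0)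
    (hq : (derivative q).eval (r.eval w) ≠ 0) :
    pS (q.comp r) w = pS q (r.eval w) * ((derivative r).eval w)^2 + pS r w := by
  have h1 : derivative (q.comp r) = derivative r * (derivative q).comp r :=
    Polynomial.derivative_comp q r
  have h2 : derivative (derivative (q.comp r)) =
      (derivative (derivative q)).comp r * (derivative r)^2
        + (derivative q).comp r * derivative (derivative r) := by
    rw [h1]
    simp only [derivative_mul, Polynomial.derivative_comp]
    ring
  have h3 : derivative (derivative (derivative (q.comp r))) =
      (derivative (derivative (derivative q))).comp r * (derivative r)^3
        + 3 * (derivative (derivative q)).comp r * derivative r * derivative (derivative r)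
        + (derivative q).comp r * derivative (derivative (derivative r)) := by
    rw [h2]
    simp only [derivative_mul, derivative_add, Polynomial.derivative_comp, derivative_pow]
    ring_nf
    rw [show (C 2 : ℂ[X]) = 2 from map_ofNat C 2]
    ring
  have h2' : (2:ℂ) ≠ 0 := two_ne_zero
  have hD : (derivative r).eval w * (derivative q).eval (r.eval w) ≠ 0 := mul_ne_zero hr hq
  simp only [pS]
  rw [h3, h2, h1]
  simp only [Polynomial.eval_mul, Polynomial.eval_add, Polynomial.eval_pow,
    Polynomial.eval_comp, Polynomial.eval_ofNat]
  rw [key_frac _ _ _ hD, key_frac _ _ _ hq, key_frac _ _ _ hr,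
    div_mul_eq_mul_div,
    div_add_div _ _ (mul_ne_zero h2' (pow_ne_zero 2 hq)) (mul_ne_zero h2' (pow_ne_zero 2 hr)),
    div_eq_div_iff (mul_ne_zero h2' (pow_ne_zero 2 hD))
      (mul_ne_zero (mul_ne_zero h2' (pow_ne_zero 2 hq)) (mul_ne_zero h2' (pow_ne_zero 2 hr)))]
  ring

noncomputable def Qiter (p : ℂ[X]) : ℕ → ℂ[X]
  | 0 => X
  | (n+1) => p.comp (Qiter p n)

lemma Qiter_eval (p : ℂ[X]) (n : ℕ) (z : ℂ) :
    (fun z => p.eval z)^[n] z = (Qiter p n).eval z := by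
  induction n with
  | zero => simp [Qiter]
  | succ n ih =>
      rw [Function.iterate_succ_apply', ih]
      simp [Qiter, Polynomial.eval_comp]

lemma pS_Qiter_sum (p : ℂ[X]) (z : ℂ)
    (hD : ∀ k, (derivative (Qiter p k)).eval z ≠ 0) (n : ℕ) :
    pS (Qiter p n) z = ∑ k ∈ Finset.range n,
      pS p ((Qiter p k).eval z) * ((derivative (Qiter p k)).eval z)^2 := by
  induction n with
  | zero => simp [Qiter, pS]
  | succ n ih =>
      have hp' : (derivative p).eval ((Qiter p n).eval z) ≠ 0 := by
        intro h0
        apply hD (n+1)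
        show (derivative (p.comp (Qiter p n))).eval z = 0
        rw [Polynomial.derivative_comp]
        simp [Polynomial.eval_comp, h0]
      rw [show Qiter p (n+1) = p.comp (Qiter p n) from rfl,
        pS_comp p (Qiter p n) z (hD n) hp', ih, Finset.sum_range_succ]
      ring

end Aux

open Polynomial in
/-- If `z₁` is a non-critical fixed point of `f` with `|f'(z₁)| ≤ 1`
(attracting or parabolic), and `z ∉ Precrit(f)` is attracted to `z₁`, then
`S_{f^n}(z)/d^{2n} → 0`. -/
theorem stmt16 (d : ℕ) (hd : 2 ≤ d) (p : Polynomial ℂ) (hdeg : p.natDegree = d)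
    (f : ℂ → ℂ) (hf : ∀ z, f z = p.eval z)
    (z₁ : ℂ) (hfix : f z₁ = z₁) (hder : deriv f z₁ ≠ 0)
    (habs : ‖deriv f z₁‖ ≤ 1)
    (z : ℂ) (hz : z ∉ precrit f)
    (hattr : Tendsto (fun n : ℕ => f^[n] z) atTop (𝓝 z₁)) :
    Tendsto (fun n : ℕ => schwarzian (f^[n]) z / (d : ℂ) ^ (2 * n)) atTop (𝓝 0) := by
  have hfe : f = fun w => p.eval w := funext hf
  subst hfe
  set Q : ℕ → Polynomial ℂ := Qiter p with hQ
  have hiter : ∀ n : ℕ, (fun w : ℂ => p.eval w)^[n] = fun w => (Q n).eval w :=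
    fun n => funext (Qiter_eval p n)
  -- nonvanishing of the derivatives along the orbit
  have hD0 : ∀ k, (derivative (Q k)).eval z ≠ 0 := by
    intro k
    match k with
    | 0 => simp [hQ, Qiter]
    | (k+1) =>
      intro h0
      have hder0 : deriv ((fun w : ℂ => p.eval w)^[k+1]) z = 0 := by
        rw [hiter (k+1), Polynomial.deriv]; exact h0
      exact hz ⟨k+1, Nat.le_add_left 1 k, hder0⟩
  have hlam : deriv (fun w : ℂ => p.eval w) z₁ = (derivative p).eval z₁ := Polynomial.deriv _
  rw [hlam] at hder habs
  set w : ℕ → ℂ := fun k => (Q k).eval z with hwdef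
  have hw : Tendsto w atTop (𝓝 z₁) := by
    have := hattr
    simp only [Qiter_eval p] at this
    exact this
  -- eventual bound on the multiplier along the orbit
  have habs_t : Tendsto (fun k => ‖(derivative p).eval (w k)‖) atTop
      (𝓝 (‖(derivative p).eval z₁‖)) :=
    continuous_norm.continuousAt.tendsto.comp
      ((Polynomial.continuous _).continuousAt.tendsto.comp hw)
  have hev : ∀ᶠ k in atTop, ‖(derivative p).eval (w k)‖ ≤ 3/2 :=
    habs_t.eventually_le_const (lt_of_le_of_lt habs (by norm_num))
  obtain ⟨N, hN⟩ := eventually_atTop.mp hev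
  set D : ℕ → ℝ := fun k => ‖(derivative (Q k)).eval z‖ with hDdef
  have hDnonneg : ∀ k, 0 ≤ D k := fun k => norm_nonneg _
  have hrec : ∀ k, D (k+1) = D k * ‖(derivative p).eval (w k)‖ := by
    intro k
    have h1 : (derivative (Q (k+1))).eval z
        = (derivative (Q k)).eval z * (derivative p).eval (w k) := by
      rw [show Q (k+1) = p.comp (Q k) from rfl, Polynomial.derivative_comp,
        Polynomial.eval_mul, Polynomial.eval_comp]
    rw [hDdef]
    simp only [h1, norm_mul]
  have hstep : ∀ m, D (N + m) ≤ D N * (3/2)^m := by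
    intro m
    induction m with
    | zero => simp
    | succ m ih =>
        rw [← Nat.add_assoc, hrec (N + m), pow_succ, ← mul_assoc]
        exact mul_le_mul ih (hN (N + m) (Nat.le_add_right N m)) (norm_nonneg _)
          (mul_nonneg (hDnonneg N) (by positivity))
  set B : ℝ := (∑ k ∈ Finset.range (N+1), D k) + 1 with hBdef
  have hB1 : 1 ≤ B := le_add_of_nonneg_left (Finset.sum_nonneg fun k _ => hDnonneg k)
  have hB0 : 0 ≤ B := zero_le_one.trans hB1
  have hDbound : ∀ k, D k ≤ B * (3/2)^k := by
    intro k
    have hpow1 : (1:ℝ) ≤ (3/2)^k := one_le_pow₀ (by norm_num)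
    rcases le_or_gt k N with h | h
    · have h1 : D k ≤ ∑ j ∈ Finset.range (N+1), D j :=
        Finset.single_le_sum (fun j _ => hDnonneg j) (Finset.mem_range.mpr (Nat.lt_succ_of_le h))
      calc D k ≤ B := h1.trans (le_add_of_nonneg_right zero_le_one)
        _ = B * 1 := (mul_one B).symm
        _ ≤ B * (3/2)^k := mul_le_mul_of_nonneg_left hpow1 hB0
    · obtain ⟨m, rfl⟩ := Nat.exists_eq_add_of_le h.le
      have hDN : D N ≤ B :=
        (Finset.single_le_sum (fun j _ => hDnonneg j)
          (Finset.mem_range.mpr (Nat.lt_succ_of_le le_rfl))).trans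
          (le_add_of_nonneg_right zero_le_one)
      calc D (N + m) ≤ D N * (3/2)^m := hstep m
        _ ≤ B * (3/2)^m := mul_le_mul_of_nonneg_right hDN (by positivity)
        _ ≤ B * (3/2)^(N+m) := by
            apply mul_le_mul_of_nonneg_left _ hB0
            exact pow_le_pow_right₀ (by norm_num) (Nat.le_add_left m N)
  -- bound on the Schwarzian of p along the orbit
  have hcontS : ContinuousAt (fun u : ℂ => pS p u) z₁ := by
    unfold pS
    exact (((Polynomial.continuous _).continuousAt.div
        (Polynomial.continuous _).continuousAt hder).sub
      (continuousAt_const.mul (((Polynomial.continuous _).continuousAt.div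
        (Polynomial.continuous _).continuousAt hder).pow 2)))
  have hSt : Tendsto (fun k => ‖pS p (w k)‖) atTop
      (𝓝 (‖pS p z₁‖)) :=
    continuous_norm.continuousAt.tendsto.comp (hcontS.tendsto.comp hw)
  obtain ⟨C0, hC0⟩ := hSt.isBoundedUnder_le.bddAbove_range
  set C : ℝ := max C0 0 with hCdef
  have hCk : ∀ k, ‖pS p (w k)‖ ≤ C :=
    fun k => (hC0 ⟨k, rfl⟩).trans (le_max_left _ _)
  have hC0' : (0:ℝ) ≤ C := le_max_right _ _
  -- the sum bound
  have hterm : ∀ k, ‖pS p (w k) * ((derivative (Q k)).eval z)^2‖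
      ≤ (C * B^2) * (((3:ℝ)/2)^2)^k := by
    intro k
    rw [norm_mul, norm_pow]
    calc ‖pS p (w k)‖ * D k ^ 2
        ≤ C * (B * (3/2)^k)^2 :=
          mul_le_mul (hCk k) (pow_le_pow_left₀ (hDnonneg k) (hDbound k) 2)
            (pow_nonneg (hDnonneg k) 2) hC0'
      _ = (C * B^2) * (((3:ℝ)/2)^2)^k := by
          rw [mul_pow, ← pow_mul, ← pow_mul]; ring
  have hgeom : ∀ n, ∑ k ∈ Finset.range n, (((3:ℝ)/2)^2)^k ≤ (((3:ℝ)/2)^2)^n * (4/5) := by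
    intro n
    rw [geom_sum_eq (by norm_num) n, div_le_iff₀ (by norm_num)]
    have := pow_nonneg (show (0:ℝ) ≤ (3/2)^2 by norm_num) n
    nlinarith
  have hmain : ∀ n, ‖pS (Q n) z‖ ≤ (C * B^2 * (4/5)) * (((3:ℝ)/2)^2)^n := by
    intro n
    rw [pS_Qiter_sum p z hD0 n]
    calc ‖∑ k ∈ Finset.range n,
          pS p ((Qiter p k).eval z) * ((derivative (Qiter p k)).eval z)^2‖
        ≤ ∑ k ∈ Finset.range n,
          ‖pS p ((Qiter p k).eval z) * ((derivative (Qiter p k)).eval z)^2‖ :=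
          norm_sum_le _ _
      _ ≤ ∑ k ∈ Finset.range n, (C * B^2) * (((3:ℝ)/2)^2)^k :=
          Finset.sum_le_sum (fun k _ => hterm k)
      _ = (C * B^2) * ∑ k ∈ Finset.range n, (((3:ℝ)/2)^2)^k := by rw [Finset.mul_sum]
      _ ≤ (C * B^2) * ((((3:ℝ)/2)^2)^n * (4/5)) :=
          mul_le_mul_of_nonneg_left (hgeom n)
            (mul_nonneg hC0' (pow_nonneg hB0 2))
      _ = (C * B^2 * (4/5)) * (((3:ℝ)/2)^2)^n := by ring
  -- conclusion
  have hd2 : (2:ℝ) ≤ (d:ℝ) := by exact_mod_cast hd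
  have hdpos : (0:ℝ) < (d:ℝ) := by linarith
  rw [tendsto_zero_iff_norm_tendsto_zero]
  refine squeeze_zero (fun n => norm_nonneg _)
    (g := fun n => (C * B^2 * (4/5)) * ((((3:ℝ)/2)^2 / (d:ℝ)^2))^n) ?_ ?_
  · intro n
    have e1 : schwarzian ((fun w : ℂ => p.eval w)^[n]) z = pS (Q n) z := by
      rw [hiter n]; exact schwarzian_polyeval _ _
    rw [norm_div, e1, norm_pow, Complex.norm_natCast]
    calc ‖pS (Q n) z‖ / (d:ℝ)^(2*n)
        ≤ ((C * B^2 * (4/5)) * (((3:ℝ)/2)^2)^n) / (d:ℝ)^(2*n) :=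
          (div_le_div_iff_of_pos_right (pow_pos hdpos _)).mpr (hmain n)
      _ = (C * B^2 * (4/5)) * ((((3:ℝ)/2)^2 / (d:ℝ)^2))^n := by
          rw [pow_mul, mul_div_assoc, ← div_pow]
  · have hr0 : (0:ℝ) ≤ ((3:ℝ)/2)^2 / (d:ℝ)^2 := by positivity
    have hr1 : ((3:ℝ)/2)^2 / (d:ℝ)^2 < 1 := by
      rw [div_lt_one (by positivity)]
      nlinarith
    simpa using (tendsto_pow_atTop_nhds_zero_of_lt_one hr0 hr1).const_mul (C * B^2 * (4/5))
end

section
/- Let f be a complex polynomial of degree d ≥ 2 and let z₁ ∈ ℂ be a superattracting fixed point of f of local degree r with 2 ≤ r ≤ d − 1; that is, f(z₁) = z₁, the j-th derivatives satisfy f^{(j)}(z₁) = 0 for 1 ≤ j ≤ r − 1, and f^{(r)}(z₁) ≠ 0. Let z ∈ ℂ with z ∉ Precrit(f) and f^n(z) → z₁ as n → ∞. Then lim_{n→∞} S_{f^n}(z)/d^{2n} = 0. -/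
open Filter Topology MeasureTheory Set

open Polynomial

lemma polyID (Q : Polynomial ℂ) (k : ℕ) :
    iteratedDeriv k (fun x => Q.eval x) = fun z => ((derivative (R := ℂ))^[k] Q).eval z := by
  induction k with
  | zero => simp
  | succ k ih =>
    rw [iteratedDeriv_succ, ih, Function.iterate_succ_apply']
    funext z; exact Polynomial.deriv _

lemma XmulD (m : ℕ) (hm : 1 ≤ m) (t : ℂ[X]) :
    X * derivative (X ^ m * t) = X ^ m * (C (m : ℂ) * t + X * derivative t) := by
  obtain ⟨k, rfl⟩ : ∃ k, m = k + 1 := ⟨m - 1, by omega⟩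
  rw [derivative_mul, derivative_X_pow]
  push_cast
  ring_nf

lemma stepD (m i : ℕ) (hm : 1 ≤ m) (hi : 1 ≤ i) (a t : ℂ[X]) (h : X ^ i * a = X ^ m * t) :
    X ^ (i + 1) * derivative a = X ^ m * (C ((m : ℂ) - i) * t + X * derivative t) := by
  have hD : X * derivative (X ^ i * a) = X * derivative (X ^ m * t) := by rw [h]
  rw [XmulD m hm t, XmulD i hi a] at hD
  have hC : (C ((m : ℂ) - i)) = C (m : ℂ) - C (i : ℂ) := by rw [map_sub]
  rw [hC, pow_succ]
  linear_combination hD - C (i : ℂ) * h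

lemma D2comp (A B : ℂ[X]) :
    derivative (derivative (A.comp B))
      = (derivative (derivative A)).comp B * (derivative B) ^ 2
        + (derivative A).comp B * derivative (derivative B) := by
  rw [derivative_comp, derivative_mul, derivative_comp]; ring

lemma D3comp (A B : ℂ[X]) :
    derivative (derivative (derivative (A.comp B)))
      = (derivative (derivative (derivative A))).comp B * (derivative B) ^ 3
        + 3 * (derivative (derivative A)).comp B * derivative B * derivative (derivative B)
        + (derivative A).comp B * derivative (derivative (derivative B)) := by
  rw [D2comp, derivative_add, derivative_mul, derivative_mul, derivative_comp,
    derivative_comp, derivative_pow]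
  norm_num
  have h2 : (C (2:ℂ)) = 2 := by
    rw [show (2:ℂ) = ((2:ℕ):ℂ) by norm_num, Polynomial.C_eq_natCast]; norm_num
  rw [h2]
  ring

lemma schw_eval (Q : ℂ[X]) (w : ℂ) :
    schwarzian (fun x => Q.eval x) w
      = (derivative (derivative (derivative Q))).eval w / (derivative Q).eval w
        - (3/2) * ((derivative (derivative Q)).eval w / (derivative Q).eval w) ^ 2 := by
  unfold schwarzian
  rw [polyID, polyID, Polynomial.deriv]
  norm_num [Function.iterate_succ_apply']

lemma schw_comp (A B : ℂ[X]) (z : ℂ) (h1 : (derivative A).eval (B.eval z) ≠ 0)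
    (h2 : (derivative B).eval z ≠ 0) :
    schwarzian (fun x => (A.comp B).eval x) z
      = schwarzian (fun x => A.eval x) (B.eval z) * ((derivative B).eval z) ^ 2
        + schwarzian (fun x => B.eval x) z := by
  rw [schw_eval, schw_eval, schw_eval, D3comp, D2comp, derivative_comp]
  simp only [eval_mul, eval_add, eval_comp, eval_pow, eval_ofNat]
  field_simp [mul_pow, sub_eq_iff_eq_add]
  ring

lemma shift1 (A : ℂ[X]) (b : ℂ) :
    derivative (A.comp (X + C b)) = (derivative A).comp (X + C b) := by
  rw [derivative_comp]; simp

/-- If `z₁` is a superattracting fixed point of `f` of local degree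
`r` with `2 ≤ r ≤ d - 1`, and `z ∉ Precrit(f)` is attracted to `z₁`, then
`S_{f^n}(z)/d^{2n} → 0`. -/
theorem stmt17 (d : ℕ) (hd : 2 ≤ d) (p : Polynomial ℂ) (hdeg : p.natDegree = d)
    (f : ℂ → ℂ) (hf : ∀ z, f z = p.eval z)
    (z₁ : ℂ) (hfix : f z₁ = z₁)
    (r : ℕ) (hr2 : 2 ≤ r) (hrd : r ≤ d - 1)
    (hvanish : ∀ j : ℕ, 1 ≤ j → j ≤ r - 1 → iteratedDeriv j f z₁ = 0)
    (hrnz : iteratedDeriv r f z₁ ≠ 0)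
    (z : ℂ) (hz : z ∉ precrit f)
    (hattr : Tendsto (fun n : ℕ => f^[n] z) atTop (𝓝 z₁)) :
    Tendsto (fun n : ℕ => schwarzian (f^[n]) z / (d : ℂ) ^ (2 * n)) atTop (𝓝 0) := by
  have hr1 : 1 ≤ r := by omega
  have hf' : f = fun x => p.eval x := funext hf
  simp only [precrit, Set.mem_setOf_eq, not_exists, not_and] at hz
  -- iterates as polynomials
  let Pn : ℕ → ℂ[X] := fun n => (fun Q => p.comp Q)^[n] X
  have hP0 : Pn 0 = X := rfl
  have hPs : ∀ n, Pn (n+1) = p.comp (Pn n) := fun n => Function.iterate_succ_apply' _ _ _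
  have hPe : ∀ n x, (Pn n).eval x = f^[n] x := by
    intro n
    induction n with
    | zero => intro x; simp [hP0]
    | succ n ih =>
      intro x
      rw [hPs, eval_comp, ih, Function.iterate_succ_apply', hf]
  have hfun : ∀ n, (f^[n]) = fun x => (Pn n).eval x := fun n => funext fun x => (hPe n x).symm
  -- derivatives along the orbit
  let g : ℕ → ℂ := fun n => (derivative (Pn n)).eval z
  have hg : ∀ n, deriv (f^[n]) z = g n := by
    intro n; rw [hfun n]; exact Polynomial.deriv _
  have hgs : ∀ n, g (n+1) = (derivative p).eval (f^[n] z) * g n := by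
    intro n
    show (derivative (Pn (n+1))).eval z = _
    rw [hPs, derivative_comp, eval_mul, eval_comp, hPe]
    ring
  have hgnz : ∀ n, g n ≠ 0 := by
    intro n
    cases n with
    | zero => simp [hP0, g]
    | succ n => rw [← hg]; exact hz (n+1) (by omega)
  have hfp' : ∀ n, (derivative p).eval (f^[n] z) ≠ 0 := by
    intro n h
    exact hgnz (n+1) (by rw [hgs, h, zero_mul])
  -- the cocycle sum
  let c : ℕ → ℂ := fun k => schwarzian (fun x => p.eval x) (f^[k] z) * (g k)^2
  have hsum : ∀ n, schwarzian (f^[n]) z = ∑ k ∈ Finset.range n, c k := by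
    intro n
    induction n with
    | zero => rw [hfun 0, hP0, schw_eval]; simp
    | succ n ih =>
      rw [hfun (n+1), hPs, schw_comp p (Pn n) z (by rw [hPe]; exact hfp' n)
        (hgnz n), Finset.sum_range_succ, ← ih, ← hfun n, hPe]
      show schwarzian _ _ * (g n)^2 + _ = _
      ring
  -- local model at the fixed point
  let q : ℂ[X] := p.comp (X + C z₁) - C z₁
  have hqdef : q = p.comp (X + C z₁) - C z₁ := rfl
  have hqe : ∀ w, q.eval w = f (w + z₁) - z₁ := by
    intro w; simp [hqdef, eval_comp, hf, add_comm]
  have hshift : ∀ j : ℕ, 1 ≤ j →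
      (derivative (R := ℂ))^[j] q = ((derivative (R := ℂ))^[j] p).comp (X + C z₁) := by
    intro j hj
    induction j with
    | zero => omega
    | succ j ih =>
      rcases Nat.eq_zero_or_pos j with h0 | h0
      · subst h0
        simp only [zero_add, Function.iterate_one]
        rw [hqdef, derivative_sub, derivative_C, sub_zero, shift1]
      · rw [Function.iterate_succ_apply', ih h0, shift1, Function.iterate_succ_apply' derivative j p]
  have hD0 : ∀ j : ℕ, 1 ≤ j → ((derivative (R := ℂ))^[j] q).eval 0 = iteratedDeriv j f z₁ := by
    intro j hj
    rw [hshift j hj, eval_comp, hf', polyID]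
    simp
  have hfac : ∀ j : ℕ, ((derivative (R := ℂ))^[j] q).eval 0 = (j.factorial : ℂ) * q.coeff j := by
    intro j
    rw [← Polynomial.coeff_zero_eq_eval_zero, Polynomial.coeff_iterate_derivative]
    simp [Nat.descFactorial_self]
  have hcoeffz : ∀ j, j < r → q.coeff j = 0 := by
    intro j hj
    rcases Nat.eq_zero_or_pos j with h0 | h0
    · subst h0
      rw [Polynomial.coeff_zero_eq_eval_zero, hqe 0]
      simp [hfix]
    · have h1 := hfac j
      rw [hD0 j h0, hvanish j h0 (by omega)] at h1
      have hfne : (j.factorial : ℂ) ≠ 0 := Nat.cast_ne_zero.mpr j.factorial_ne_zero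
      exact (mul_eq_zero.mp h1.symm).resolve_left hfne
  obtain ⟨s, hs⟩ : (X : ℂ[X]) ^ r ∣ q := Polynomial.X_pow_dvd_iff.mpr hcoeffz
  have hqcr : q.coeff r ≠ 0 := by
    intro h
    apply hrnz
    rw [← hD0 r hr1, hfac r, h, mul_zero]
  have hsnz : s.eval 0 ≠ 0 := by
    rw [← Polynomial.coeff_zero_eq_eval_zero]
    intro h
    apply hqcr
    have hxp := Polynomial.coeff_X_pow_mul s r 0
    rw [zero_add] at hxp
    rw [hs, hxp, h]
  -- factorisation q = X^r * s and its derivatives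
  let s1 : ℂ[X] := C (r:ℂ) * s + X * derivative s
  let s2 : ℂ[X] := C ((r:ℂ) - ((1:ℕ):ℂ)) * s1 + X * derivative s1
  let s3 : ℂ[X] := C ((r:ℂ) - ((2:ℕ):ℂ)) * s2 + X * derivative s2
  have h1 : X^1 * derivative q = X^r * s1 := by rw [pow_one, hs, XmulD r hr1 s]
  have h2 : X^2 * derivative (derivative q) = X^r * s2 :=
    stepD r 1 hr1 le_rfl _ s1 h1
  have h3 : X^3 * derivative (derivative (derivative q)) = X^r * s3 :=
    stepD r 2 hr1 (by omega) _ s2 h2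
  have E0 : ∀ w : ℂ, q.eval w = w^r * s.eval w := by intro w; rw [hs]; simp
  have E1 : ∀ w : ℂ, w * (derivative q).eval w = w^r * s1.eval w := by
    intro w; have := congrArg (eval w) h1; simpa using this
  have E2 : ∀ w : ℂ, w^2 * (derivative (derivative q)).eval w = w^r * s2.eval w := by
    intro w; have := congrArg (eval w) h2; simpa using this
  have E3 : ∀ w : ℂ, w^3 * (derivative (derivative (derivative q))).eval w
      = w^r * s3.eval w := by
    intro w; have := congrArg (eval w) h3; simpa using this
  have hs10 : s1.eval 0 = (r:ℂ) * s.eval 0 := by simp [s1]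
  have hs1nz : s1.eval 0 ≠ 0 := by
    rw [hs10]
    exact mul_ne_zero (Nat.cast_ne_zero.mpr (by omega)) hsnz
  -- the orbit relative to the fixed point
  let w : ℕ → ℂ := fun k => f^[k] z - z₁
  have hw0 : Tendsto w atTop (𝓝 0) := by simpa using hattr.sub_const z₁
  have hwq : ∀ k, q.eval (w k) = w (k+1) := by
    intro k
    rw [hqe]
    show f (f^[k] z - z₁ + z₁) - z₁ = f^[k+1] z - z₁
    rw [sub_add_cancel, Function.iterate_succ_apply']
  have hwnz : ∀ k, w k ≠ 0 := by
    intro k h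
    have hk : f^[k] z = z₁ := by
      have : f^[k] z - z₁ = 0 := h
      rwa [sub_eq_zero] at this
    apply hfp' k
    rw [hk]
    have h1' := hvanish 1 le_rfl (by omega)
    rw [iteratedDeriv_one, hf'] at h1'
    rwa [Polynomial.deriv] at h1'
  have hq'w : ∀ k, (derivative p).eval (f^[k] z) = (derivative q).eval (w k) := by
    intro k
    have hsh := hshift 1 le_rfl
    simp only [Function.iterate_one] at hsh
    rw [hsh, eval_comp]
    simp only [eval_add, eval_X, eval_C]
    show _ = eval (f^[k] z - z₁ + z₁) _
    rw [sub_add_cancel]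
  let u : ℕ → ℂ := fun k => g k / w k
  have hu : ∀ k, u (k+1) = (s1.eval (w k) / s.eval (w k)) * u k := by
    intro k
    show g (k+1) / w (k+1) = _
    rw [hgs k, hq'w k, ← hwq k, div_mul_div_comm,
      ← mul_div_mul_left ((derivative q).eval (w k) * g k) (q.eval (w k)) (hwnz k),
      ← mul_assoc, E1 (w k), E0 (w k),
      show w k * (w k ^ r * s.eval (w k)) = w k ^ r * (s.eval (w k) * w k) by ring,
      show w k ^ r * s1.eval (w k) * g k = w k ^ r * (s1.eval (w k) * g k) by ring,
      mul_div_mul_left _ _ (pow_ne_zero r (hwnz k))]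
  have it2 : ∀ t : ℂ[X], (derivative (R:=ℂ))^[2] t = derivative (derivative t) := fun t => rfl
  have it3 : ∀ t : ℂ[X], (derivative (R:=ℂ))^[3] t
      = derivative (derivative (derivative t)) := fun t => rfl
  have hq'w2 : ∀ k, (derivative (derivative p)).eval (f^[k] z)
      = (derivative (derivative q)).eval (w k) := by
    intro k
    have hsh := hshift 2 (by omega)
    rw [it2, it2] at hsh
    rw [hsh, eval_comp]
    simp only [eval_add, eval_X, eval_C]
    show _ = eval (f^[k] z - z₁ + z₁) _
    rw [sub_add_cancel]
  have hq'w3 : ∀ k, (derivative (derivative (derivative p))).eval (f^[k] z)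
      = (derivative (derivative (derivative q))).eval (w k) := by
    intro k
    have hsh := hshift 3 (by omega)
    rw [it3, it3] at hsh
    rw [hsh, eval_comp]
    simp only [eval_add, eval_X, eval_C]
    show _ = eval (f^[k] z - z₁ + z₁) _
    rw [sub_add_cancel]
  let v : ℕ → ℂ := fun k =>
    s3.eval (w k) / s1.eval (w k) - (3/2) * (s2.eval (w k) / s1.eval (w k))^2
  have hA : ∀ k, schwarzian (fun x => p.eval x) (f^[k] z)
      = s3.eval (w k) / ((w k)^2 * s1.eval (w k))
        - (3/2) * (s2.eval (w k) / (w k * s1.eval (w k)))^2 := by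
    intro k
    rw [schw_eval, hq'w k, hq'w2 k, hq'w3 k]
    have hA31 : (derivative (derivative (derivative q))).eval (w k)
        / (derivative q).eval (w k) = s3.eval (w k) / ((w k)^2 * s1.eval (w k)) := by
      rw [← mul_div_mul_left ((derivative (derivative (derivative q))).eval (w k))
          ((derivative q).eval (w k)) (pow_ne_zero 3 (hwnz k)), E3 (w k),
        show (w k)^3 * (derivative q).eval (w k)
            = (w k)^2 * (w k * (derivative q).eval (w k)) by ring, E1 (w k),
        show (w k)^2 * ((w k)^r * s1.eval (w k))
            = (w k)^r * ((w k)^2 * s1.eval (w k)) by ring,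
        mul_div_mul_left _ _ (pow_ne_zero r (hwnz k))]
    have hA21 : (derivative (derivative q)).eval (w k)
        / (derivative q).eval (w k) = s2.eval (w k) / (w k * s1.eval (w k)) := by
      rw [← mul_div_mul_left ((derivative (derivative q)).eval (w k))
          ((derivative q).eval (w k)) (pow_ne_zero 2 (hwnz k)), E2 (w k),
        show (w k)^2 * (derivative q).eval (w k)
            = (w k) * (w k * (derivative q).eval (w k)) by ring, E1 (w k),
        show (w k) * ((w k)^r * s1.eval (w k))
            = (w k)^r * (w k * s1.eval (w k)) by ring,
        mul_div_mul_left _ _ (pow_ne_zero r (hwnz k))]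
    rw [hA31, hA21]
  have hcv : ∀ k, c k = v k * (u k)^2 := by
    intro k
    show schwarzian (fun x => p.eval x) (f^[k] z) * (g k)^2 = _
    rw [hA k]
    show _ = (s3.eval (w k) / s1.eval (w k)
      - (3/2) * (s2.eval (w k) / s1.eval (w k))^2) * (g k / w k)^2
    generalize s3.eval (w k) = a3
    generalize s2.eval (w k) = a2
    generalize s1.eval (w k) = a1
    generalize w k = W
    generalize g k = G
    ring
  -- limits along the orbit
  have hG1 : Tendsto (fun k => s1.eval (w k) / s.eval (w k)) atTop (𝓝 ((r:ℂ))) := by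
    have hcont1 : ContinuousAt (fun x : ℂ => s1.eval x / s.eval x) 0 :=
      ((s1.continuous_aeval.continuousAt).div (s.continuous_aeval.continuousAt) hsnz)
    have ht := hcont1.tendsto.comp hw0
    have h0 : s1.eval 0 / s.eval 0 = (r:ℂ) := by
      rw [hs10, mul_div_assoc, div_self hsnz, mul_one]
    rw [Function.comp_def] at ht
    rwa [h0] at ht
  have hRt : Tendsto (fun k => ‖s1.eval (w k) / s.eval (w k)‖) atTop (𝓝 (r:ℝ)) := by
    have := hG1.norm
    simpa using this
  have hvlim : Tendsto v atTop
      (𝓝 (s3.eval 0 / s1.eval 0 - (3/2) * (s2.eval 0 / s1.eval 0)^2)) := by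
    have hcont2 : ContinuousAt
        (fun x : ℂ => s3.eval x / s1.eval x - (3/2) * (s2.eval x / s1.eval x)^2) 0 :=
      ((s3.continuous_aeval.continuousAt.div s1.continuous_aeval.continuousAt hs1nz).sub
        (continuousAt_const.mul
          ((s2.continuous_aeval.continuousAt.div s1.continuous_aeval.continuousAt hs1nz).pow 2)))
    have ht := hcont2.tendsto.comp hw0
    rwa [Function.comp_def] at ht
  obtain ⟨M, hM0, hM⟩ : ∃ M : ℝ, 0 ≤ M ∧ ∀ k, ‖v k‖ ≤ M := by
    obtain ⟨M, hMb⟩ := hvlim.norm.bddAbove_range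
    rw [mem_upperBounds] at hMb
    refine ⟨M, le_trans (norm_nonneg (v 0)) (hMb _ (mem_range_self 0)), fun k => ?_⟩
    exact hMb _ (mem_range_self k)
  -- geometric growth
  set ρ : ℝ := (r:ℝ) + 1/2 with hρ
  have hr2' : (2:ℝ) ≤ (r:ℝ) := by exact_mod_cast hr2
  have hρ1 : 1 ≤ ρ := by rw [hρ]; linarith
  have hρ0 : 0 ≤ ρ := by linarith
  have hrd' : (r:ℝ) ≤ (d:ℝ) - 1 := by
    have : ((r:ℕ):ℝ) ≤ ((d - 1 : ℕ):ℝ) := Nat.cast_le.mpr hrd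
    rwa [Nat.cast_sub (by omega), Nat.cast_one] at this
  have hρd : ρ < (d:ℝ) := by rw [hρ]; linarith
  have hrρ : (r:ℝ) < ρ := by rw [hρ]; linarith
  obtain ⟨K, hK⟩ : ∃ K, ∀ k ≥ K, ‖s1.eval (w k) / s.eval (w k)‖ ≤ ρ :=
    eventually_atTop.mp (hRt.eventually (eventually_le_nhds hrρ))
  have hub : ∀ j, ‖u (K + j)‖ ≤ ‖u K‖ * ρ^j := by
    intro j
    induction j with
    | zero => simp
    | succ j ih =>
      have hrec : u (K + (j+1)) = (s1.eval (w (K+j)) / s.eval (w (K+j))) * u (K+j) := by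
        rw [show K + (j+1) = (K+j) + 1 by ring]
        exact hu (K+j)
      rw [hrec, norm_mul]
      calc ‖s1.eval (w (K+j)) / s.eval (w (K+j))‖ * ‖u (K+j)‖
          ≤ ρ * (‖u K‖ * ρ^j) :=
            mul_le_mul (hK _ (by omega)) ih (norm_nonneg _) hρ0
        _ = ‖u K‖ * ρ^(j+1) := by ring
  set B : ℝ := M * (‖u K‖)^2 with hB
  have hB0 : 0 ≤ B := mul_nonneg hM0 (sq_nonneg _)
  have hcb : ∀ j, ‖c (K + j)‖ ≤ B * (ρ^2)^j := by
    intro j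
    rw [hcv, norm_mul, norm_pow]
    calc ‖v (K+j)‖ * ‖u (K+j)‖^2
        ≤ M * (‖u K‖ * ρ^j)^2 :=
          mul_le_mul (hM _) (pow_le_pow_left₀ (norm_nonneg _) (hub j) 2)
            (pow_nonneg (norm_nonneg _) 2) hM0
      _ = B * (ρ^2)^j := by rw [hB, mul_pow, ← pow_mul, ← pow_mul, mul_comm j 2]; ring
  set A : ℝ := ∑ k ∈ Finset.range K, ‖c k‖ with hAdef
  have hA0 : 0 ≤ A := Finset.sum_nonneg fun _ _ => norm_nonneg _
  have hρ2 : 2 ≤ ρ^2 := by nlinarith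
  have hρ20 : (0:ℝ) ≤ ρ^2 := by positivity
  have hsb : ∀ n, ∑ k ∈ Finset.range n, ‖c k‖ ≤ A + B * (ρ^2)^n := by
    intro n
    induction n with
    | zero =>
      simp only [Finset.range_zero, Finset.sum_empty, pow_zero, mul_one]
      linarith
    | succ n ih =>
      rcases lt_or_ge n K with hnK | hnK
      · have hsub : ∑ k ∈ Finset.range (n+1), ‖c k‖ ≤ A := by
          rw [hAdef]
          exact Finset.sum_le_sum_of_subset_of_nonneg
            (Finset.range_subset_range.mpr (by omega)) (fun i _ _ => norm_nonneg _)
        have hBpos : (0:ℝ) ≤ B * (ρ^2)^(n+1) := mul_nonneg hB0 (pow_nonneg hρ20 _)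
        linarith
      · rw [Finset.sum_range_succ]
        have hc1 : ‖c n‖ ≤ B * (ρ^2)^(n - K) := by
          have := hcb (n - K)
          rwa [show K + (n - K) = n by omega] at this
        have hc2 : B * (ρ^2)^(n-K) ≤ B * (ρ^2)^n :=
          mul_le_mul_of_nonneg_left (pow_le_pow_right₀ (by linarith) (by omega)) hB0
        have hc3 : (ρ^2)^n * 2 ≤ (ρ^2)^(n+1) := by
          rw [pow_succ (ρ^2) n]
          nlinarith [pow_nonneg hρ20 n]
        have hc4 := mul_le_mul_of_nonneg_left hc3 hB0
        linarith
  -- conclusion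
  have hd0 : (0:ℝ) < (d:ℝ) := by exact_mod_cast (by omega : 0 < d)
  rw [tendsto_zero_iff_norm_tendsto_zero]
  apply squeeze_zero (g := fun n => A * ((1:ℝ)/(d:ℝ)^2)^n + B * (ρ^2/(d:ℝ)^2)^n)
    (fun n => norm_nonneg _)
  · intro n
    have hpow : (0:ℝ) < ((d:ℝ)^2)^n := by positivity
    rw [norm_div, hsum n]
    have habs : ‖(d:ℂ)^(2*n)‖ = ((d:ℝ)^2)^n := by
      rw [norm_pow, Complex.norm_natCast, ← pow_mul]
    rw [habs]
    have h1 : ‖∑ k ∈ Finset.range n, c k‖ ≤ A + B * (ρ^2)^n :=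
      le_trans (norm_sum_le _ _) (hsb n)
    calc ‖∑ k ∈ Finset.range n, c k‖ / ((d:ℝ)^2)^n
        ≤ (A + B * (ρ^2)^n) / ((d:ℝ)^2)^n := by
          exact (div_le_div_iff_of_pos_right hpow).mpr h1
      _ = A * ((1:ℝ)/(d:ℝ)^2)^n + B * (ρ^2/(d:ℝ)^2)^n := by
          rw [div_pow, div_pow, one_pow]
          ring
  · have l1 : Tendsto (fun n : ℕ => ((1:ℝ)/(d:ℝ)^2)^n) atTop (𝓝 0) := by
      apply tendsto_pow_atTop_nhds_zero_of_lt_one (by positivity)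
      rw [div_lt_one (by positivity)]
      nlinarith
    have l2 : Tendsto (fun n : ℕ => (ρ^2/(d:ℝ)^2)^n) atTop (𝓝 0) := by
      apply tendsto_pow_atTop_nhds_zero_of_lt_one (by positivity)
      rw [div_lt_one (by positivity)]
      exact pow_lt_pow_left₀ hρd hρ0 (by norm_num)
    have := (l1.const_mul A).add (l2.const_mul B)
    simpa only [mul_zero, add_zero] using this
end

section
/- Let f be a complex polynomial of degree d ≥ 2 admitting a Siegel disc: suppose U ⊆ ℂ is open with f(U) ⊆ U, ρ > 0, φ : U → B(0,ρ) is a holomorphic bijection onto the open disc B(0,ρ), and λ ∈ ℂ with |λ| = 1 satisfies φ(f(w)) = λ·φ(w) for all w ∈ U. Then for every z ∈ U with z ∉ Precrit(f), lim_{n→∞} S_{f^n}(z)/d^{2n} = 0. -/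
open Filter Topology MeasureTheory Set

/-- Cauchy estimates for the iterated derivatives of a holomorphic function
bounded on a closed disc. -/
lemma cauchy_est {g : ℂ → ℂ} {z : ℂ} {δ M : ℝ} (hδ : 0 < δ)
    (hg : DifferentiableOn ℂ g (Metric.closedBall z δ))
    (hM : ∀ w ∈ Metric.closedBall z δ, ‖g w‖ ≤ M) (k : ℕ) :
    ‖iteratedDeriv k g z‖ ≤ k.factorial * M / δ ^ k := by
  lift δ to NNReal using hδ.le with R hR
  have hR0 : (0:ℝ) < (R:ℝ) := hδ
  have h := hg.hasFPowerSeriesOnBall (by exact_mod_cast hδ)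
  have h1 := h.factorial_smul (1:ℂ) k
  have hM0 : 0 ≤ M := le_trans (norm_nonneg _) (hM z (Metric.mem_closedBall_self hR0.le))
  have hId : iteratedDeriv k g z = iteratedFDeriv ℂ k g z (fun _ => 1) :=
    iteratedDeriv_eq_iteratedFDeriv
  have hnorm : ‖iteratedDeriv k g z‖
      = (k.factorial : ℝ) * ‖cauchyPowerSeries g z R k (fun _ => (1:ℂ))‖ := by
    rw [hId, ← h1, nsmul_eq_mul, norm_mul, Complex.norm_natCast]
  have happ : ‖cauchyPowerSeries g z R k (fun _ => (1:ℂ))‖ ≤ ‖cauchyPowerSeries g z R k‖ := by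
    have := (cauchyPowerSeries g z R k).le_opNorm (fun _ => (1:ℂ))
    simpa using this
  -- integral bound
  have hcont : Continuous fun θ : ℝ => ‖g (circleMap z R θ)‖ := by
    apply Continuous.norm
    apply hg.continuousOn.comp_continuous (continuous_circleMap z R)
    intro θ
    have : circleMap z R θ ∈ Metric.sphere z ((R:ℝ)) := circleMap_mem_sphere z hR0.le θ
    exact Metric.sphere_subset_closedBall this
  have hint : (∫ θ : ℝ in (0:ℝ)..2 * Real.pi, ‖g (circleMap z R θ)‖) ≤ 2 * Real.pi * M := by
    have h2pi : (0:ℝ) ≤ 2 * Real.pi := by positivity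
    calc (∫ θ : ℝ in (0:ℝ)..2 * Real.pi, ‖g (circleMap z R θ)‖)
        ≤ ∫ _ : ℝ in (0:ℝ)..2 * Real.pi, M := by
          apply intervalIntegral.integral_mono_on h2pi (hcont.intervalIntegrable _ _)
            (intervalIntegrable_const)
          intro θ _
          exact hM _ (Metric.sphere_subset_closedBall (circleMap_mem_sphere z hR0.le θ))
      _ = 2 * Real.pi * M := by simp [mul_comm]
  have hcoef : ‖cauchyPowerSeries g z R k‖ ≤ M * ((R:ℝ)⁻¹) ^ k := by
    refine le_trans (norm_cauchyPowerSeries_le g z R k) ?_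
    have habs : |(R:ℝ)| = (R:ℝ) := abs_of_pos hR0
    rw [habs]
    apply mul_le_mul_of_nonneg_right _ (by positivity)
    calc (2 * Real.pi)⁻¹ * ∫ θ : ℝ in (0:ℝ)..2 * Real.pi, ‖g (circleMap z R θ)‖
        ≤ (2 * Real.pi)⁻¹ * (2 * Real.pi * M) := by
          apply mul_le_mul_of_nonneg_left hint (by positivity)
      _ = M := by field_simp
  calc ‖iteratedDeriv k g z‖
      = (k.factorial : ℝ) * ‖cauchyPowerSeries g z R k (fun _ => (1:ℂ))‖ := hnorm
    _ ≤ (k.factorial : ℝ) * (M * ((R:ℝ)⁻¹) ^ k) := by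
        apply mul_le_mul_of_nonneg_left (le_trans happ hcoef) (by positivity)
    _ = k.factorial * M / (R:ℝ) ^ k := by
        rw [inv_pow]
        ring

/-- A bound on the Schwarzian derivative from bounds on the derivatives. -/
lemma schw_bound {g : ℂ → ℂ} {z : ℂ} {c M2 M3 : ℝ} (hc : 0 < c)
    (hB : c ≤ ‖deriv g z‖) (h2 : ‖iteratedDeriv 2 g z‖ ≤ M2)
    (h3 : ‖iteratedDeriv 3 g z‖ ≤ M3) :
    ‖schwarzian g z‖ ≤ M3 / c + 3/2 * (M2 / c)^2 := by
  have hB0 : (0:ℝ) < ‖deriv g z‖ := lt_of_lt_of_le hc hB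
  have e1 : ‖iteratedDeriv 3 g z / deriv g z‖ ≤ M3 / c := by
    rw [norm_div]
    exact div_le_div₀ (le_trans (norm_nonneg _) h3) h3 hc hB
  have e2 : ‖iteratedDeriv 2 g z / deriv g z‖ ≤ M2 / c := by
    rw [norm_div]
    exact div_le_div₀ (le_trans (norm_nonneg _) h2) h2 hc hB
  calc ‖schwarzian g z‖
      ≤ ‖iteratedDeriv 3 g z / deriv g z‖ + ‖(3/2 : ℂ) * (iteratedDeriv 2 g z / deriv g z)^2‖ :=
        norm_sub_le _ _
    _ ≤ M3 / c + 3/2 * (M2 / c)^2 := by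
        apply add_le_add e1
        rw [norm_mul, norm_pow]
        have h32 : ‖(3/2 : ℂ)‖ = 3/2 := by
          rw [norm_div]; simp
        rw [h32]
        apply mul_le_mul_of_nonneg_left _ (by norm_num)
        exact pow_le_pow_left₀ (norm_nonneg _) e2 2

/-- If the iterates of `f` are uniformly bounded on a disc around `z` and the
derivatives of the iterates at `z` are uniformly bounded below, then the normalized
Schwarzian derivatives tend to `0`. -/
lemma finish_aux {f : ℂ → ℂ} (hfd : Differentiable ℂ f) {d : ℕ} (hd : 2 ≤ d)
    {z : ℂ} {δ M c : ℝ} (hδ : 0 < δ) (hc : 0 < c)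
    (Hb : ∀ n : ℕ, ∀ w ∈ Metric.closedBall z δ, ‖f^[n] w‖ ≤ M)
    (Hc : ∀ n : ℕ, c ≤ ‖deriv (f^[n]) z‖) :
    Filter.Tendsto (fun n : ℕ => schwarzian (f^[n]) z / (d : ℂ) ^ (2 * n)) atTop (𝓝 0) := by
  set C := (Nat.factorial 3) * M / δ^3 / c + 3/2 * (((Nat.factorial 2) * M / δ^2) / c)^2 with hC
  have hSb : ∀ n, ‖schwarzian (f^[n]) z‖ ≤ C := fun n =>
    schw_bound hc (Hc n) (cauchy_est hδ ((hfd.iterate n).differentiableOn) (Hb n) 2)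
      (cauchy_est hδ ((hfd.iterate n).differentiableOn) (Hb n) 3)
  have hC0 : 0 ≤ C := le_trans (norm_nonneg _) (hSb 0)
  apply squeeze_zero_norm (a := fun n => C * ((1:ℝ)/4)^n)
  · intro n
    rw [norm_div]
    have hd4 : ((4:ℝ))^n ≤ ‖(d:ℂ)^(2*n)‖ := by
      rw [norm_pow, Complex.norm_natCast, pow_mul]
      apply pow_le_pow_left₀ (by norm_num)
      have : (2:ℝ) ≤ (d:ℝ) := by exact_mod_cast hd
      nlinarith
    have h4 : (0:ℝ) < (4:ℝ)^n := by positivity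
    calc ‖schwarzian (f^[n]) z‖ / ‖(d:ℂ)^(2*n)‖
        ≤ C / (4:ℝ)^n := div_le_div₀ hC0 (hSb n) h4 hd4
      _ = C * ((1:ℝ)/4)^n := by rw [div_pow, one_pow]; ring
  · have := (tendsto_pow_atTop_nhds_zero_of_lt_one (r := (1:ℝ)/4) (by norm_num)
      (by norm_num)).const_mul C
    simpa using this

/-- An injective holomorphic function on an open set is an open map. -/
lemma image_isOpen_of_injOn {φ : ℂ → ℂ} {U : Set ℂ}
    (hφ : AnalyticOnNhd ℂ φ U) (hinj : Set.InjOn φ U) {V : Set ℂ}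
    (hVU : V ⊆ U) (hV : IsOpen V) : IsOpen (φ '' V) := by
  rw [isOpen_iff_mem_nhds]
  rintro t ⟨w, hwV, rfl⟩
  rcases (hφ w (hVU hwV)).eventually_constant_or_nhds_le_map_nhds with hconst | hle
  · exfalso
    have h1 : ∀ᶠ x in 𝓝[≠] w, φ x = φ w ∧ x ∈ V :=
      eventually_nhdsWithin_of_eventually_nhds (hconst.and (hV.mem_nhds hwV))
    have h2 : ∀ᶠ x in 𝓝[≠] w, x ≠ w := self_mem_nhdsWithin
    obtain ⟨x, ⟨hx1, hx2⟩, hx3⟩ := (h1.and h2).exists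
    exact hx3 (hinj (hVU hx2) (hVU hwV) hx1)
  · exact hle (Filter.image_mem_map (hV.mem_nhds hwV))

/-- The inverse of an injective holomorphic map is continuous. -/
lemma invFunOn_continuousOn {φ : ℂ → ℂ} {U : Set ℂ} (hU : IsOpen U)
    (hφ : AnalyticOnNhd ℂ φ U) {ρ : ℝ} (hbij : Set.BijOn φ U (Metric.ball 0 ρ)) :
    ContinuousOn (Function.invFunOn φ U) (Metric.ball (0:ℂ) ρ) := by
  set σ := Function.invFunOn φ U with hσ
  have hr : ∀ t ∈ Metric.ball (0:ℂ) ρ, φ (σ t) = t := fun t ht =>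
    hbij.surjOn.rightInvOn_invFunOn ht
  have hmem : ∀ t ∈ Metric.ball (0:ℂ) ρ, σ t ∈ U := by
    intro t ht
    obtain ⟨a, ha, hat⟩ := hbij.surjOn ht
    exact Function.invFunOn_mem ⟨a, ha, hat⟩
  have hl : ∀ w ∈ U, σ (φ w) = w := fun w hw => hbij.injOn.leftInvOn_invFunOn hw
  intro t₀ ht₀
  rw [ContinuousWithinAt, Filter.tendsto_def]
  intro s hs
  obtain ⟨V', hV's, hV'open, hV'mem⟩ := _root_.mem_nhds_iff.1 hs
  have hO : IsOpen (φ '' (V' ∩ U)) :=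
    image_isOpen_of_injOn hφ hbij.injOn inter_subset_right (hV'open.inter hU)
  have ht₀O : t₀ ∈ φ '' (V' ∩ U) :=
    ⟨σ t₀, ⟨hV'mem, hmem t₀ ht₀⟩, hr t₀ ht₀⟩
  rw [mem_nhdsWithin]
  refine ⟨φ '' (V' ∩ U), hO, ht₀O, ?_⟩
  rintro t ⟨⟨v, ⟨hv1, hv2⟩, rfl⟩, htb⟩
  have : σ (φ v) = v := hl v hv2
  simp only [Set.mem_preimage, this]
  exact hV's hv1

/-- If `f` has a Siegel disc `U` (i.e. `φ : U → B(0,ρ)` is a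
holomorphic bijection conjugating `f` on `U` to the rotation `w ↦ λw`, `|λ| = 1`),
then for every non-precritical `z ∈ U`, `S_{f^n}(z)/d^{2n} → 0`. -/
theorem stmt18 (d : ℕ) (hd : 2 ≤ d) (p : Polynomial ℂ) (hdeg : p.natDegree = d)
    (f : ℂ → ℂ) (hf : ∀ z, f z = p.eval z)
    (U : Set ℂ) (hU : IsOpen U) (hfU : Set.MapsTo f U U)
    (ρ : ℝ) (hρ : 0 < ρ)
    (φ : ℂ → ℂ) (hφd : DifferentiableOn ℂ φ U)
    (hφbij : Set.BijOn φ U (Metric.ball (0 : ℂ) ρ))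
    (lam : ℂ) (hlam : ‖lam‖ = 1)
    (hconj : ∀ w ∈ U, φ (f w) = lam * φ w)
    (z : ℂ) (hz : z ∈ U) (hzp : z ∉ precrit f) :
    Tendsto (fun n : ℕ => schwarzian (f^[n]) z / (d : ℂ) ^ (2 * n)) atTop (𝓝 0) := by
  -- Basic setup
  have hfeq : f = fun x => p.eval x := funext hf
  have hfd : Differentiable ℂ f := by rw [hfeq]; exact p.differentiable
  have hGd : ∀ n : ℕ, Differentiable ℂ (f^[n]) := fun n => hfd.iterate n
  have mapsU : ∀ n : ℕ, Set.MapsTo (f^[n]) U U := fun n => hfU.iterate n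
  have hnl : ‖lam‖ = 1 := by exact hlam
  have hlam0 : lam ≠ 0 := by
    intro h; rw [h] at hnl; simp at hnl
  have conj_n : ∀ n : ℕ, ∀ w ∈ U, φ (f^[n] w) = lam ^ n * φ w := by
    intro n
    induction n with
    | zero => intro w hw; simp
    | succ n ih =>
      intro w hw
      rw [Function.iterate_succ_apply', hconj _ (mapsU n hw), ih w hw, pow_succ]
      ring
  have hφan : AnalyticOnNhd ℂ φ U := hφd.analyticOnNhd hU
  have hφcont : ContinuousOn φ U := hφd.continuousOn
  have hderivGne : ∀ n : ℕ, deriv (f^[n]) z ≠ 0 := by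
    intro n
    rcases Nat.eq_zero_or_pos n with rfl | hn
    · simp
    · intro h; exact hzp ⟨n, hn, h⟩
  have hUinf : U.Infinite := infinite_of_mem_nhds z (hU.mem_nhds hz)
  -- λ is not a root of unity
  have hroot : ∀ q : ℕ, 1 ≤ q → lam ^ q ≠ 1 := by
    intro q hq h1
    have hfix : ∀ w ∈ U, f^[q] w = w := by
      intro w hw
      refine hφbij.injOn (mapsU q hw) hw ?_
      rw [conj_n q w hw, h1, one_mul]
    set T : Polynomial ℂ → Polynomial ℂ := fun Q => Q.comp p with hT
    have hPe : ∀ n : ℕ, ∀ x : ℂ, (T^[n] Polynomial.X).eval x = f^[n] x := by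
      intro n
      induction n with
      | zero => intro x; simp
      | succ n ih =>
        intro x
        rw [Function.iterate_succ_apply']
        show Polynomial.eval x ((T^[n] Polynomial.X).comp p) = f^[n+1] x
        rw [Polynomial.eval_comp, ih (p.eval x), Function.iterate_succ_apply, ← hf x]
    have hPd : ∀ n : ℕ, (T^[n] Polynomial.X).natDegree = d ^ n := by
      intro n
      induction n with
      | zero => simp
      | succ n ih =>
        rw [Function.iterate_succ_apply']
        show ((T^[n] Polynomial.X).comp p).natDegree = d ^ (n+1)
        rw [Polynomial.natDegree_comp, ih, hdeg, pow_succ]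
    have heq : T^[q] Polynomial.X = Polynomial.X := by
      apply Polynomial.eq_of_infinite_eval_eq
      apply hUinf.mono
      intro w hw
      simp only [Set.mem_setOf_eq, Polynomial.eval_X, hPe]
      exact hfix w hw
    have hdq := congrArg Polynomial.natDegree heq
    rw [hPd q, Polynomial.natDegree_X] at hdq
    have h2 : 1 < d ^ q := Nat.one_lt_pow (by omega) (by omega)
    omega
  have powinj : ∀ m n : ℕ, lam ^ m = lam ^ n → m = n := by
    have key : ∀ m n : ℕ, m ≤ n → lam ^ m = lam ^ n → m = n := by
      intro m n hmn h
      by_contra hne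
      have h1 : lam ^ m * lam ^ (n - m) = lam ^ m * 1 := by
        rw [mul_one, ← pow_add]
        rw [h]; congr 1; omega
      have h2 : lam ^ (n - m) = 1 := mul_left_cancel₀ (pow_ne_zero m hlam0) h1
      exact hroot (n - m) (by omega) h2
    intro m n h
    rcases le_total m n with hh | hh
    · exact key m n hh h
    · exact (key n m hh h.symm).symm
  -- The continuous inverse of φ
  set σ := Function.invFunOn φ U with hσdef
  have hσr : ∀ t ∈ Metric.ball (0:ℂ) ρ, φ (σ t) = t := fun t ht =>
    hφbij.surjOn.rightInvOn_invFunOn ht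
  have hσmem : ∀ t ∈ Metric.ball (0:ℂ) ρ, σ t ∈ U := by
    intro t ht
    obtain ⟨a, ha, hat⟩ := hφbij.surjOn ht
    exact Function.invFunOn_mem ⟨a, ha, hat⟩
  have hσl : ∀ w ∈ U, σ (φ w) = w := fun w hw => hφbij.injOn.leftInvOn_invFunOn hw
  have hσc : ContinuousOn σ (Metric.ball (0:ℂ) ρ) := invFunOn_continuousOn hU hφan hφbij
  have hφmem : ∀ w ∈ U, φ w ∈ Metric.ball (0:ℂ) ρ := fun w hw => hφbij.mapsTo hw
  by_cases hc0 : φ z = 0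
  · -- Case B : z is the Siegel fixed point
    have hfz : f z = z := by
      refine hφbij.injOn (hfU hz) hz ?_
      rw [hconj z hz, hc0, mul_zero]
    have hfixn : ∀ n : ℕ, f^[n] z = z := Function.iterate_fixed hfz
    set μ := deriv f z with hμdef
    have hμ0 : μ ≠ 0 := by
      have := hderivGne 1; rwa [Function.iterate_one] at this
    have hderivG : ∀ n : ℕ, deriv (f^[n]) z = μ ^ n := by
      intro n
      induction n with
      | zero => simp
      | succ n ih =>
        have hcomp : (f^[n+1] : ℂ → ℂ) = f ∘ f^[n] := Function.iterate_succ' f n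
        rw [hcomp, deriv_comp z (hfd.differentiableAt) ((hGd n).differentiableAt),
          hfixn n, ih, pow_succ, ← hμdef]
        ring
    -- the inverse branch F of f fixing z
    set F : ℂ → ℂ := fun w => σ (lam⁻¹ * φ w) with hFdef
    have hnlinv : ‖lam⁻¹‖ = 1 := by rw [norm_inv, hnl, inv_one]
    have hmemball : ∀ w ∈ U, lam⁻¹ * φ w ∈ Metric.ball (0:ℂ) ρ := by
      intro w hw
      have := hφmem w hw
      simp only [Metric.mem_ball, dist_zero_right] at this ⊢
      rw [norm_mul, hnlinv, one_mul]
      exact this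
    have hFU : ∀ w ∈ U, F w ∈ U := fun w hw => hσmem _ (hmemball w hw)
    have hφF : ∀ w ∈ U, φ (F w) = lam⁻¹ * φ w := fun w hw => hσr _ (hmemball w hw)
    have hfF : ∀ w ∈ U, f (F w) = w := by
      intro w hw
      refine hφbij.injOn (hfU (hFU w hw)) hw ?_
      rw [hconj _ (hFU w hw), hφF w hw, ← mul_assoc, mul_inv_cancel₀ hlam0, one_mul]
    have hFz : F z = z := by
      have h1 : lam⁻¹ * φ z = φ z := by rw [hc0, mul_zero]
      show σ (lam⁻¹ * φ z) = z
      rw [h1, hσl z hz]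
    have hFcont : ContinuousOn F U := by
      apply ContinuousOn.comp hσc (continuousOn_const.mul hφcont) hmemball
    have hdc : Continuous (deriv f) := by
      rw [hfeq]
      have : deriv (fun x => p.eval x) = fun x => (Polynomial.derivative p).eval x :=
        funext fun x => p.deriv
      rw [this]
      exact (Polynomial.derivative p).differentiable.continuous
    -- an open set V around z where the inverse branch is holomorphic
    have hcontV : ContinuousWithinAt (fun w => deriv f (F w)) U z :=
      (hdc.comp_continuousOn hFcont) z hz
    have hnefz : deriv f (F z) ≠ 0 := by rw [hFz]; exact hμ0
    have hev : (fun w => deriv f (F w)) ⁻¹' {x : ℂ | x ≠ 0} ∈ 𝓝[U] z := by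
      apply hcontV
      exact (isOpen_ne (x := (0:ℂ))).mem_nhds hnefz
    obtain ⟨O, hOopen, hzO, hOsub⟩ := mem_nhdsWithin.1 hev
    have hVne : ∀ w ∈ O ∩ U, deriv f (F w) ≠ 0 := fun w hw => hOsub hw
    have hFdiffV : ∀ w ∈ O ∩ U, HasDerivAt F (deriv f (F w))⁻¹ w := by
      intro w hw
      apply HasDerivAt.of_local_left_inverse (hFcont.continuousAt (hU.mem_nhds hw.2))
        ((hfd (F w)).hasDerivAt) (hVne w hw)
      filter_upwards [hU.eventually_mem hw.2] with y hy using hfF y hy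
    -- a small forward- and backward-invariant neighborhood W of z
    have h0ball : (0:ℂ) ∈ Metric.ball (0:ℂ) ρ := by simpa using hρ
    have hσ0 : σ 0 = z := by rw [← hc0, hσl z hz]
    have hpre : σ ⁻¹' (O ∩ U) ∈ 𝓝[Metric.ball (0:ℂ) ρ] 0 := by
      apply Filter.tendsto_def.mp (hσc 0 h0ball)
      rw [hσ0]
      exact (hOopen.inter hU).mem_nhds ⟨hzO, hz⟩
    obtain ⟨ε, hε, hεsub⟩ := Metric.mem_nhdsWithin_iff.1 hpre
    set δ₁ := min (ε/2) (ρ/2) with hδ₁def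
    have hδ₁pos : 0 < δ₁ := lt_min (by linarith) (by linarith)
    have hδ₁ε : δ₁ < ε := lt_of_le_of_lt (min_le_left _ _) (by linarith)
    have hδ₁ρ : δ₁ < ρ := lt_of_le_of_lt (min_le_right _ _) (by linarith)
    set W := U ∩ φ ⁻¹' (Metric.ball (0:ℂ) δ₁) with hWdef
    have hWopen : IsOpen W := hφcont.isOpen_inter_preimage hU Metric.isOpen_ball
    have hzW : z ∈ W := ⟨hz, by simp [hc0, hδ₁pos]⟩
    have hWU : W ⊆ U := Set.inter_subset_left
    have hWnorm : ∀ w ∈ W, ‖φ w‖ < δ₁ := by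
      intro w hw
      have := hw.2
      simpa [dist_zero_right] using this
    have hWsubV : W ⊆ O ∩ U := by
      intro w hw
      have h1 : φ w ∈ Metric.ball (0:ℂ) ε ∩ Metric.ball (0:ℂ) ρ := by
        constructor
        · simp only [Metric.mem_ball, dist_zero_right]
          exact lt_trans (hWnorm w hw) hδ₁ε
        · simp only [Metric.mem_ball, dist_zero_right]
          exact lt_trans (hWnorm w hw) hδ₁ρ
      have h2 : σ (φ w) ∈ O ∩ U := hεsub h1
      rwa [hσl w hw.1] at h2
    have hWF : Set.MapsTo F W W := by
      intro w hw
      refine ⟨hFU w hw.1, ?_⟩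
      simp only [Set.mem_preimage, Metric.mem_ball, dist_zero_right]
      rw [hφF w hw.1, norm_mul, hnlinv, one_mul]
      exact hWnorm w hw
    have hWf : Set.MapsTo f W W := by
      intro w hw
      refine ⟨hfU hw.1, ?_⟩
      simp only [Set.mem_preimage, Metric.mem_ball, dist_zero_right]
      rw [hconj w hw.1, norm_mul, hnl, one_mul]
      exact hWnorm w hw
    -- the compact set K bounding everything
    have hKcomp : IsCompact (σ '' Metric.closedBall (0:ℂ) δ₁) :=
      (isCompact_closedBall _ _).image_of_continuousOn
        (hσc.mono (Metric.closedBall_subset_ball hδ₁ρ))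
    obtain ⟨M, hM⟩ := hKcomp.exists_bound_of_continuousOn continuousOn_id
    have hWK : ∀ w ∈ W, ‖w‖ ≤ M := by
      intro w hw
      have h1 : φ w ∈ Metric.closedBall (0:ℂ) δ₁ := by
        simp only [Metric.mem_closedBall, dist_zero_right]
        exact (hWnorm w hw).le
      have h2 : w ∈ σ '' Metric.closedBall (0:ℂ) δ₁ := ⟨φ w, h1, hσl w hw.1⟩
      simpa using hM w h2
    -- radius δ with closedBall z δ ⊆ W
    obtain ⟨ε', hε', hballW⟩ := Metric.isOpen_iff.1 hWopen z hzW
    set δ := ε'/2 with hδdef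
    have hδpos : 0 < δ := by positivity
    have hcb : Metric.closedBall z δ ⊆ W :=
      (Metric.closedBall_subset_ball (by linarith)).trans hballW
    -- uniform bound on the iterates of f
    have Hb : ∀ n : ℕ, ∀ w ∈ Metric.closedBall z δ, ‖f^[n] w‖ ≤ M := by
      intro n w hw
      exact hWK _ ((hWf.iterate n) (hcb hw))
    -- the iterates of F are holomorphic on W and bounded
    have hFdiffW : ∀ n : ℕ, DifferentiableOn ℂ (F^[n]) W := by
      intro n
      induction n with
      | zero => simpa using differentiableOn_id
      | succ n ih =>
        intro w hw
        rw [Function.iterate_succ']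
        have h1 : F^[n] w ∈ W := (hWF.iterate n) hw
        exact (((hFdiffV _ (hWsubV h1)).differentiableAt).comp w
          ((ih w hw).differentiableAt (hWopen.mem_nhds hw))).differentiableWithinAt
    have hFzn : ∀ n : ℕ, F^[n] z = z := Function.iterate_fixed hFz
    have hderivF : ∀ n : ℕ, deriv (F^[n]) z = (μ⁻¹) ^ n := by
      intro n
      induction n with
      | zero => simp
      | succ n ih =>
        have hcomp : (F^[n+1] : ℂ → ℂ) = F ∘ F^[n] := Function.iterate_succ' F n
        have hdFz : deriv F z = μ⁻¹ := by
          have := (hFdiffV z ⟨hzO, hz⟩).deriv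
          rw [hFz] at this
          rw [this]
        rw [hcomp, deriv_comp z ((hFdiffV _ (hWsubV ((hWF.iterate n) hzW))).differentiableAt)
          (((hFdiffW n).differentiableAt (hWopen.mem_nhds hzW))),
          hFzn n, hdFz, ih, pow_succ]
        ring
    -- |μ| ≥ 1 via the Cauchy estimate for F^[n]
    have hFbound : ∀ n : ℕ, ‖μ⁻¹‖ ^ n ≤ (Nat.factorial 1) * M / δ ^ 1 := by
      intro n
      have h1 := cauchy_est hδpos ((hFdiffW n).mono hcb)
        (fun w hw => hWK _ ((hWF.iterate n) (hcb hw))) 1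
      rwa [iteratedDeriv_one, hderivF n, norm_pow] at h1
    have hμge : 1 ≤ ‖μ‖ := by
      by_contra hlt
      push_neg at hlt
      have hμpos : 0 < ‖μ‖ := norm_pos_iff.2 hμ0
      have hgt : 1 < ‖μ⁻¹‖ := by
        rw [norm_inv]
        exact (one_lt_inv₀ hμpos).2 hlt
      obtain ⟨n, hn⟩ := pow_unbounded_of_one_lt ((Nat.factorial 1) * M / δ ^ 1) hgt
      exact absurd (hFbound n) (not_le.2 hn)
    have Hc : ∀ n : ℕ, (1:ℝ) ≤ ‖deriv (f^[n]) z‖ := by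
      intro n
      rw [hderivG n, norm_pow]
      exact one_le_pow₀ hμge
    exact finish_aux hfd hd hδpos one_pos Hb Hc
  · -- Case A : φ z ≠ 0, the orbit is an infinite subset of an invariant circle
    have hr0pos : 0 < ‖φ z‖ := norm_pos_iff.2 hc0
    have hr0ρ : ‖φ z‖ < ρ := by
      have := hφmem z hz
      simpa [dist_zero_right] using this
    -- the orbit lies in the compact set K
    have hsubball : Metric.sphere (0:ℂ) ‖φ z‖ ⊆ Metric.ball (0:ℂ) ρ := by
      intro x hx
      simp only [Metric.mem_sphere, dist_zero_right] at hx
      simp only [Metric.mem_ball, dist_zero_right, hx]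
      exact hr0ρ
    have hKcomp : IsCompact (σ '' Metric.sphere (0:ℂ) ‖φ z‖) :=
      (isCompact_sphere _ _).image_of_continuousOn (hσc.mono hsubball)
    have hKU : σ '' Metric.sphere (0:ℂ) ‖φ z‖ ⊆ U := by
      rintro x ⟨t, ht, rfl⟩
      exact hσmem t (hsubball ht)
    have hφznsphere : ∀ n : ℕ, φ (f^[n] z) ∈ Metric.sphere (0:ℂ) ‖φ z‖ := by
      intro n
      simp only [Metric.mem_sphere, dist_zero_right]
      rw [conj_n n z hz, norm_mul, norm_pow, hnl, one_pow, one_mul]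
    have hznK : ∀ n : ℕ, f^[n] z ∈ σ '' Metric.sphere (0:ℂ) ‖φ z‖ := by
      intro n
      exact ⟨φ (f^[n] z), hφznsphere n, hσl _ (mapsU n hz)⟩
    -- the chain rule identity
    have hchain : ∀ n : ℕ, deriv φ (f^[n] z) * deriv (f^[n]) z = lam ^ n * deriv φ z := by
      intro n
      have hev : (fun w => φ (f^[n] w)) =ᶠ[𝓝 z] (fun w => lam ^ n * φ w) := by
        filter_upwards [hU.mem_nhds hz] with w hw using conj_n n w hw
      have e1 : deriv (fun w => φ (f^[n] w)) z = deriv φ (f^[n] z) * deriv (f^[n]) z := by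
        have := deriv_comp z (hφd.differentiableAt (hU.mem_nhds (mapsU n hz)))
          ((hGd n).differentiableAt)
        exact this
      have e2 : deriv (fun w => lam ^ n * φ w) z = lam ^ n * deriv φ z :=
        deriv_const_mul _ (hφd.differentiableAt (hU.mem_nhds hz))
      rw [← e1, ← e2]
      exact hev.deriv_eq
    -- deriv φ z ≠ 0
    have hφ'z : deriv φ z ≠ 0 := by
      by_contra h0
      have hzero : ∀ n : ℕ, deriv φ (f^[n] z) = 0 := by
        intro n
        have h1 := hchain n
        rw [h0, mul_zero] at h1
        exact (mul_eq_zero.1 h1).resolve_right (hderivGne n)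
      have hinj : Function.Injective fun n : ℕ => f^[n] z := by
        intro m n h
        apply powinj
        have hm := conj_n m z hz
        have hn := conj_n n z hz
        have heq : lam ^ m * φ z = lam ^ n * φ z := by
          rw [← hm, ← hn]
          simp only at h
          rw [h]
        exact mul_right_cancel₀ hc0 heq
      obtain ⟨y, hyK, s, hs, htend⟩ := hKcomp.tendsto_subseq hznK
      have hyU : y ∈ U := hKU hyK
      have hne : ∀ᶠ k in atTop, f^[s k] z ≠ y := by
        by_cases hex : ∃ k₀ : ℕ, f^[s k₀] z = y
        · obtain ⟨k₀, hk₀⟩ := hex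
          filter_upwards [eventually_gt_atTop k₀] with k hk
          intro hky
          have h1 : s k = s k₀ := hinj (hky.trans hk₀.symm)
          exact absurd (hs.injective h1) (by omega)
        · push_neg at hex
          exact Filter.Eventually.of_forall hex
      have htend' : Tendsto (fun k => f^[s k] z) atTop (𝓝[≠] y) := by
        rw [tendsto_nhdsWithin_iff]
        exact ⟨htend, hne⟩
      have hfreq : ∃ᶠ w in 𝓝[≠] y, deriv φ w = 0 :=
        htend'.frequently (Filter.Frequently.of_forall fun k => hzero (s k))
      have hevzero : ∀ᶠ w in 𝓝 y, deriv φ w = 0 :=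
        ((hφan.deriv y hyU).frequently_zero_iff_eventually_zero).1 hfreq
      obtain ⟨ε, hε, hprop⟩ := Metric.eventually_nhds_iff.1 (hevzero.and (hU.eventually_mem hyU))
      -- φ is constant on ball y ε, contradicting injectivity
      have hballU : Metric.ball y ε ⊆ U := fun x hx =>
        (hprop (by rwa [Metric.mem_ball] at hx)).2
      have hconst : φ y = φ (y + (ε/2 : ℝ)) := by
        apply (convex_ball y ε).is_const_of_fderivWithin_eq_zero
          (hφd.mono hballU)
        · intro x hx
          rw [fderivWithin_of_isOpen Metric.isOpen_ball hx]
          have hdx : DifferentiableAt ℂ φ x :=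
            hφd.differentiableAt (hU.mem_nhds (hballU hx))
          have h0x : deriv φ x = 0 := (hprop (by rwa [Metric.mem_ball] at hx)).1
          have hda := hdx.hasDerivAt
          rw [h0x] at hda
          have h2 := hda.hasFDerivAt.fderiv
          rw [h2]
          ext
          simp
        · exact Metric.mem_ball_self hε
        · simp only [Metric.mem_ball, dist_eq_norm, add_sub_cancel_left]
          rw [Complex.norm_real, Real.norm_eq_abs, abs_of_pos (by linarith)]
          linarith
      have hyne : y ≠ y + (ε/2 : ℝ) := by
        intro h
        have : ((ε/2 : ℝ) : ℂ) = 0 := by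
          have := congrArg (fun x => x - y) h
          simpa using this.symm
        have : (ε/2 : ℝ) = 0 := by exact_mod_cast this
        linarith
      have hmemball2 : y + (ε/2 : ℝ) ∈ Metric.ball y ε := by
        simp only [Metric.mem_ball, dist_eq_norm, add_sub_cancel_left]
        rw [Complex.norm_real, Real.norm_eq_abs, abs_of_pos (by linarith)]
        linarith
      exact hyne (hφbij.injOn hyU (hballU hmemball2) hconst)
    -- lower bound on the derivatives of the iterates
    have hφ'cont : ContinuousOn (deriv φ) U := (hφan.deriv).continuousOn
    obtain ⟨Mφ, hMφ⟩ := hKcomp.exists_bound_of_continuousOn (hφ'cont.mono hKU)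
    have hzK : z ∈ σ '' Metric.sphere (0:ℂ) ‖φ z‖ := by
      have := hznK 0
      simpa using this
    have hMφpos : 0 < Mφ := lt_of_lt_of_le (norm_pos_iff.2 hφ'z) (hMφ z hzK)
    have Hc : ∀ n : ℕ, ‖deriv φ z‖ / Mφ ≤ ‖deriv (f^[n]) z‖ := by
      intro n
      have h1 := congrArg norm (hchain n)
      rw [norm_mul, norm_mul, norm_pow, hnl, one_pow, one_mul] at h1
      have h2 : ‖deriv φ (f^[n] z)‖ ≤ Mφ := hMφ _ (hznK n)
      have h3 : (0:ℝ) ≤ ‖deriv (f^[n]) z‖ := norm_nonneg _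
      rw [div_le_iff₀ hMφpos]
      nlinarith [norm_nonneg (deriv φ (f^[n] z))]
    -- upper bound on the iterates on a disc around z
    set r := (‖φ z‖ + ρ)/2 with hrdef
    have hr1 : ‖φ z‖ < r := by rw [hrdef]; linarith
    have hr2 : r < ρ := by rw [hrdef]; linarith
    have hK2comp : IsCompact (σ '' Metric.closedBall (0:ℂ) r) :=
      (isCompact_closedBall _ _).image_of_continuousOn
        (hσc.mono (Metric.closedBall_subset_ball hr2))
    obtain ⟨M, hM⟩ := hK2comp.exists_bound_of_continuousOn continuousOn_id
    set N := U ∩ φ ⁻¹' (Metric.ball (0:ℂ) r) with hNdef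
    have hNopen : IsOpen N := hφcont.isOpen_inter_preimage hU Metric.isOpen_ball
    have hzN : z ∈ N := by
      refine ⟨hz, ?_⟩
      simp only [Set.mem_preimage, Metric.mem_ball, dist_zero_right]
      exact hr1
    obtain ⟨ε', hε', hballN⟩ := Metric.isOpen_iff.1 hNopen z hzN
    set δ := ε'/2 with hδdef
    have hδpos : 0 < δ := by positivity
    have hcb : Metric.closedBall z δ ⊆ N :=
      (Metric.closedBall_subset_ball (by linarith)).trans hballN
    have Hb : ∀ n : ℕ, ∀ w ∈ Metric.closedBall z δ, ‖f^[n] w‖ ≤ M := by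
      intro n w hw
      have hwN : w ∈ N := hcb hw
      have h1 : φ (f^[n] w) ∈ Metric.closedBall (0:ℂ) r := by
        simp only [Metric.mem_closedBall, dist_zero_right]
        rw [conj_n n w hwN.1, norm_mul, norm_pow, hnl, one_pow, one_mul]
        have := hwN.2
        simp only [Set.mem_preimage, Metric.mem_ball, dist_zero_right] at this
        exact this.le
      have h2 : f^[n] w ∈ σ '' Metric.closedBall (0:ℂ) r :=
        ⟨φ (f^[n] w), h1, hσl _ (mapsU n hwN.1)⟩
      simpa using hM _ h2
    exact finish_aux hfd hd hδpos (div_pos (norm_pos_iff.2 hφ'z) hMφpos) Hb Hc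
end
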